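/- arXiv:2303.18208 — 6 statements merged into one kernel-verified Lean document; each statement's English description precedes it below -/
import Mathlib

section
/- Let A be an algebraic curvature tensor on ℝⁿ with δ ≤ R̄ ≤ Δ. If β = (β_{ij}) is a nonzero skew-symmetric array and μ ∈ ℝ satisfies ∑_{k,l} A_{ijkl} β_{kl} = μ β_{ij} for all i, j (i.e. β is an eigenvector of the curvature operator R̂ on 2-forms with eigenvalue μ), then |μ + (Δ+δ)| ≤ ((4⌊n/2⌋ − 1)/3)(Δ − δ); that is, μ lies in the interval [−(Δ+δ) − (4⌊n/2⌋−1)(Δ−δ)/3, −(Δ+δ) + (4⌊n/2⌋−1)(Δ−δ)/3]. -/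
open scoped BigOperators InnerProductSpace

namespace BergerAux

variable {n : ℕ}


def T (A : Fin n → Fin n → Fin n → Fin n → ℝ) (X Y Z W : EuclideanSpace ℝ (Fin n)) : ℝ :=
  ∑ i, ∑ j, ∑ p, ∑ q, A i j p q * X i * Y j * Z p * W q

lemma sum_comm3 (g : Fin n → Fin n → Fin n → ℝ) :
    (∑ i, ∑ j, ∑ p, g i j p) = ∑ p, ∑ i, ∑ j, g i j p :=
  (Finset.sum_congr rfl fun _ _ => Finset.sum_comm).trans Finset.sum_comm

lemma sum_comm4 (f : Fin n → Fin n → Fin n → Fin n → ℝ) :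
    (∑ i, ∑ j, ∑ p, ∑ q, f i j p q) = ∑ p, ∑ q, ∑ i, ∑ j, f i j p q :=
  (sum_comm3 (fun i j p => ∑ q, f i j p q)).trans
    (Finset.sum_congr rfl fun p _ => sum_comm3 (fun i j q => f i j p q))

variable {A : Fin n → Fin n → Fin n → Fin n → ℝ}

lemma T_swap12 (h : ∀ i j p q, A i j p q = - A j i p q) (X Y Z W : EuclideanSpace ℝ (Fin n)) :
    T A X Y Z W = - T A Y X Z W := by
  unfold T
  simp only [← Finset.sum_neg_distrib]
  rw [Finset.sum_comm]
  exact Finset.sum_congr rfl fun i _ => Finset.sum_congr rfl fun j _ =>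
    Finset.sum_congr rfl fun p _ => Finset.sum_congr rfl fun q _ => by rw [h i j p q]; ring

lemma T_swap34 (h : ∀ i j p q, A i j p q = - A i j q p) (X Y Z W : EuclideanSpace ℝ (Fin n)) :
    T A X Y Z W = - T A X Y W Z := by
  unfold T
  simp only [← Finset.sum_neg_distrib]
  refine Finset.sum_congr rfl fun i _ => Finset.sum_congr rfl fun j _ => ?_
  rw [Finset.sum_comm]
  exact Finset.sum_congr rfl fun p _ => Finset.sum_congr rfl fun q _ => by
    rw [h i j p q]; ring

lemma T_pairswap (h : ∀ i j p q, A i j p q = A p q i j) (X Y Z W : EuclideanSpace ℝ (Fin n)) :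
    T A X Y Z W = T A Z W X Y := by
  unfold T
  rw [sum_comm4]
  exact Finset.sum_congr rfl fun p _ => Finset.sum_congr rfl fun q _ =>
    Finset.sum_congr rfl fun i _ => Finset.sum_congr rfl fun j _ => by rw [h i j p q]; ring

lemma T_bianchi (h : ∀ i j p q, A i j p q + A p i j q + A j p i q = 0) (X Y Z W : EuclideanSpace ℝ (Fin n)) :
    T A X Y Z W + T A Z X Y W + T A Y Z X W = 0 := by
  have e1 : T A Z X Y W = ∑ i, ∑ j, ∑ p, ∑ q, A p i j q * X i * Y j * Z p * W q := by
    unfold T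
    -- LHS: ∑a,∑b,∑c,∑d, A a b c d * Z a * X b * Y c * W d
    -- rename: a -> p, b -> i, c -> j, d -> q ; bring iteration order to i j p q
    rw [show (∑ a, ∑ b, ∑ c, ∑ d, A a b c d * Z a * X b * Y c * W d)
        = ∑ a, ∑ b, ∑ c, ∑ d, (fun i j p q => A p i j q * X i * Y j * Z p * W q) b c a d
        from Finset.sum_congr rfl fun a _ => Finset.sum_congr rfl fun b _ =>
          Finset.sum_congr rfl fun c _ => Finset.sum_congr rfl fun d _ => by ring]
    rw [← sum_comm3 (fun b c a => ∑ d, (fun i j p q => A p i j q * X i * Y j * Z p * W q) b c a d)]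
  have e2 : T A Y Z X W = ∑ i, ∑ j, ∑ p, ∑ q, A j p i q * X i * Y j * Z p * W q := by
    unfold T
    -- LHS: ∑a,∑b,∑c,∑d, A a b c d * Y a * Z b * X c * W d ; rename a->j, b->p, c->i
    rw [show (∑ a, ∑ b, ∑ c, ∑ d, A a b c d * Y a * Z b * X c * W d)
        = ∑ a, ∑ b, ∑ c, ∑ d, (fun i j p q => A j p i q * X i * Y j * Z p * W q) c a b d
        from Finset.sum_congr rfl fun a _ => Finset.sum_congr rfl fun b _ =>
          Finset.sum_congr rfl fun c _ => Finset.sum_congr rfl fun d _ => by ring]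
    exact sum_comm3 (fun a b c => ∑ d,
      (fun i j p q => A j p i q * X i * Y j * Z p * W q) c a b d)
  rw [e1, e2]
  unfold T
  simp only [← Finset.sum_add_distrib]
  refine Finset.sum_eq_zero fun i _ => Finset.sum_eq_zero fun j _ =>
    Finset.sum_eq_zero fun p _ => Finset.sum_eq_zero fun q _ => ?_
  linear_combination (X i * Y j * Z p * W q) * h i j p q


lemma T_add1 (X X' Y Z W : EuclideanSpace ℝ (Fin n)) :
    T A (X + X') Y Z W = T A X Y Z W + T A X' Y Z W := by
  unfold T
  simp only [← Finset.sum_add_distrib]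
  exact Finset.sum_congr rfl fun i _ => Finset.sum_congr rfl fun j _ =>
    Finset.sum_congr rfl fun p _ => Finset.sum_congr rfl fun q _ => by
      simp only [PiLp.add_apply]; ring

lemma T_sub1 (X X' Y Z W : EuclideanSpace ℝ (Fin n)) :
    T A (X - X') Y Z W = T A X Y Z W - T A X' Y Z W := by
  unfold T
  simp only [← Finset.sum_sub_distrib]
  exact Finset.sum_congr rfl fun i _ => Finset.sum_congr rfl fun j _ =>
    Finset.sum_congr rfl fun p _ => Finset.sum_congr rfl fun q _ => by
      simp only [PiLp.sub_apply]; ring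

lemma T_add2 (X Y Y' Z W : EuclideanSpace ℝ (Fin n)) :
    T A X (Y + Y') Z W = T A X Y Z W + T A X Y' Z W := by
  unfold T
  simp only [← Finset.sum_add_distrib]
  exact Finset.sum_congr rfl fun i _ => Finset.sum_congr rfl fun j _ =>
    Finset.sum_congr rfl fun p _ => Finset.sum_congr rfl fun q _ => by
      simp only [PiLp.add_apply]; ring

lemma T_sub2 (X Y Y' Z W : EuclideanSpace ℝ (Fin n)) :
    T A X (Y - Y') Z W = T A X Y Z W - T A X Y' Z W := by
  unfold T
  simp only [← Finset.sum_sub_distrib]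
  exact Finset.sum_congr rfl fun i _ => Finset.sum_congr rfl fun j _ =>
    Finset.sum_congr rfl fun p _ => Finset.sum_congr rfl fun q _ => by
      simp only [PiLp.sub_apply]; ring

lemma T_add3 (X Y Z Z' W : EuclideanSpace ℝ (Fin n)) :
    T A X Y (Z + Z') W = T A X Y Z W + T A X Y Z' W := by
  unfold T
  simp only [← Finset.sum_add_distrib]
  exact Finset.sum_congr rfl fun i _ => Finset.sum_congr rfl fun j _ =>
    Finset.sum_congr rfl fun p _ => Finset.sum_congr rfl fun q _ => by
      simp only [PiLp.add_apply]; ring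

lemma T_sub3 (X Y Z Z' W : EuclideanSpace ℝ (Fin n)) :
    T A X Y (Z - Z') W = T A X Y Z W - T A X Y Z' W := by
  unfold T
  simp only [← Finset.sum_sub_distrib]
  exact Finset.sum_congr rfl fun i _ => Finset.sum_congr rfl fun j _ =>
    Finset.sum_congr rfl fun p _ => Finset.sum_congr rfl fun q _ => by
      simp only [PiLp.sub_apply]; ring

lemma T_add4 (X Y Z W W' : EuclideanSpace ℝ (Fin n)) :
    T A X Y Z (W + W') = T A X Y Z W + T A X Y Z W' := by
  unfold T
  simp only [← Finset.sum_add_distrib]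
  exact Finset.sum_congr rfl fun i _ => Finset.sum_congr rfl fun j _ =>
    Finset.sum_congr rfl fun p _ => Finset.sum_congr rfl fun q _ => by
      simp only [PiLp.add_apply]; ring

lemma T_sub4 (X Y Z W W' : EuclideanSpace ℝ (Fin n)) :
    T A X Y Z (W - W') = T A X Y Z W - T A X Y Z W' := by
  unfold T
  simp only [← Finset.sum_sub_distrib]
  exact Finset.sum_congr rfl fun i _ => Finset.sum_congr rfl fun j _ =>
    Finset.sum_congr rfl fun p _ => Finset.sum_congr rfl fun q _ => by
      simp only [PiLp.sub_apply]; ring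

lemma T_smul1 (c : ℝ) (X Y Z W : EuclideanSpace ℝ (Fin n)) : T A (c • X) Y Z W = c * T A X Y Z W := by
  unfold T
  simp only [Finset.mul_sum]
  exact Finset.sum_congr rfl fun i _ => Finset.sum_congr rfl fun j _ =>
    Finset.sum_congr rfl fun p _ => Finset.sum_congr rfl fun q _ => by
      simp only [PiLp.smul_apply, smul_eq_mul]; ring

lemma T_smul4 (c : ℝ) (X Y Z W : EuclideanSpace ℝ (Fin n)) : T A X Y Z (c • W) = c * T A X Y Z W := by
  unfold T
  simp only [Finset.mul_sum]
  exact Finset.sum_congr rfl fun i _ => Finset.sum_congr rfl fun j _ =>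
    Finset.sum_congr rfl fun p _ => Finset.sum_congr rfl fun q _ => by
      simp only [PiLp.smul_apply, smul_eq_mul]; ring

lemma T_zero1 (Y Z W : EuclideanSpace ℝ (Fin n)) : T A 0 Y Z W = 0 := by
  unfold T
  refine Finset.sum_eq_zero fun i _ => Finset.sum_eq_zero fun j _ =>
    Finset.sum_eq_zero fun p _ => Finset.sum_eq_zero fun q _ => ?_
  simp

section Berger
variable {ε : ℝ}
variable (h1 : ∀ i j p q, A i j p q = - A j i p q)
variable (h2 : ∀ i j p q, A i j p q = - A i j q p)
variable (h3 : ∀ i j p q, A i j p q = A p q i j)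
variable (hK : ∀ X Y : EuclideanSpace ℝ (Fin n), ‖X‖ ^ 2 * ‖Y‖ ^ 2 - ⟪X, Y⟫_ℝ ^ 2 = 1 → |T A X Y Y X| ≤ ε)

include h1

lemma T_diag1 (X Z W : EuclideanSpace ℝ (Fin n)) : T A X X Z W = 0 := by
  have := T_swap12 h1 X X Z W
  linarith

include hK

/-- unnormalized sectional curvature bound -/
lemma L0 (X Y : EuclideanSpace ℝ (Fin n)) : |T A X Y Y X| ≤ ε * (‖X‖ ^ 2 * ‖Y‖ ^ 2 - ⟪X, Y⟫_ℝ ^ 2) := by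
  set a : ℝ := ‖X‖ ^ 2 * ‖Y‖ ^ 2 - ⟪X, Y⟫_ℝ ^ 2 with ha
  have ha0 : 0 ≤ a := by
    have := real_inner_mul_inner_self_le X Y
    have hx : ⟪X, X⟫_ℝ = ‖X‖ ^ 2 := real_inner_self_eq_norm_sq X
    have hy : ⟪Y, Y⟫_ℝ = ‖Y‖ ^ 2 := real_inner_self_eq_norm_sq Y
    simp only [ha]; nlinarith
  rcases eq_or_lt_of_le ha0 with hz | hpos
  · -- degenerate case : X, Y linearly dependent, T = 0
    have habs : ‖⟪X, Y⟫_ℝ‖ = ‖X‖ * ‖Y‖ := by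
      have h' : ⟪X, Y⟫_ℝ ^ 2 = (‖X‖ * ‖Y‖) ^ 2 := by rw [mul_pow]; linarith [hz.symm]
      have h2' := congrArg Real.sqrt h'
      rw [Real.sqrt_sq_eq_abs, Real.sqrt_sq (by positivity)] at h2'
      rw [Real.norm_eq_abs]; exact h2' 
    have hdep := ((norm_inner_eq_norm_tfae (𝕜 := ℝ) X Y).out 0 2).mp habs
    have hT0 : T A X Y Y X = 0 := by
      rcases hdep with hX0 | ⟨r, hr⟩
      · rw [hX0]; exact T_zero1 _ _ _
      · rw [hr]
        have h4 : T A X (r • X) (r • X) X =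
            - T A (r • X) X (r • X) X := T_swap12 h1 _ _ _ _
        rw [h4, T_smul1, T_diag1 h1]
        ring
    rw [hT0, ← hz]
    simp
  · set s : ℝ := Real.sqrt a with hs
    have hs0 : 0 < s := Real.sqrt_pos.mpr hpos
    have hs2 : s ^ 2 = a := Real.sq_sqrt ha0
    have harea : ‖(s⁻¹ • X : EuclideanSpace ℝ (Fin n))‖ ^ 2 * ‖Y‖ ^ 2 - ⟪(s⁻¹ • X : EuclideanSpace ℝ (Fin n)), Y⟫_ℝ ^ 2 = 1 := by
      have key : s⁻¹ ^ 2 * (‖X‖ ^ 2 * ‖Y‖ ^ 2 - ⟪X, Y⟫_ℝ ^ 2) = 1 := by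
        rw [← ha, ← hs2]
        field_simp
      rw [norm_smul, real_inner_smul_left]
      simp only [norm_inv, Real.norm_eq_abs, abs_of_pos hs0]
      linear_combination key
    have hineq := hK (s⁻¹ • X) Y harea
    have hTs : T A (s⁻¹ • X) Y Y (s⁻¹ • X) = s⁻¹ * (s⁻¹ * T A X Y Y X) := by
      rw [T_smul1, T_smul4]
    rw [hTs] at hineq
    rw [abs_mul, abs_mul, abs_inv, abs_of_pos hs0] at hineq
    calc |T A X Y Y X| = s * (s * (s⁻¹ * (s⁻¹ * |T A X Y Y X|))) := by
          field_simp
      _ ≤ s * (s * ε) := by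
          have h' : s⁻¹ * (s⁻¹ * |T A X Y Y X|) ≤ ε := hineq
          have hss : (0:ℝ) ≤ s := hs0.le
          nlinarith
      _ = ε * a := by rw [← hs2]; ring


include h2 h3

lemma L1 (X Y Z : EuclideanSpace ℝ (Fin n)) (hYZ : ⟪Y, Z⟫_ℝ = 0)
    (hXY : ⟪X, Y⟫_ℝ = 0) (hXZ : ⟪X, Z⟫_ℝ = 0) (hY : ‖Y‖ = 1) (hZ : ‖Z‖ = 1) :
    |T A X Y Z X| ≤ ε * ‖X‖ ^ 2 := by
  have hsym : T A X Z Y X = T A X Y Z X := by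
    rw [T_pairswap h3 X Z Y X, T_swap12 h1, T_swap34 h2]
    ring
  have hexp : T A X (Y + Z) (Y + Z) X - T A X (Y - Z) (Y - Z) X = 4 * T A X Y Z X := by
    rw [T_add2, T_add3, T_add3, T_sub2, T_sub3, T_sub3, hsym]
    ring
  have e1 : ‖Y + Z‖ ^ 2 = 2 := by rw [norm_add_sq_real, hYZ, hY, hZ]; norm_num
  have e2 : ‖Y - Z‖ ^ 2 = 2 := by rw [norm_sub_sq_real, hYZ, hY, hZ]; norm_num
  have f1 : ⟪X, Y + Z⟫_ℝ = 0 := by rw [inner_add_right, hXY, hXZ]; norm_num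
  have f2 : ⟪X, Y - Z⟫_ℝ = 0 := by rw [inner_sub_right, hXY, hXZ]; norm_num
  have b1 := L0 h1 hK X (Y + Z)
  have b2 := L0 h1 hK X (Y - Z)
  rw [e1, f1] at b1
  rw [e2, f2] at b2
  have h4 : |4 * T A X Y Z X| ≤ ε * (‖X‖ ^ 2 * 2 - 0 ^ 2) + ε * (‖X‖ ^ 2 * 2 - 0 ^ 2) := by
    rw [← hexp]
    exact (abs_sub _ _).trans (add_le_add b1 b2)
  rw [abs_mul, abs_of_pos (show (0:ℝ) < 4 by norm_num)] at h4
  linarith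

lemma L2 (X Y Z W : EuclideanSpace ℝ (Fin n))
    (hX : ‖X‖ = 1) (hY : ‖Y‖ = 1) (hZ : ‖Z‖ = 1) (hW : ‖W‖ = 1)
    (hXY : ⟪X, Y⟫_ℝ = 0) (hXZ : ⟪X, Z⟫_ℝ = 0) (hXW : ⟪X, W⟫_ℝ = 0)
    (hYZ : ⟪Y, Z⟫_ℝ = 0) (hYW : ⟪Y, W⟫_ℝ = 0) (hZW : ⟪Z, W⟫_ℝ = 0) :
    |T A X Y Z W + T A W Y Z X| ≤ 2 * ε := by
  have hexp : T A (X + W) Y Z (X + W) - T A (X - W) Y Z (X - W)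
      = 2 * (T A X Y Z W + T A W Y Z X) := by
    rw [T_add1, T_add4, T_add4, T_sub1, T_sub4, T_sub4]
    ring
  have np : ‖X + W‖ ^ 2 = 2 := by rw [norm_add_sq_real, hXW, hX, hW]; norm_num
  have nm : ‖X - W‖ ^ 2 = 2 := by rw [norm_sub_sq_real, hXW, hX, hW]; norm_num
  have hWY : ⟪W, Y⟫_ℝ = 0 := by rw [real_inner_comm]; exact hYW
  have hWZ : ⟪W, Z⟫_ℝ = 0 := by rw [real_inner_comm]; exact hZW
  have b1 := L1 h1 h2 h3 hK (X + W) Y Z hYZ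
    (by rw [inner_add_left, hXY, hWY]; norm_num)
    (by rw [inner_add_left, hXZ, hWZ]; norm_num) hY hZ
  have b2 := L1 h1 h2 h3 hK (X - W) Y Z hYZ
    (by rw [inner_sub_left, hXY, hWY]; norm_num)
    (by rw [inner_sub_left, hXZ, hWZ]; norm_num) hY hZ
  rw [np] at b1
  rw [nm] at b2
  have h4 : |2 * (T A X Y Z W + T A W Y Z X)| ≤ ε * 2 + ε * 2 := by
    rw [← hexp]
    exact (abs_sub _ _).trans (add_le_add b1 b2)
  rw [abs_mul, abs_of_pos (show (0:ℝ) < 2 by norm_num)] at h4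
  linarith

/-- Berger's lemma -/
lemma L3 (hB : ∀ i j p q, A i j p q + A p i j q + A j p i q = 0)
    (X Y Z W : EuclideanSpace ℝ (Fin n))
    (hX : ‖X‖ = 1) (hY : ‖Y‖ = 1) (hZ : ‖Z‖ = 1) (hW : ‖W‖ = 1)
    (hXY : ⟪X, Y⟫_ℝ = 0) (hXZ : ⟪X, Z⟫_ℝ = 0) (hXW : ⟪X, W⟫_ℝ = 0)
    (hYZ : ⟪Y, Z⟫_ℝ = 0) (hYW : ⟪Y, W⟫_ℝ = 0) (hZW : ⟪Z, W⟫_ℝ = 0) :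
    |T A X Y Z W| ≤ 4 / 3 * ε := by
  set a := T A X Y Z W with hadef
  set b := T A X Z W Y with hbdef
  set c := T A X W Y Z with hcdef
  -- Bianchi : a + b + c = 0
  have hbi := T_bianchi hB X Y Z W
  have e1 : T A Z X Y W = b := by
    rw [T_pairswap h3 Z X Y W, T_swap12 h1 Y W Z X, T_swap34 h2 W Y Z X,
      T_pairswap h3 W Y X Z]
    ring
  have e2 : T A Y Z X W = c := T_pairswap h3 Y Z X W
  rw [e1, e2] at hbi
  -- |a - b| ≤ 2ε
  have w1 : T A W Y Z X = -b := by
    rw [T_pairswap h3 W Y Z X, T_swap12 h1 Z X W Y]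
  have hab : |a - b| ≤ 2 * ε := by
    have := L2 h1 h2 h3 hK X Y Z W hX hY hZ hW hXY hXZ hXW hYZ hYW hZW
    rw [w1] at this
    simpa [sub_eq_add_neg] using this
  -- |b - c| ≤ 2ε
  have w2 : T A Y Z W X = -c := by
    rw [T_pairswap h3 Y Z W X, T_swap12 h1 W X Y Z]
  have hbc : |b - c| ≤ 2 * ε := by
    have hZY : ⟪Z, Y⟫_ℝ = 0 := by rw [real_inner_comm]; exact hYZ
    have hWY : ⟪W, Y⟫_ℝ = 0 := by rw [real_inner_comm]; exact hYW
    have := L2 h1 h2 h3 hK X Z W Y hX hZ hW hY hXZ hXW hXY hZW hZY hWY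
    rw [w2] at this
    simpa [sub_eq_add_neg] using this
  -- |c - a| ≤ 2ε
  have w3 : T A Z W Y X = -a := by
    rw [T_pairswap h3 Z W Y X, T_swap12 h1 Y X Z W]
  have hca : |c - a| ≤ 2 * ε := by
    have hWY : ⟪W, Y⟫_ℝ = 0 := by rw [real_inner_comm]; exact hYW
    have hWZ : ⟪W, Z⟫_ℝ = 0 := by rw [real_inner_comm]; exact hZW
    have := L2 h1 h2 h3 hK X W Y Z hX hW hY hZ hXW hXY hXZ hWY hWZ hYZ
    rw [w3] at this
    simpa [sub_eq_add_neg] using this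
  rw [abs_le] at hab hbc hca ⊢
  constructor <;> linarith [hab.1, hab.2, hbc.1, hbc.2, hca.1, hca.2]

end Berger


lemma orthonormal_cons_pair {n m : ℕ} {vE wE : EuclideanSpace ℝ (Fin n)}
    {u v : Fin m → EuclideanSpace ℝ (Fin n)}
    (hON : Orthonormal ℝ (Sum.elim u v))
    (hv1 : ⟪vE, vE⟫_ℝ = 1) (hw1 : ⟪wE, wE⟫_ℝ = 1) (hvw : ⟪vE, wE⟫_ℝ = 0)
    (hvu : ∀ k, ⟪vE, u k⟫_ℝ = 0) (hvv : ∀ k, ⟪vE, v k⟫_ℝ = 0)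
    (hwu : ∀ k, ⟪wE, u k⟫_ℝ = 0) (hwv : ∀ k, ⟪wE, v k⟫_ℝ = 0) :
    Orthonormal ℝ (Sum.elim (Fin.cons vE u) (Fin.cons wE v)) := by
  have hwv' : ⟪wE, vE⟫_ℝ = 0 := by rw [real_inner_comm]; exact hvw
  have huv' : ∀ k, ⟪u k, vE⟫_ℝ = 0 := fun k => by rw [real_inner_comm]; exact hvu k
  have hvv' : ∀ k, ⟪v k, vE⟫_ℝ = 0 := fun k => by rw [real_inner_comm]; exact hvv k
  have huw' : ∀ k, ⟪u k, wE⟫_ℝ = 0 := fun k => by rw [real_inner_comm]; exact hwu k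
  have hvw' : ∀ k, ⟪v k, wE⟫_ℝ = 0 := fun k => by rw [real_inner_comm]; exact hwv k
  rw [orthonormal_iff_ite] at hON ⊢
  intro i j
  rcases i with i | i <;> rcases j with j | j <;>
    induction i using Fin.cases <;> induction j using Fin.cases
  · simp [hv1]; left; nlinarith [norm_nonneg vE, real_inner_self_eq_norm_sq vE]
  · rename_i j'; simpa [Fin.succ_ne_zero j', (Fin.succ_ne_zero j').symm] using hvu j'
  · rename_i i'; simpa [Fin.succ_ne_zero i', (Fin.succ_ne_zero i').symm] using huv' i'
  ·
    rename_i i' j'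
    have := hON (Sum.inl i') (Sum.inl j')
    simp only [Sum.elim_inl] at this
    simpa [Fin.succ_inj] using this
  · simp [hvw]
  · rename_i j'; simpa using hvv j'
  · rename_i i'; simpa using huw' i'
  ·
    rename_i i' j'
    have := hON (Sum.inl i') (Sum.inr j')
    simp only [Sum.elim_inl, Sum.elim_inr] at this
    simpa using this
  · simp [hwv']
  · rename_i j'; simpa using hwu j'
  · rename_i i'; simpa using hvv' i'
  ·
    rename_i i' j'
    have := hON (Sum.inr i') (Sum.inl j')
    simp only [Sum.elim_inl, Sum.elim_inr] at this
    simpa using this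
  · simp [hw1]; left; nlinarith [norm_nonneg wE, real_inner_self_eq_norm_sq wE]
  · rename_i j'; simpa [Fin.succ_ne_zero j', (Fin.succ_ne_zero j').symm] using hwv j'
  · rename_i i'; simpa [Fin.succ_ne_zero i', (Fin.succ_ne_zero i').symm] using hvw' i'
  ·
    rename_i i' j'
    have := hON (Sum.inr i') (Sum.inr j')
    simp only [Sum.elim_inr] at this
    simpa [Fin.succ_inj] using this


section Decomp

variable {n : ℕ}

/-- canonical decomposition of a skew-symmetric operator, by induction on the
dimension of an invariant subspace -/
lemma skew_decomp_aux (f : EuclideanSpace ℝ (Fin n) →ₗ[ℝ] EuclideanSpace ℝ (Fin n))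
    (hf : ∀ x y : EuclideanSpace ℝ (Fin n), ⟪f x, y⟫_ℝ = - ⟪x, f y⟫_ℝ) :
    ∀ (d : ℕ) (V : Submodule ℝ (EuclideanSpace ℝ (Fin n))),
      Module.finrank ℝ V ≤ d → (∀ x ∈ V, f x ∈ V) →
      ∃ (m : ℕ) (u v : Fin m → EuclideanSpace ℝ (Fin n)) (lam : Fin m → ℝ),
        Orthonormal ℝ (Sum.elim u v) ∧ (∀ k, u k ∈ V) ∧ (∀ k, v k ∈ V) ∧
        ∀ x ∈ V, f x = ∑ k, lam k • (⟪u k, x⟫_ℝ • v k - ⟪v k, x⟫_ℝ • u k) := by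
  intro d
  induction d with
  | zero =>
    intro V hrank _
    have hV : V = ⊥ := Submodule.finrank_eq_zero.mp (Nat.le_zero.mp hrank)
    refine ⟨0, finZeroElim, finZeroElim, finZeroElim, ?_, finZeroElim, finZeroElim, ?_⟩
    · constructor
      · intro i; exact isEmptyElim i
      · intro i j _; exact isEmptyElim i
    · intro x hx
      rw [hV, Submodule.mem_bot] at hx
      subst hx
      simp
  | succ d ih =>
    intro V hrank hinv
    by_cases hV : V = ⊥
    · refine ⟨0, finZeroElim, finZeroElim, finZeroElim, ?_, finZeroElim, finZeroElim, ?_⟩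
      · constructor
        · intro i; exact isEmptyElim i
        · intro i j _; exact isEmptyElim i
      · intro x hx
        rw [hV, Submodule.mem_bot] at hx
        subst hx
        simp
    · -- find an eigenvector of f² restricted to V
      haveI : Nontrivial V := Submodule.nontrivial_iff_ne_bot.mpr hV
      have hrpos : 0 < Module.finrank ℝ V := Module.finrank_pos
      set fV : V →ₗ[ℝ] V := f.restrict hinv with hfV
      have hsymm : (fV ∘ₗ fV).IsSymmetric := by
        intro x y
        have e : ∀ z : V, ((fV ∘ₗ fV) z : EuclideanSpace ℝ (Fin n)) = f (f z) := by
          intro z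
          simp [fV, LinearMap.restrict_coe_apply]
        rw [Submodule.coe_inner, Submodule.coe_inner, e, e]
        linarith [hf (f (x : EuclideanSpace ℝ (Fin n))) (y : EuclideanSpace ℝ (Fin n)),
          hf (x : EuclideanSpace ℝ (Fin n)) (f (y : EuclideanSpace ℝ (Fin n)))]
      obtain ⟨i⟩ : Nonempty (Fin (Module.finrank ℝ V)) := ⟨⟨0, hrpos⟩⟩
      have hbe := hsymm.apply_eigenvectorBasis rfl i
      have hbnorm : ‖hsymm.eigenvectorBasis rfl i‖ = 1 :=
        (hsymm.eigenvectorBasis rfl).orthonormal.1 i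
      set θ := hsymm.eigenvalues rfl i with hθ
      set vE : EuclideanSpace ℝ (Fin n) :=
        ((hsymm.eigenvectorBasis rfl i : V) : EuclideanSpace ℝ (Fin n)) with hvE
      have hvEV : vE ∈ V := (hsymm.eigenvectorBasis rfl i : V).2
      have hvEnorm : ‖vE‖ = 1 := hbnorm
      have hvEinner : ⟪vE, vE⟫_ℝ = 1 := by
        rw [real_inner_self_eq_norm_sq, hvEnorm]; norm_num
      have hffv : f (f vE) = θ • vE := by
        have h' := congrArg (Subtype.val) hbe
        simpa [fV, LinearMap.restrict_coe_apply, LinearMap.comp_apply] using h'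

      have hvfv : ⟪vE, f vE⟫_ℝ = 0 := by
        have h := hf vE vE
        have h2 := real_inner_comm (f vE) vE
        linarith [h, h2.symm ▸ h]
      by_cases h0 : f vE = 0
      · -- vE is in the kernel : cut one dimension
        set W : Submodule ℝ (EuclideanSpace ℝ (Fin n)) := V ⊓ (ℝ ∙ vE)ᗮ with hW
        have hWle : W ≤ V := inf_le_left
        have hWinv : ∀ x ∈ W, f x ∈ W := by
          intro x hx
          rw [hW, Submodule.mem_inf] at hx ⊢
          obtain ⟨hxV, hxo⟩ := hx
          refine ⟨hinv x hxV, ?_⟩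
          rw [Submodule.mem_orthogonal_singleton_iff_inner_right, real_inner_comm,
            hf x vE, h0, inner_zero_right]
          ring
        have hvnW : vE ∉ W := by
          intro hmem
          rw [hW, Submodule.mem_inf, Submodule.mem_orthogonal_singleton_iff_inner_right] at hmem
          rw [hmem.2] at hvEinner
          norm_num at hvEinner
        have hWlt : W < V := lt_of_le_of_ne hWle (fun h => hvnW (h ▸ hvEV))
        have hWrank : Module.finrank ℝ W ≤ d := by
          have := Submodule.finrank_lt_finrank_of_lt hWlt
          omega
        obtain ⟨m, u, v, lam, hON, huW, hvW, hrep⟩ := ih W hWrank hWinv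
        refine ⟨m, u, v, lam, hON, fun k => hWle (huW k), fun k => hWle (hvW k), ?_⟩
        intro x hx
        have hyW : x - ⟪vE, x⟫_ℝ • vE ∈ W := by
          rw [hW, Submodule.mem_inf]
          refine ⟨Submodule.sub_mem V hx (Submodule.smul_mem V _ hvEV), ?_⟩
          rw [Submodule.mem_orthogonal_singleton_iff_inner_right, inner_sub_right,
            real_inner_smul_right, hvEinner]
          ring
        have hfx : f x = f (x - ⟪vE, x⟫_ℝ • vE) := by
          rw [map_sub, map_smul, h0, smul_zero, sub_zero]
        rw [hfx, hrep _ hyW]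
        refine Finset.sum_congr rfl fun k _ => ?_
        have hkuv : ⟪u k, vE⟫_ℝ = 0 := by
          have h' := huW k
          rw [hW, Submodule.mem_inf] at h'
          exact Submodule.mem_orthogonal_singleton_iff_inner_left.mp h'.2
        have hkvv : ⟪v k, vE⟫_ℝ = 0 := by
          have h' := hvW k
          rw [hW, Submodule.mem_inf] at h'
          exact Submodule.mem_orthogonal_singleton_iff_inner_left.mp h'.2
        rw [inner_sub_right, real_inner_smul_right, hkuv,
          inner_sub_right, real_inner_smul_right, hkvv]
        ring_nf
      · -- vE generates an invariant 2-plane together with wE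
        have hfvV : f vE ∈ V := hinv vE hvEV
        set τ : ℝ := ‖f vE‖ with hτ
        have hτpos : 0 < τ := norm_pos_iff.mpr h0
        set wE : EuclideanSpace ℝ (Fin n) := τ⁻¹ • f vE with hwE
        have hwEV : wE ∈ V := Submodule.smul_mem V _ hfvV
        have hwEnorm : ‖wE‖ = 1 := by
          rw [hwE, norm_smul, norm_inv, Real.norm_eq_abs, abs_of_pos hτpos, ← hτ]
          field_simp
        have hwEinner : ⟪wE, wE⟫_ℝ = 1 := by
          rw [real_inner_self_eq_norm_sq, hwEnorm]; norm_num
        have hvw : ⟪vE, wE⟫_ℝ = 0 := by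
          rw [hwE, real_inner_smul_right, hvfv]; ring
        have hwv : ⟪wE, vE⟫_ℝ = 0 := by rw [real_inner_comm]; exact hvw
        have hfv_eq : f vE = τ • wE := by
          rw [hwE, smul_smul, mul_inv_cancel₀ hτpos.ne', one_smul]
        have hθτ : θ = -(τ * τ) := by
          have h1 : ⟪f (f vE), vE⟫_ℝ = θ * ⟪vE, vE⟫_ℝ := by
            rw [hffv, real_inner_smul_left]
          have h2 : ⟪f (f vE), vE⟫_ℝ = - ⟪f vE, f vE⟫_ℝ := by
            rw [hf (f vE) vE, real_inner_comm]
          have h3 : ⟪f vE, f vE⟫_ℝ = τ * τ := by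
            rw [real_inner_self_eq_norm_sq, ← hτ]; ring
          rw [hvEinner] at h1
          rw [h3] at h2
          linarith [h1.symm.trans h2]
        have hfw : f wE = (-τ) • vE := by
          rw [hwE, map_smul, hffv, smul_smul, hθτ]
          congr 1
          field_simp
        set W : Submodule ℝ (EuclideanSpace ℝ (Fin n)) := V ⊓ (ℝ ∙ vE)ᗮ ⊓ (ℝ ∙ wE)ᗮ with hW
        have hWle : W ≤ V := le_trans inf_le_left inf_le_left
        have hmemW : ∀ x, x ∈ W ↔ x ∈ V ∧ ⟪x, vE⟫_ℝ = 0 ∧ ⟪x, wE⟫_ℝ = 0 := by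
          intro x
          rw [hW, Submodule.mem_inf, Submodule.mem_inf,
            Submodule.mem_orthogonal_singleton_iff_inner_left,
            Submodule.mem_orthogonal_singleton_iff_inner_left]
          tauto
        have hWinv : ∀ x ∈ W, f x ∈ W := by
          intro x hx
          rw [hmemW] at hx ⊢
          obtain ⟨hxV, hxv, hxw⟩ := hx
          refine ⟨hinv x hxV, ?_, ?_⟩
          · rw [hf x vE, hfv_eq, real_inner_smul_right, hxw]; ring
          · rw [hf x wE, hfw, real_inner_smul_right, hxv]; ring
        have hvnW : vE ∉ W := by
          intro hmem
          rw [hmemW] at hmem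
          rw [hmem.2.1] at hvEinner
          norm_num at hvEinner
        have hWlt : W < V := lt_of_le_of_ne hWle (fun h => hvnW (h ▸ hvEV))
        have hWrank : Module.finrank ℝ W ≤ d := by
          have := Submodule.finrank_lt_finrank_of_lt hWlt
          omega
        obtain ⟨m, u, v, lam, hON, huW, hvW, hrep⟩ := ih W hWrank hWinv
        -- inner products of the old family with vE, wE
        have huv0 : ∀ k, ⟪u k, vE⟫_ℝ = 0 := fun k => (((hmemW _).mp (huW k)).2.1)
        have huw0 : ∀ k, ⟪u k, wE⟫_ℝ = 0 := fun k => (((hmemW _).mp (huW k)).2.2)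
        have hvv0 : ∀ k, ⟪v k, vE⟫_ℝ = 0 := fun k => (((hmemW _).mp (hvW k)).2.1)
        have hvw0 : ∀ k, ⟪v k, wE⟫_ℝ = 0 := fun k => (((hmemW _).mp (hvW k)).2.2)
        have hvu0 : ∀ k, ⟪vE, u k⟫_ℝ = 0 := fun k => by rw [real_inner_comm]; exact huv0 k
        have hwu0 : ∀ k, ⟪wE, u k⟫_ℝ = 0 := fun k => by rw [real_inner_comm]; exact huw0 k
        have hvv0' : ∀ k, ⟪vE, v k⟫_ℝ = 0 := fun k => by rw [real_inner_comm]; exact hvv0 k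
        have hwv0' : ∀ k, ⟪wE, v k⟫_ℝ = 0 := fun k => by rw [real_inner_comm]; exact hvw0 k
        have hONite := orthonormal_iff_ite.mp hON
        refine ⟨m + 1, Fin.cons vE u, Fin.cons wE v, Fin.cons τ lam, ?_,
          fun k => Fin.cases hvEV (fun j => hWle (huW j)) k,
          fun k => Fin.cases hwEV (fun j => hWle (hvW j)) k, ?_⟩
        · exact orthonormal_cons_pair hON hvEinner hwEinner hvw hvu0 hvv0' hwu0 hwv0'
        · intro x hx
          set a : ℝ := ⟪vE, x⟫_ℝ with hadef
          set b : ℝ := ⟪wE, x⟫_ℝ with hbdef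
          set y : EuclideanSpace ℝ (Fin n) := x - a • vE - b • wE with hy
          have hyW : y ∈ W := by
            rw [hmemW]
            refine ⟨Submodule.sub_mem V (Submodule.sub_mem V hx
              (Submodule.smul_mem V _ hvEV)) (Submodule.smul_mem V _ hwEV), ?_, ?_⟩
            · rw [hy, inner_sub_left, inner_sub_left, real_inner_smul_left,
                real_inner_smul_left, hvEinner, hwv, real_inner_comm vE x, ← hadef]
              ring
            · rw [hy, inner_sub_left, inner_sub_left, real_inner_smul_left,
                real_inner_smul_left, hvw, hwEinner, real_inner_comm wE x, ← hbdef]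
              ring
          have hfx : f x = f y + (a * τ) • wE + (-(b * τ)) • vE := by
            have : f y = f x - a • f vE - b • f wE := by
              rw [hy, map_sub, map_sub, map_smul, map_smul]
            rw [this, hfv_eq, hfw, smul_smul, smul_smul]
            module
          have huy : ∀ k, ⟪u k, y⟫_ℝ = ⟪u k, x⟫_ℝ := by
            intro k
            rw [hy, inner_sub_right, inner_sub_right, real_inner_smul_right,
              real_inner_smul_right, huv0 k, huw0 k]
            ring
          have hvy : ∀ k, ⟪v k, y⟫_ℝ = ⟪v k, x⟫_ℝ := by
            intro k
            rw [hy, inner_sub_right, inner_sub_right, real_inner_smul_right,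
              real_inner_smul_right, hvv0 k, hvw0 k]
            ring
          rw [hfx, hrep y hyW, Fin.sum_univ_succ]
          simp only [Fin.cons_zero, Fin.cons_succ]
          rw [← hadef, ← hbdef]
          have hsum : (∑ k, lam k • (⟪u k, y⟫_ℝ • v k - ⟪v k, y⟫_ℝ • u k))
              = ∑ k, lam k • (⟪u k, x⟫_ℝ • v k - ⟪v k, x⟫_ℝ • u k) := by
            refine Finset.sum_congr rfl fun k _ => ?_
            rw [huy k, hvy k]
          rw [hsum]
          module

end Decomp




lemma inner_euclidean {n : ℕ} (X Y : EuclideanSpace ℝ (Fin n)) :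
    ⟪X, Y⟫_ℝ = ∑ i, X i * Y i := by
  simp [PiLp.inner_apply, RCLike.inner_apply, conj_trivial]
  exact Finset.sum_congr rfl fun i _ => mul_comm _ _

/-- canonical form of a skew-symmetric array -/
lemma skew_matrix_decomp {n : ℕ} (β : Fin n → Fin n → ℝ)
    (hskew : ∀ i j, β i j = - β j i) :
    ∃ (m : ℕ) (u v : Fin m → EuclideanSpace ℝ (Fin n)) (lam : Fin m → ℝ),
      Orthonormal ℝ (Sum.elim u v) ∧
      ∀ i j, β i j = ∑ k, lam k * (u k j * v k i - v k j * u k i) := by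
  classical
  -- the linear operator associated to β
  let f : EuclideanSpace ℝ (Fin n) →ₗ[ℝ] EuclideanSpace ℝ (Fin n) :=
    { toFun := fun x => WithLp.toLp 2 (fun i => ∑ j, β i j * x j)
      map_add' := by
        intro x y
        ext i
        simp only [PiLp.add_apply, PiLp.toLp_apply]
        rw [← Finset.sum_add_distrib]
        exact Finset.sum_congr rfl fun j _ => by ring
      map_smul' := by
        intro c x
        ext i
        simp only [PiLp.toLp_apply, PiLp.smul_apply, smul_eq_mul, RingHom.id_apply, Finset.mul_sum]
        exact Finset.sum_congr rfl fun j _ => by ring }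
  have hfapp : ∀ (x : EuclideanSpace ℝ (Fin n)) (i : Fin n), f x i = ∑ j, β i j * x j :=
    fun x i => rfl
  have hf : ∀ x y : EuclideanSpace ℝ (Fin n), ⟪f x, y⟫_ℝ = - ⟪x, f y⟫_ℝ := by
    intro x y
    rw [inner_euclidean, inner_euclidean]
    calc (∑ i, f x i * y i) = ∑ i, ∑ j, β i j * x j * y i := by
          refine Finset.sum_congr rfl fun i _ => ?_
          rw [hfapp, Finset.sum_mul]
      _ = ∑ j, ∑ i, β i j * x j * y i := Finset.sum_comm
      _ = ∑ j, -(x j * (∑ i, β j i * y i)) := by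
          refine Finset.sum_congr rfl fun j _ => ?_
          rw [Finset.mul_sum, ← Finset.sum_neg_distrib]
          refine Finset.sum_congr rfl fun i _ => ?_
          rw [hskew i j]; ring
      _ = - ∑ j, x j * f y j := by
          rw [← Finset.sum_neg_distrib]
          exact Finset.sum_congr rfl fun j _ => by rw [hfapp]
  obtain ⟨m, u, v, lam, hON, -, -, hrep⟩ :=
    skew_decomp_aux f hf (Module.finrank ℝ (⊤ : Submodule ℝ (EuclideanSpace ℝ (Fin n))))
      ⊤ le_rfl (fun x _ => Submodule.mem_top)
  refine ⟨m, u, v, lam, hON, ?_⟩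
  intro i j
  have hfe := hrep (EuclideanSpace.single j (1:ℝ)) Submodule.mem_top
  have hval := congrArg (fun z : EuclideanSpace ℝ (Fin n) => z i) hfe
  simp only at hval
  have hlhs : f (EuclideanSpace.single j (1:ℝ)) i = β i j := by
    rw [hfapp]
    simp [EuclideanSpace.single_apply]
  rw [hlhs] at hval
  rw [hval]
  rw [WithLp.ofLp_sum, Finset.sum_apply i Finset.univ
    (fun k => WithLp.ofLp (lam k • (⟪u k, EuclideanSpace.single j (1:ℝ)⟫_ℝ • v k
      - ⟪v k, EuclideanSpace.single j (1:ℝ)⟫_ℝ • u k)))]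
  refine Finset.sum_congr rfl fun k _ => ?_
  have h1 : ⟪u k, EuclideanSpace.single j (1:ℝ)⟫_ℝ = u k j := by
    simp [EuclideanSpace.inner_single_right]
  have h2 : ⟪v k, EuclideanSpace.single j (1:ℝ)⟫_ℝ = v k j := by
    simp [EuclideanSpace.inner_single_right]
  simp only [PiLp.smul_apply, PiLp.sub_apply, smul_eq_mul, h1, h2]



section Key
variable {n : ℕ}

lemma mul_sum_sum {m : ℕ} (a : ℝ) (F G : Fin m → ℝ) :
    a * (∑ k, F k) * (∑ l, G l) = ∑ k, ∑ l, a * F k * G l := by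
  have h1 : a * (∑ k, F k) = ∑ k, a * F k := Finset.mul_sum _ _ _
  rw [h1, Finset.sum_mul_sum]

lemma sum_front3 {α β γ : Type*} [Fintype α] [Fintype β] [Fintype γ]
    (g : α → β → γ → ℝ) :
    (∑ a, ∑ b, ∑ c, g a b c) = ∑ c, ∑ a, ∑ b, g a b c :=
  (Finset.sum_congr rfl fun a _ => Finset.sum_comm).trans Finset.sum_comm

lemma sum_front4 {α β γ δ : Type*} [Fintype α] [Fintype β] [Fintype γ] [Fintype δ]
    (g : α → β → γ → δ → ℝ) :
    (∑ a, ∑ b, ∑ c, ∑ d, g a b c d) = ∑ d, ∑ a, ∑ b, ∑ c, g a b c d :=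
  (Finset.sum_congr rfl fun a _ => sum_front3 (g a)).trans Finset.sum_comm

lemma sum_front5 {α β γ δ σ : Type*} [Fintype α] [Fintype β] [Fintype γ] [Fintype δ] [Fintype σ]
    (g : α → β → γ → δ → σ → ℝ) :
    (∑ a, ∑ b, ∑ c, ∑ d, ∑ e, g a b c d e) = ∑ e, ∑ a, ∑ b, ∑ c, ∑ d, g a b c d e :=
  (Finset.sum_congr rfl fun a _ => sum_front4 (g a)).trans Finset.sum_comm

/-- the key quadratic-form estimate -/
lemma key_bound (A : Fin n → Fin n → Fin n → Fin n → ℝ) (ε : ℝ) (hε : 0 ≤ ε)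
    (h1 : ∀ i j p q, A i j p q = - A j i p q)
    (h2 : ∀ i j p q, A i j p q = - A i j q p)
    (h3 : ∀ i j p q, A i j p q = A p q i j)
    (hB : ∀ i j p q, A i j p q + A p i j q + A j p i q = 0)
    (hK : ∀ X Y : EuclideanSpace ℝ (Fin n),
      ‖X‖ ^ 2 * ‖Y‖ ^ 2 - ⟪X, Y⟫_ℝ ^ 2 = 1 → |T A X Y Y X| ≤ ε)
    (β : Fin n → Fin n → ℝ) (hskew : ∀ i j, β i j = - β j i)
    (hN : 0 < ∑ i, ∑ j, β i j ^ 2) :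
    |∑ i, ∑ j, ∑ p, ∑ q, A i j p q * β i j * β p q|
      ≤ ((4 * ((n / 2 : ℕ) : ℝ) - 1) / 3) * (2 * ε) * (∑ i, ∑ j, β i j ^ 2) := by
  classical
  obtain ⟨m, u, v, lam, hON, hrep⟩ := skew_matrix_decomp β hskew
  set c : Fin m → Fin n → Fin n → ℝ :=
    fun k i j => u k j * v k i - v k j * u k i with hc
  have hONite := orthonormal_iff_ite.mp hON
  -- inner products of the family
  have huu : ∀ k l, (∑ i, u k i * u l i) = if k = l then 1 else 0 := by
    intro k l
    have := hONite (Sum.inl k) (Sum.inl l)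
    simp only [Sum.elim_inl, Sum.inl.injEq] at this
    rw [inner_euclidean] at this
    simpa using this
  have hvv : ∀ k l, (∑ i, v k i * v l i) = if k = l then 1 else 0 := by
    intro k l
    have := hONite (Sum.inr k) (Sum.inr l)
    simp only [Sum.elim_inr, Sum.inr.injEq] at this
    rw [inner_euclidean] at this
    simpa using this
  have huv : ∀ k l, (∑ i, u k i * v l i) = 0 := by
    intro k l
    have := hONite (Sum.inl k) (Sum.inr l)
    simp only [Sum.elim_inl, Sum.elim_inr] at this
    rw [inner_euclidean] at this
    simpa using this
  have hvu : ∀ k l, (∑ i, v k i * u l i) = 0 := by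
    intro k l
    have := hONite (Sum.inr k) (Sum.inl l)
    simp only [Sum.elim_inl, Sum.elim_inr] at this
    rw [inner_euclidean] at this
    simpa using this
  -- pairing of the elementary 2-forms
  have hcc : ∀ k l, (∑ i, ∑ j, c k i j * c l i j) = if k = l then 2 else 0 := by
    intro k l
    have e : (∑ i, ∑ j, c k i j * c l i j)
        = (∑ i, ∑ j, (v k i * v l i) * (u k j * u l j))
          - (∑ i, ∑ j, (v k i * u l i) * (u k j * v l j))
          - (∑ i, ∑ j, (u k i * v l i) * (v k j * u l j))
          + (∑ i, ∑ j, (u k i * u l i) * (v k j * v l j)) := by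
      simp only [← Finset.sum_sub_distrib, ← Finset.sum_add_distrib]
      exact Finset.sum_congr rfl fun i _ => Finset.sum_congr rfl fun j _ => by
        simp only [hc]; ring
    rw [e, ← Finset.sum_mul_sum, ← Finset.sum_mul_sum, ← Finset.sum_mul_sum,
      ← Finset.sum_mul_sum, huu, hvv, huv, hvu]
    by_cases h : k = l <;> simp [h] <;> norm_num
  -- the quadratic form in terms of the decomposition
  have hQ : (∑ i, ∑ j, ∑ p, ∑ q, A i j p q * β i j * β p q)
      = ∑ kl : Fin m × Fin m, ∑ i, ∑ j, ∑ p, ∑ q,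
          lam kl.1 * lam kl.2 * (A i j p q * c kl.1 i j * c kl.2 p q) := by
    rw [← sum_front5 (fun i j p q (kl : Fin m × Fin m) =>
      lam kl.1 * lam kl.2 * (A i j p q * c kl.1 i j * c kl.2 p q))]
    refine Finset.sum_congr rfl fun i _ => Finset.sum_congr rfl fun j _ =>
      Finset.sum_congr rfl fun p _ => Finset.sum_congr rfl fun q _ => ?_
    rw [hrep i j, hrep p q]
    rw [mul_sum_sum]
    rw [Fintype.sum_prod_type]
    exact Finset.sum_congr rfl fun k _ => Finset.sum_congr rfl fun l _ => by
      simp only [hc]; ring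
  -- each block sum is 4 T(v k, u k, v l, u l)
  have hD : ∀ k l : Fin m, (∑ i, ∑ j, ∑ p, ∑ q, A i j p q * c k i j * c l p q)
      = 4 * T A (v k) (u k) (v l) (u l) := by
    intro k l
    have e : (∑ i, ∑ j, ∑ p, ∑ q, A i j p q * c k i j * c l p q)
        = ((∑ i, ∑ j, ∑ p, ∑ q, A i j p q * (v k) i * (u k) j * (v l) p * (u l) q)
            - (∑ i, ∑ j, ∑ p, ∑ q, A i j p q * (v k) i * (u k) j * (u l) p * (v l) q))
          - ((∑ i, ∑ j, ∑ p, ∑ q, A i j p q * (u k) i * (v k) j * (v l) p * (u l) q)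
            - (∑ i, ∑ j, ∑ p, ∑ q, A i j p q * (u k) i * (v k) j * (u l) p * (v l) q)) := by
      simp only [← Finset.sum_sub_distrib]
      exact Finset.sum_congr rfl fun i _ => Finset.sum_congr rfl fun j _ =>
        Finset.sum_congr rfl fun p _ => Finset.sum_congr rfl fun q _ => by
          simp only [hc]; ring
    rw [e]
    have e1 : (∑ i, ∑ j, ∑ p, ∑ q, A i j p q * (v k) i * (u k) j * (v l) p * (u l) q)
        = T A (v k) (u k) (v l) (u l) := rfl
    have e2 : (∑ i, ∑ j, ∑ p, ∑ q, A i j p q * (v k) i * (u k) j * (u l) p * (v l) q)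
        = T A (v k) (u k) (u l) (v l) := rfl
    have e3 : (∑ i, ∑ j, ∑ p, ∑ q, A i j p q * (u k) i * (v k) j * (v l) p * (u l) q)
        = T A (u k) (v k) (v l) (u l) := rfl
    have e4 : (∑ i, ∑ j, ∑ p, ∑ q, A i j p q * (u k) i * (v k) j * (u l) p * (v l) q)
        = T A (u k) (v k) (u l) (v l) := rfl
    rw [e1, e2, e3, e4, T_swap34 h2 (v k) (u k) (u l) (v l),
      T_swap12 h1 (u k) (v k) (v l) (u l), T_swap12 h1 (u k) (v k) (u l) (v l),
      T_swap34 h2 (v k) (u k) (u l) (v l)]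
    ring
  -- norm of β in terms of the decomposition
  set S : ℝ := ∑ k, lam k ^ 2 with hS
  have hSnn : 0 ≤ S := Finset.sum_nonneg fun k _ => sq_nonneg _
  have hNval : (∑ i, ∑ j, β i j ^ 2) = 2 * S := by
    have hN2 : (∑ i, ∑ j, β i j ^ 2)
        = ∑ kl : Fin m × Fin m, ∑ i, ∑ j,
            (lam kl.1 * c kl.1 i j) * (lam kl.2 * c kl.2 i j) := by
      rw [← sum_front3 (fun i j (kl : Fin m × Fin m) =>
        (lam kl.1 * c kl.1 i j) * (lam kl.2 * c kl.2 i j))]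
      refine Finset.sum_congr rfl fun i _ => Finset.sum_congr rfl fun j _ => ?_
      rw [hrep i j, sq, Finset.sum_mul_sum, Fintype.sum_prod_type]
    rw [hN2]
    have hterm : ∀ kl : Fin m × Fin m,
        (∑ i, ∑ j, (lam kl.1 * c kl.1 i j) * (lam kl.2 * c kl.2 i j))
          = lam kl.1 * lam kl.2 * (if kl.1 = kl.2 then 2 else 0) := by
      intro kl
      rw [← hcc kl.1 kl.2, Finset.mul_sum]
      refine Finset.sum_congr rfl fun i _ => ?_
      rw [Finset.mul_sum]
      exact Finset.sum_congr rfl fun j _ => by ring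
    rw [Finset.sum_congr rfl fun kl _ => hterm kl, Fintype.sum_prod_type]
    have : ∀ k : Fin m, (∑ l, lam k * lam l * (if k = l then 2 else 0)) = 2 * lam k ^ 2 := by
      intro k
      rw [Finset.sum_congr rfl (fun l _ => show lam k * lam l * (if k = l then 2 else 0)
        = if k = l then 2 * lam l ^ 2 else 0 by by_cases h : k = l <;> simp [h] <;> ring)]
      rw [Finset.sum_ite_eq]
      simp
    rw [Finset.sum_congr rfl fun k _ => this k, ← Finset.mul_sum]
  -- m ≥ 1 and 2 m ≤ n
  have hm1 : 1 ≤ m := by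
    rcases Nat.eq_zero_or_pos m with h | h
    · exfalso
      rw [hNval] at hN
      have hS0 : S = 0 := by
        rw [hS]
        haveI : IsEmpty (Fin m) := h ▸ inferInstanceAs (IsEmpty (Fin 0))
        rw [Finset.univ_eq_empty, Finset.sum_empty]
      rw [hS0] at hN
      norm_num at hN
    · exact h
  have hmn : (m : ℝ) ≤ ((n / 2 : ℕ) : ℝ) := by
    have hli := hON.linearIndependent
    have hcard := hli.fintype_card_le_finrank
    rw [finrank_euclideanSpace_fin] at hcard
    simp only [Fintype.card_sum, Fintype.card_fin] at hcard
    have : m ≤ n / 2 := by omega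
    exact_mod_cast this
  -- norms and inner products as needed for the curvature bounds
  have hnu : ∀ k, ‖u k‖ = 1 := fun k => hON.1 (Sum.inl k)
  have hnv : ∀ k, ‖v k‖ = 1 := fun k => hON.1 (Sum.inr k)
  have hivu : ∀ k l, ⟪v k, u l⟫_ℝ = 0 := fun k l => by
    rw [inner_euclidean]; exact hvu k l
  have hiuv : ∀ k l, ⟪u k, v l⟫_ℝ = 0 := fun k l => by
    rw [inner_euclidean]; exact huv k l
  have hiuu : ∀ k l, k ≠ l → ⟪u k, u l⟫_ℝ = 0 := fun k l h => by
    rw [inner_euclidean, huu, if_neg h]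
  have hivv : ∀ k l, k ≠ l → ⟪v k, v l⟫_ℝ = 0 := fun k l h => by
    rw [inner_euclidean, hvv, if_neg h]
  -- diagonal and off-diagonal curvature bounds
  have hTdiag : ∀ k, |T A (v k) (u k) (v k) (u k)| ≤ ε := by
    intro k
    have hswap := T_swap34 h2 (v k) (u k) (v k) (u k)
    have hL0 := L0 h1 hK (v k) (u k)
    rw [hnu k, hnv k, hivu k k] at hL0
    rw [show T A (v k) (u k) (v k) (u k) = - T A (v k) (u k) (u k) (v k) from hswap, abs_neg]
    calc |T A (v k) (u k) (u k) (v k)| ≤ ε * (1 ^ 2 * 1 ^ 2 - 0 ^ 2) := hL0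
      _ = ε := by ring
  have hToff : ∀ k l, k ≠ l → |T A (v k) (u k) (v l) (u l)| ≤ 4 / 3 * ε := by
    intro k l hkl
    exact L3 h1 h2 h3 hK hB (v k) (u k) (v l) (u l) (hnv k) (hnu k) (hnv l) (hnu l)
      (hivu k k) (hivv k l hkl) (hivu k l) (hiuv k l) (hiuu k l hkl) (hivu l l)
  -- assemble
  rw [hQ, hNval]
  have hpull : ∀ kl : Fin m × Fin m,
      (∑ i, ∑ j, ∑ p, ∑ q, lam kl.1 * lam kl.2 * (A i j p q * c kl.1 i j * c kl.2 p q))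
        = lam kl.1 * lam kl.2 * (4 * T A (v kl.1) (u kl.1) (v kl.2) (u kl.2)) := by
    intro kl
    rw [← hD kl.1 kl.2, Finset.mul_sum]
    refine Finset.sum_congr rfl fun i _ => ?_
    rw [Finset.mul_sum]
    refine Finset.sum_congr rfl fun j _ => ?_
    rw [Finset.mul_sum]
    refine Finset.sum_congr rfl fun p _ => ?_
    rw [Finset.mul_sum]
  rw [Finset.sum_congr rfl fun kl _ => hpull kl]
  have hbnd : ∀ kl : Fin m × Fin m,
      |lam kl.1 * lam kl.2 * (4 * T A (v kl.1) (u kl.1) (v kl.2) (u kl.2))|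
        ≤ if kl.1 = kl.2 then 4 * ε * lam kl.1 ^ 2
          else 8 / 3 * ε * (lam kl.1 ^ 2 + lam kl.2 ^ 2) := by
    rintro ⟨k, l⟩
    simp only
    by_cases h : k = l
    · subst h
      rw [if_pos rfl]
      have e : lam k * lam k * (4 * T A (v k) (u k) (v k) (u k))
          = (4 * lam k ^ 2) * T A (v k) (u k) (v k) (u k) := by ring
      rw [e, abs_mul, abs_of_nonneg (by positivity : (0:ℝ) ≤ 4 * lam k ^ 2)]
      calc (4 * lam k ^ 2) * |T A (v k) (u k) (v k) (u k)| ≤ (4 * lam k ^ 2) * ε :=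
            mul_le_mul_of_nonneg_left (hTdiag k) (by positivity)
        _ = 4 * ε * lam k ^ 2 := by ring
    · rw [if_neg h]
      have e : lam k * lam l * (4 * T A (v k) (u k) (v l) (u l))
          = (4 * (lam k * lam l)) * T A (v k) (u k) (v l) (u l) := by ring
      rw [e, abs_mul]
      have h4 : |4 * (lam k * lam l)| = 4 * (|lam k| * |lam l|) := by
        rw [abs_mul, abs_mul]
        norm_num
      rw [h4]
      calc (4 * (|lam k| * |lam l|)) * |T A (v k) (u k) (v l) (u l)|
          ≤ (4 * (|lam k| * |lam l|)) * (4 / 3 * ε) :=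
            mul_le_mul_of_nonneg_left (hToff k l h) (by positivity)
        _ ≤ 8 / 3 * ε * (lam k ^ 2 + lam l ^ 2) := by
            nlinarith [sq_nonneg (|lam k| - |lam l|), sq_abs (lam k), sq_abs (lam l),
              abs_nonneg (lam k), abs_nonneg (lam l), hε,
              mul_nonneg (abs_nonneg (lam k)) (abs_nonneg (lam l))]
  refine le_trans (Finset.abs_sum_le_sum_abs _ _) ?_
  refine le_trans (Finset.sum_le_sum fun kl _ => hbnd kl) ?_
  -- evaluate the bound
  rw [Fintype.sum_prod_type]
  have hrow : ∀ k : Fin m,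
      (∑ l, if k = l then 4 * ε * lam k ^ 2 else 8 / 3 * ε * (lam k ^ 2 + lam l ^ 2))
        = 4 * ε * lam k ^ 2
          + 8 / 3 * ε * (((m : ℝ) - 1) * lam k ^ 2 + (S - lam k ^ 2)) := by
    intro k
    rw [← Finset.add_sum_erase Finset.univ _ (Finset.mem_univ k), if_pos rfl]
    congr 1
    rw [Finset.sum_congr rfl (fun l hl => if_neg (fun he => (Finset.mem_erase.mp hl).1 he.symm))]
    have hc1 : (∑ l ∈ Finset.univ.erase k, (8:ℝ) / 3 * ε * (lam k ^ 2 + lam l ^ 2))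
        = ∑ l ∈ Finset.univ.erase k, (8 / 3 * ε * lam k ^ 2 + 8 / 3 * ε * lam l ^ 2) :=
      Finset.sum_congr rfl fun l _ => by ring
    rw [hc1, Finset.sum_add_distrib, Finset.sum_const, Finset.card_erase_of_mem
      (Finset.mem_univ k), Finset.card_univ, Fintype.card_fin, ← Finset.mul_sum,
      Finset.sum_erase_eq_sub (Finset.mem_univ k), nsmul_eq_mul]
    have hcast : ((m - 1 : ℕ) : ℝ) = (m : ℝ) - 1 := by
      have : (1 : ℕ) ≤ m := hm1
      push_cast [Nat.cast_sub this]
      ring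
    rw [hcast, hS]
    ring
  rw [Finset.sum_congr rfl fun k _ => hrow k]
  have hfinal : (∑ k : Fin m, (4 * ε * lam k ^ 2
      + 8 / 3 * ε * (((m : ℝ) - 1) * lam k ^ 2 + (S - lam k ^ 2))))
      = 4 * ε * S + 8 / 3 * ε * (((m:ℝ) - 1) * S + ((m:ℝ) * S - S)) := by
    rw [Finset.sum_add_distrib]
    congr 1
    · rw [← Finset.mul_sum, hS]
    · rw [← Finset.mul_sum]
      congr 1
      rw [Finset.sum_add_distrib, Finset.sum_sub_distrib, ← Finset.mul_sum,
        Finset.sum_const, Finset.card_univ, Fintype.card_fin, nsmul_eq_mul, hS]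
  rw [hfinal]
  have hmS : (m : ℝ) * S ≤ ((n / 2 : ℕ) : ℝ) * S := mul_le_mul_of_nonneg_right hmn hSnn
  have hεS : 0 ≤ ε * S := mul_nonneg hε hSnn
  nlinarith [mul_le_mul_of_nonneg_left hmS hε]

end Key

lemma sum_G {n : ℕ} (i j : Fin n) (F : Fin n → Fin n → ℝ) :
    (∑ p, ∑ q, ((if i = p then (1:ℝ) else 0) * (if j = q then 1 else 0)
      - (if i = q then (1:ℝ) else 0) * (if j = p then 1 else 0)) * F p q)
      = F i j - F j i := by
  have e : (∑ p, ∑ q, ((if i = p then (1:ℝ) else 0) * (if j = q then 1 else 0)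
      - (if i = q then (1:ℝ) else 0) * (if j = p then 1 else 0)) * F p q)
      = (∑ p, ∑ q, (if i = p then (1:ℝ) else 0) * (if j = q then 1 else 0) * F p q)
        - (∑ p, ∑ q, (if i = q then (1:ℝ) else 0) * (if j = p then 1 else 0) * F p q) := by
    simp only [← Finset.sum_sub_distrib]
    exact Finset.sum_congr rfl fun p _ => Finset.sum_congr rfl fun q _ => by ring
  rw [e]
  congr 1
  · simp [ite_mul, zero_mul, one_mul, mul_ite, mul_zero, mul_one, Finset.sum_ite_eq]
  · simp [ite_mul, zero_mul, one_mul, mul_ite, mul_zero, mul_one, Finset.sum_ite_eq]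

end BergerAux

open BergerAux in
theorem Rhat_eigenvalue_estimate
    (n : ℕ)
    (A : Fin n → Fin n → Fin n → Fin n → ℝ) (δ Δ : ℝ)
    (hA1 : ∀ i j p q, A i j p q = - A j i p q)
    (hA2 : ∀ i j p q, A i j p q = - A i j q p)
    (hA3 : ∀ i j p q, A i j p q = A p q i j)
    (hBianchi : ∀ i j p q, A i j p q + A p i j q + A j p i q = 0)
    (hsec : ∀ X Y : EuclideanSpace ℝ (Fin n),
      ‖X‖ ^ 2 * ‖Y‖ ^ 2 - ⟪X, Y⟫_ℝ ^ 2 = 1 →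
      δ ≤ (∑ i, ∑ j, ∑ p, ∑ q, A i j p q * X i * Y j * Y p * X q) ∧
      (∑ i, ∑ j, ∑ p, ∑ q, A i j p q * X i * Y j * Y p * X q) ≤ Δ)
    (β : Fin n → Fin n → ℝ) (μ : ℝ)
    (hβ_skew : ∀ i j, β i j = - β j i)
    (hβ_ne : β ≠ 0)
    (heig : ∀ i j, ∑ p, ∑ q, A i j p q * β p q = μ * β i j) :
    |μ + (Δ + δ)| ≤ ((4 * ((n / 2 : ℕ) : ℝ) - 1) / 3) * (Δ - δ) := by
  classical
  -- a nonzero off-diagonal entry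
  have hex : ∃ i j, β i j ≠ 0 := by
    by_contra h
    push_neg at h
    exact hβ_ne (funext fun i => funext fun j => h i j)
  obtain ⟨i0, j0, hij0⟩ := hex
  have hdiag : ∀ i, β i i = 0 := fun i => by have := hβ_skew i i; linarith
  have hne : i0 ≠ j0 := fun h => hij0 (by rw [h]; exact hdiag j0)
  -- δ ≤ Δ
  have hδΔ : δ ≤ Δ := by
    have harea : ‖EuclideanSpace.single i0 (1:ℝ)‖ ^ 2 * ‖EuclideanSpace.single j0 (1:ℝ)‖ ^ 2
        - ⟪EuclideanSpace.single i0 (1:ℝ), EuclideanSpace.single j0 (1:ℝ)⟫_ℝ ^ 2 = 1 := by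
      rw [EuclideanSpace.norm_single, EuclideanSpace.norm_single]
      rw [show ⟪EuclideanSpace.single i0 (1:ℝ), EuclideanSpace.single j0 (1:ℝ)⟫_ℝ = 0 by
        simp [EuclideanSpace.inner_single_right, EuclideanSpace.single_apply, Ne.symm hne]]
      norm_num
    obtain ⟨hl, hr⟩ := hsec _ _ harea
    linarith
  set cA : ℝ := (Δ + δ) / 2 with hcA
  set ε : ℝ := (Δ - δ) / 2 with hεdef
  have hε : 0 ≤ ε := by rw [hεdef]; linarith
  set A' : Fin n → Fin n → Fin n → Fin n → ℝ := fun i j p q =>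
    A i j p q + cA * ((if i = p then (1:ℝ) else 0) * (if j = q then 1 else 0)
      - (if i = q then (1:ℝ) else 0) * (if j = p then 1 else 0)) with hA'
  have hsite : ∀ (x y : Fin n), (if x = y then (1:ℝ) else 0) = (if y = x then 1 else 0) := by
    intro x y
    by_cases h : x = y
    · simp [h]
    · rw [if_neg h, if_neg (fun hc => h hc.symm)]
  have h1' : ∀ i j p q, A' i j p q = - A' j i p q := by
    intro i j p q
    simp only [hA']
    rw [hA1 i j p q]
    ring
  have h2' : ∀ i j p q, A' i j p q = - A' i j q p := by
    intro i j p q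
    simp only [hA']
    rw [hA2 i j p q]
    ring
  have h3' : ∀ i j p q, A' i j p q = A' p q i j := by
    intro i j p q
    simp only [hA']
    rw [hA3 i j p q, hsite p i, hsite q j, hsite p j, hsite q i]
    ring
  have hB' : ∀ i j p q, A' i j p q + A' p i j q + A' j p i q = 0 := by
    intro i j p q
    simp only [hA']
    rw [hsite p i, hsite p j, hsite j i]
    have := hBianchi i j p q
    linarith [hBianchi i j p q,
      show ((if i = p then (1:ℝ) else 0) * (if j = q then 1 else 0)
        - (if i = q then (1:ℝ) else 0) * (if j = p then 1 else 0))
        + ((if j = p then (1:ℝ) else 0) * (if i = q then 1 else 0)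
        - (if p = q then (1:ℝ) else 0) * (if i = j then 1 else 0))
        + ((if i = j then (1:ℝ) else 0) * (if p = q then 1 else 0)
        - (if j = q then (1:ℝ) else 0) * (if i = p then 1 else 0)) = 0 from by ring]
  -- splitting of the shifted quadrilinear form
  have hTsplit : ∀ X Y Z W : EuclideanSpace ℝ (Fin n),
      T A' X Y Z W = T A X Y Z W + cA * (∑ i, ∑ j,
        ((X i * Y j) * (Z i * W j) - (X i * Y j) * (Z j * W i))) := by
    intro X Y Z W
    unfold T
    rw [Finset.mul_sum, ← Finset.sum_add_distrib]
    refine Finset.sum_congr rfl fun i _ => ?_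
    rw [Finset.mul_sum, ← Finset.sum_add_distrib]
    refine Finset.sum_congr rfl fun j _ => ?_
    have e : ∀ p q, A' i j p q * X i * Y j * Z p * W q
        = A i j p q * X i * Y j * Z p * W q
          + cA * (((if i = p then (1:ℝ) else 0) * (if j = q then 1 else 0)
            - (if i = q then (1:ℝ) else 0) * (if j = p then 1 else 0))
              * ((X i * Y j) * (Z p * W q))) := by
      intro p q
      simp only [hA']
      ring
    rw [Finset.sum_congr rfl fun p _ => Finset.sum_congr rfl fun q _ => e p q]
    have e2 : (∑ p, ∑ q, (A i j p q * X i * Y j * Z p * W q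
        + cA * (((if i = p then (1:ℝ) else 0) * (if j = q then 1 else 0)
            - (if i = q then (1:ℝ) else 0) * (if j = p then 1 else 0))
              * ((X i * Y j) * (Z p * W q)))))
        = (∑ p, ∑ q, A i j p q * X i * Y j * Z p * W q)
          + cA * (∑ p, ∑ q, ((if i = p then (1:ℝ) else 0) * (if j = q then 1 else 0)
            - (if i = q then (1:ℝ) else 0) * (if j = p then 1 else 0))
              * ((X i * Y j) * (Z p * W q))) := by
      rw [Finset.mul_sum, ← Finset.sum_add_distrib]
      refine Finset.sum_congr rfl fun p _ => ?_
      rw [Finset.mul_sum, ← Finset.sum_add_distrib]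
    rw [e2, sum_G i j (fun p q => (X i * Y j) * (Z p * W q))]
  -- sectional curvature bound for the shifted tensor
  have hK' : ∀ X Y : EuclideanSpace ℝ (Fin n),
      ‖X‖ ^ 2 * ‖Y‖ ^ 2 - ⟪X, Y⟫_ℝ ^ 2 = 1 → |T A' X Y Y X| ≤ ε := by
    intro X Y harea
    have hsum : (∑ i, ∑ j, ((X i * Y j) * (Y i * X j) - (X i * Y j) * (Y j * X i)))
        = ⟪X, Y⟫_ℝ ^ 2 - ‖X‖ ^ 2 * ‖Y‖ ^ 2 := by
      have e : (∑ i, ∑ j, ((X i * Y j) * (Y i * X j) - (X i * Y j) * (Y j * X i)))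
          = (∑ i, ∑ j, (X i * Y i) * (X j * Y j)) - (∑ i, ∑ j, (X i * X i) * (Y j * Y j)) := by
        simp only [← Finset.sum_sub_distrib]
        exact Finset.sum_congr rfl fun i _ => Finset.sum_congr rfl fun j _ => by ring
      rw [e, ← Finset.sum_mul_sum, ← Finset.sum_mul_sum]
      rw [← inner_euclidean X Y]
      rw [show (∑ i, X i * X i) = ⟪X, X⟫_ℝ from (inner_euclidean X X).symm]
      rw [show (∑ i, Y i * Y i) = ⟪Y, Y⟫_ℝ from (inner_euclidean Y Y).symm]
      rw [real_inner_self_eq_norm_sq, real_inner_self_eq_norm_sq]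
      ring
    have hT : T A' X Y Y X = T A X Y Y X + cA * (⟪X, Y⟫_ℝ ^ 2 - ‖X‖ ^ 2 * ‖Y‖ ^ 2) := by
      rw [hTsplit X Y Y X, hsum]
    obtain ⟨hl, hr⟩ := hsec X Y harea
    have hKval : T A X Y Y X = ∑ i, ∑ j, ∑ p, ∑ q, A i j p q * X i * Y j * Y p * X q := rfl
    rw [hT]
    have hone : ⟪X, Y⟫_ℝ ^ 2 - ‖X‖ ^ 2 * ‖Y‖ ^ 2 = -1 := by linarith
    rw [hone, hKval, hcA, hεdef]
    rw [abs_le]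
    constructor <;> linarith
  -- positivity of the norm of β
  have hNpos : 0 < ∑ i, ∑ j, β i j ^ 2 := by
    have hpos : 0 < ∑ j, β i0 j ^ 2 :=
      Finset.sum_pos' (fun j _ => sq_nonneg _) ⟨j0, Finset.mem_univ _, by positivity⟩
    exact Finset.sum_pos' (fun i _ => Finset.sum_nonneg fun j _ => sq_nonneg _)
      ⟨i0, Finset.mem_univ _, hpos⟩
  -- the quadratic form evaluates to (μ + Δ + δ) N
  set N : ℝ := ∑ i, ∑ j, β i j ^ 2 with hN
  have hQeq : (∑ i, ∑ j, ∑ p, ∑ q, A' i j p q * β i j * β p q) = (μ + (Δ + δ)) * N := by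
    have hsplit : (∑ i, ∑ j, ∑ p, ∑ q, A' i j p q * β i j * β p q)
        = (∑ i, ∑ j, ∑ p, ∑ q, A i j p q * β i j * β p q)
          + cA * (∑ i, ∑ j, (β i j * β i j - β i j * β j i)) := by
      rw [Finset.mul_sum, ← Finset.sum_add_distrib]
      refine Finset.sum_congr rfl fun i _ => ?_
      rw [Finset.mul_sum, ← Finset.sum_add_distrib]
      refine Finset.sum_congr rfl fun j _ => ?_
      have e : ∀ p q, A' i j p q * β i j * β p q
          = A i j p q * β i j * β p q
            + cA * (((if i = p then (1:ℝ) else 0) * (if j = q then 1 else 0)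
              - (if i = q then (1:ℝ) else 0) * (if j = p then 1 else 0))
                * (β i j * β p q)) := by
        intro p q
        simp only [hA']
        ring
      rw [Finset.sum_congr rfl fun p _ => Finset.sum_congr rfl fun q _ => e p q]
      have e2 : (∑ p, ∑ q, (A i j p q * β i j * β p q
          + cA * (((if i = p then (1:ℝ) else 0) * (if j = q then 1 else 0)
              - (if i = q then (1:ℝ) else 0) * (if j = p then 1 else 0))
                * (β i j * β p q))))
          = (∑ p, ∑ q, A i j p q * β i j * β p q)
            + cA * (∑ p, ∑ q, ((if i = p then (1:ℝ) else 0) * (if j = q then 1 else 0)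
              - (if i = q then (1:ℝ) else 0) * (if j = p then 1 else 0))
                * (β i j * β p q)) := by
        rw [Finset.mul_sum, ← Finset.sum_add_distrib]
        refine Finset.sum_congr rfl fun p _ => ?_
        rw [Finset.mul_sum, ← Finset.sum_add_distrib]
      rw [e2, sum_G i j (fun p q => β i j * β p q)]
    rw [hsplit]
    have hAterm : (∑ i, ∑ j, ∑ p, ∑ q, A i j p q * β i j * β p q) = μ * N := by
      have e : ∀ i j, (∑ p, ∑ q, A i j p q * β i j * β p q)
          = β i j * (∑ p, ∑ q, A i j p q * β p q) := by
        intro i j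
        rw [Finset.mul_sum]
        refine Finset.sum_congr rfl fun p _ => ?_
        rw [Finset.mul_sum]
        exact Finset.sum_congr rfl fun q _ => by ring
      rw [Finset.sum_congr rfl fun i _ => Finset.sum_congr rfl fun j _ => e i j]
      rw [Finset.sum_congr rfl fun i _ => Finset.sum_congr rfl fun j _ =>
        (by rw [heig i j]; ring : β i j * (∑ p, ∑ q, A i j p q * β p q) = μ * β i j ^ 2)]
      rw [hN, Finset.mul_sum]
      exact Finset.sum_congr rfl fun i _ => (Finset.mul_sum _ _ _).symm
    have hGterm : (∑ i, ∑ j, (β i j * β i j - β i j * β j i)) = 2 * N := by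
      rw [Finset.sum_congr rfl fun i _ => Finset.sum_congr rfl fun j _ =>
        (show β i j * β i j - β i j * β j i = 2 * β i j ^ 2 by rw [hβ_skew j i]; ring)]
      rw [hN, Finset.mul_sum]
      exact Finset.sum_congr rfl fun i _ => (Finset.mul_sum _ _ _).symm
    rw [hAterm, hGterm, hcA]
    ring
  -- conclude with the key bound
  have hkey := key_bound A' ε hε h1' h2' h3' hB' hK' β hβ_skew hNpos
  rw [hQeq, abs_mul, abs_of_pos hNpos] at hkey
  have h2ε : 2 * ε = Δ - δ := by rw [hεdef]; ring
  rw [h2ε] at hkey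
  exact le_of_mul_le_mul_right hkey hNpos
end

section
/- Let n ≥ 6 and let A be an algebraic curvature tensor on ℝⁿ with δ ≤ R̄ ≤ Δ. Let e₁, …, e₆ ∈ ℝⁿ be pairwise orthonormal vectors and b₁, b₂, b₃ ∈ ℝ, not all zero, with b₁ + b₂ + b₃ = 0, and let β be the skew-symmetric array β_{kl} = ∑_{i=1}^{3} bᵢ ((eᵢ)_k (e_{i+3})_l − (eᵢ)_l (e_{i+3})_k). If μ ∈ ℝ satisfies ∑_{k,l} A_{ijkl} β_{kl} = μ β_{ij} for all i, j, then |μ + (Δ+δ)| ≤ (7/3)(Δ − δ). -/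
open scoped BigOperators InnerProductSpace

noncomputable section

variable {n : ℕ}

def quadQ (A : Fin n → Fin n → Fin n → Fin n → ℝ) (X Y Z W : EuclideanSpace ℝ (Fin n)) : ℝ :=
  ∑ i, ∑ j, ∑ p, ∑ q, A i j p q * X i * Y j * Z p * W q

lemma sum3_cyc (g : Fin n → Fin n → Fin n → ℝ) :
    ∑ a, ∑ b, ∑ c, g a b c = ∑ a, ∑ b, ∑ c, g b c a :=
  calc ∑ a, ∑ b, ∑ c, g a b c = ∑ a, ∑ c, ∑ b, g a b c :=
        Finset.sum_congr rfl fun _ _ => Finset.sum_comm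
    _ = ∑ c, ∑ a, ∑ b, g a b c := Finset.sum_comm

lemma sum4_swap (g : Fin n → Fin n → Fin n → Fin n → ℝ) :
    ∑ i, ∑ j, ∑ p, ∑ q, g i j p q = ∑ i, ∑ j, ∑ p, ∑ q, g p q i j :=
  calc ∑ i, ∑ j, ∑ p, ∑ q, g i j p q
      = ∑ i, ∑ p, ∑ j, ∑ q, g i j p q :=
        Finset.sum_congr rfl fun _ _ => Finset.sum_comm
    _ = ∑ i, ∑ p, ∑ q, ∑ j, g i j p q :=
        Finset.sum_congr rfl fun _ _ => Finset.sum_congr rfl fun _ _ => Finset.sum_comm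
    _ = ∑ p, ∑ i, ∑ q, ∑ j, g i j p q := Finset.sum_comm
    _ = ∑ p, ∑ q, ∑ i, ∑ j, g i j p q :=
        Finset.sum_congr rfl fun _ _ => Finset.sum_comm
variable {A : Fin n → Fin n → Fin n → Fin n → ℝ}

lemma Q_swap12 (hA1 : ∀ i j p q, A i j p q = - A j i p q) (X Y Z W : EuclideanSpace ℝ (Fin n)) :
    quadQ A X Y Z W = - quadQ A Y X Z W := by
  unfold quadQ
  rw [Finset.sum_comm, ← Finset.sum_neg_distrib]
  refine Finset.sum_congr rfl fun j _ => ?_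
  rw [← Finset.sum_neg_distrib]
  refine Finset.sum_congr rfl fun i _ => ?_
  rw [← Finset.sum_neg_distrib]
  refine Finset.sum_congr rfl fun p _ => ?_
  rw [← Finset.sum_neg_distrib]
  refine Finset.sum_congr rfl fun q _ => ?_
  rw [hA1 j i p q]; ring

lemma Q_swap34 (hA2 : ∀ i j p q, A i j p q = - A i j q p) (X Y Z W : EuclideanSpace ℝ (Fin n)) :
    quadQ A X Y Z W = - quadQ A X Y W Z := by
  unfold quadQ
  rw [← Finset.sum_neg_distrib]
  refine Finset.sum_congr rfl fun i _ => ?_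
  rw [← Finset.sum_neg_distrib]
  refine Finset.sum_congr rfl fun j _ => ?_
  rw [Finset.sum_comm, ← Finset.sum_neg_distrib]
  refine Finset.sum_congr rfl fun q _ => ?_
  rw [← Finset.sum_neg_distrib]
  refine Finset.sum_congr rfl fun p _ => ?_
  rw [hA2 i j q p]; ring

lemma Q_pairsym (hA3 : ∀ i j p q, A i j p q = A p q i j) (X Y Z W : EuclideanSpace ℝ (Fin n)) :
    quadQ A X Y Z W = quadQ A Z W X Y := by
  unfold quadQ
  rw [sum4_swap (fun i j p q => A i j p q * Z i * W j * X p * Y q)]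
  refine Finset.sum_congr rfl fun i _ => Finset.sum_congr rfl fun j _ =>
    Finset.sum_congr rfl fun p _ => Finset.sum_congr rfl fun q _ => ?_
  rw [hA3 i j p q]; ring
lemma Q_bianchi (hBianchi : ∀ i j p q, A i j p q + A p i j q + A j p i q = 0)
    (X Y Z W : EuclideanSpace ℝ (Fin n)) :
    quadQ A X Y Z W + quadQ A Z X Y W + quadQ A Y Z X W = 0 := by
  have h2 : quadQ A Z X Y W = ∑ i, ∑ j, ∑ p, ∑ q, A p i j q * X i * Y j * Z p * W q := by
    unfold quadQ
    rw [sum3_cyc (fun a b c => ∑ q, A a b c q * Z a * X b * Y c * W q),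
        sum3_cyc (fun a b c => ∑ q, A b c a q * Z b * X c * Y a * W q)]
    refine Finset.sum_congr rfl fun i _ => Finset.sum_congr rfl fun j _ =>
      Finset.sum_congr rfl fun p _ => Finset.sum_congr rfl fun q _ => by ring
  have h3 : quadQ A Y Z X W = ∑ i, ∑ j, ∑ p, ∑ q, A j p i q * X i * Y j * Z p * W q := by
    unfold quadQ
    rw [sum3_cyc (fun a b c => ∑ q, A a b c q * Y a * Z b * X c * W q)]
    refine Finset.sum_congr rfl fun i _ => Finset.sum_congr rfl fun j _ =>
      Finset.sum_congr rfl fun p _ => Finset.sum_congr rfl fun q _ => by ring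
  rw [h2, h3]
  unfold quadQ
  simp only [← Finset.sum_add_distrib]
  refine Finset.sum_eq_zero fun i _ => Finset.sum_eq_zero fun j _ =>
    Finset.sum_eq_zero fun p _ => Finset.sum_eq_zero fun q _ => ?_
  linear_combination (X i * Y j * Z p * W q) * hBianchi i j p q
lemma Q_smul23 (A : Fin n → Fin n → Fin n → Fin n → ℝ) (t : ℝ) (X Y : EuclideanSpace ℝ (Fin n)) :
    quadQ A X (t • Y) (t • Y) X = t ^ 2 * quadQ A X Y Y X := by
  unfold quadQ
  simp only [Finset.mul_sum]
  refine Finset.sum_congr rfl fun i _ => Finset.sum_congr rfl fun j _ =>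
    Finset.sum_congr rfl fun p _ => Finset.sum_congr rfl fun q _ => ?_
  simp only [PiLp.smul_apply, smul_eq_mul]
  ring

lemma sec_scaled {A : Fin n → Fin n → Fin n → Fin n → ℝ} {δ Δ : ℝ}
    (hsec : ∀ X Y : EuclideanSpace ℝ (Fin n),
      ‖X‖ ^ 2 * ‖Y‖ ^ 2 - ⟪X, Y⟫_ℝ ^ 2 = 1 →
      δ ≤ quadQ A X Y Y X ∧ quadQ A X Y Y X ≤ Δ)
    (X Y : EuclideanSpace ℝ (Fin n)) (c : ℝ) (hc : 0 < c)
    (h : ‖X‖ ^ 2 * ‖Y‖ ^ 2 - ⟪X, Y⟫_ℝ ^ 2 = c) :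
    δ * c ≤ quadQ A X Y Y X ∧ quadQ A X Y Y X ≤ Δ * c := by
  set t : ℝ := (Real.sqrt c)⁻¹ with ht
  have hsq : Real.sqrt c ^ 2 = c := Real.sq_sqrt hc.le
  have hs0 : Real.sqrt c ≠ 0 := by positivity
  have ht2 : t ^ 2 * c = 1 := by
    rw [ht, inv_pow, inv_mul_eq_div, hsq, div_self hc.ne']
  have hcond : ‖X‖ ^ 2 * ‖t • Y‖ ^ 2 - ⟪X, t • Y⟫_ℝ ^ 2 = 1 := by
    rw [norm_smul, real_inner_smul_right, Real.norm_eq_abs, mul_pow, mul_pow, sq_abs]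
    calc ‖X‖ ^ 2 * (t ^ 2 * ‖Y‖ ^ 2) - t ^ 2 * ⟪X, Y⟫_ℝ ^ 2
        = t ^ 2 * (‖X‖ ^ 2 * ‖Y‖ ^ 2 - ⟪X, Y⟫_ℝ ^ 2) := by ring
      _ = 1 := by rw [h, ht2]
  obtain ⟨h1, h2⟩ := hsec X (t • Y) hcond
  rw [Q_smul23] at h1 h2
  have hpos : 0 < t ^ 2 := by
    have : t ^ 2 ≠ 0 := by intro h0; rw [h0, zero_mul] at ht2; norm_num at ht2
    positivity
  have e : t ^ 2 * quadQ A X Y Y X * c = quadQ A X Y Y X := by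
    calc t ^ 2 * quadQ A X Y Y X * c = (t ^ 2 * c) * quadQ A X Y Y X := by ring
      _ = quadQ A X Y Y X := by rw [ht2, one_mul]
  constructor
  · have := mul_le_mul_of_nonneg_right h1 hc.le
    linarith
  · have := mul_le_mul_of_nonneg_right h2 hc.le
    linarith
section addneg
variable (A : Fin n → Fin n → Fin n → Fin n → ℝ) (X X' Y Y' Z Z' W W' : EuclideanSpace ℝ (Fin n))

lemma Q_add1 : quadQ A (X + X') Y Z W = quadQ A X Y Z W + quadQ A X' Y Z W := by
  unfold quadQ
  simp only [← Finset.sum_add_distrib]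
  refine Finset.sum_congr rfl fun i _ => Finset.sum_congr rfl fun j _ =>
    Finset.sum_congr rfl fun p _ => Finset.sum_congr rfl fun q _ => ?_
  simp only [PiLp.add_apply]; ring

lemma Q_add2 : quadQ A X (Y + Y') Z W = quadQ A X Y Z W + quadQ A X Y' Z W := by
  unfold quadQ
  simp only [← Finset.sum_add_distrib]
  refine Finset.sum_congr rfl fun i _ => Finset.sum_congr rfl fun j _ =>
    Finset.sum_congr rfl fun p _ => Finset.sum_congr rfl fun q _ => ?_
  simp only [PiLp.add_apply]; ring

lemma Q_add3 : quadQ A X Y (Z + Z') W = quadQ A X Y Z W + quadQ A X Y Z' W := by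
  unfold quadQ
  simp only [← Finset.sum_add_distrib]
  refine Finset.sum_congr rfl fun i _ => Finset.sum_congr rfl fun j _ =>
    Finset.sum_congr rfl fun p _ => Finset.sum_congr rfl fun q _ => ?_
  simp only [PiLp.add_apply]; ring

lemma Q_add4 : quadQ A X Y Z (W + W') = quadQ A X Y Z W + quadQ A X Y Z W' := by
  unfold quadQ
  simp only [← Finset.sum_add_distrib]
  refine Finset.sum_congr rfl fun i _ => Finset.sum_congr rfl fun j _ =>
    Finset.sum_congr rfl fun p _ => Finset.sum_congr rfl fun q _ => ?_
  simp only [PiLp.add_apply]; ring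

lemma Q_neg1 : quadQ A (-X) Y Z W = - quadQ A X Y Z W := by
  unfold quadQ
  simp only [← Finset.sum_neg_distrib]
  refine Finset.sum_congr rfl fun i _ => Finset.sum_congr rfl fun j _ =>
    Finset.sum_congr rfl fun p _ => Finset.sum_congr rfl fun q _ => ?_
  simp only [PiLp.neg_apply]; ring

lemma Q_neg2 : quadQ A X (-Y) Z W = - quadQ A X Y Z W := by
  unfold quadQ
  simp only [← Finset.sum_neg_distrib]
  refine Finset.sum_congr rfl fun i _ => Finset.sum_congr rfl fun j _ =>
    Finset.sum_congr rfl fun p _ => Finset.sum_congr rfl fun q _ => ?_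
  simp only [PiLp.neg_apply]; ring

lemma Q_neg3 : quadQ A X Y (-Z) W = - quadQ A X Y Z W := by
  unfold quadQ
  simp only [← Finset.sum_neg_distrib]
  refine Finset.sum_congr rfl fun i _ => Finset.sum_congr rfl fun j _ =>
    Finset.sum_congr rfl fun p _ => Finset.sum_congr rfl fun q _ => ?_
  simp only [PiLp.neg_apply]; ring

lemma Q_neg4 : quadQ A X Y Z (-W) = - quadQ A X Y Z W := by
  unfold quadQ
  simp only [← Finset.sum_neg_distrib]
  refine Finset.sum_congr rfl fun i _ => Finset.sum_congr rfl fun j _ =>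
    Finset.sum_congr rfl fun p _ => Finset.sum_congr rfl fun q _ => ?_
  simp only [PiLp.neg_apply]; ring

end addneg
section estimates
variable {A : Fin n → Fin n → Fin n → Fin n → ℝ} {δ Δ : ℝ}
variable (hA1 : ∀ i j p q, A i j p q = - A j i p q)
variable (hA2 : ∀ i j p q, A i j p q = - A i j q p)
variable (hA3 : ∀ i j p q, A i j p q = A p q i j)
variable (hsec : ∀ X Y : EuclideanSpace ℝ (Fin n),
      ‖X‖ ^ 2 * ‖Y‖ ^ 2 - ⟪X, Y⟫_ℝ ^ 2 = 1 →
      δ ≤ quadQ A X Y Y X ∧ quadQ A X Y Y X ≤ Δ)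

include hA1 hA2 hA3 hsec in
lemma Q_mixed (U Y Z : EuclideanSpace ℝ (Fin n)) (s : ℝ) (hs : 0 < s)
    (hU : ⟪U, U⟫_ℝ = s) (hY : ⟪Y, Y⟫_ℝ = 1) (hZ : ⟪Z, Z⟫_ℝ = 1)
    (hUY : ⟪U, Y⟫_ℝ = 0) (hUZ : ⟪U, Z⟫_ℝ = 0) (hYZ : ⟪Y, Z⟫_ℝ = 0) :
    |quadQ A U Y Z U| ≤ (Δ - δ) / 2 * s := by
  have hZY : ⟪Z, Y⟫_ℝ = 0 := by rw [real_inner_comm]; exact hYZ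
  have hsym : quadQ A U Z Y U = quadQ A U Y Z U := by
    calc quadQ A U Z Y U = quadQ A Y U U Z := Q_pairsym hA3 _ _ _ _
      _ = -quadQ A U Y U Z := Q_swap12 hA1 _ _ _ _
      _ = -(-quadQ A U Y Z U) := by rw [← Q_swap34 hA2 U Y U Z]
      _ = quadQ A U Y Z U := neg_neg _
  have c1 : ‖U‖ ^ 2 * ‖Y + Z‖ ^ 2 - ⟪U, Y + Z⟫_ℝ ^ 2 = 2 * s := by
    rw [← real_inner_self_eq_norm_sq, ← real_inner_self_eq_norm_sq]
    simp only [inner_add_left, inner_add_right, hU, hY, hZ, hUY, hUZ, hYZ, hZY]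
    ring
  have c2 : ‖U‖ ^ 2 * ‖Y - Z‖ ^ 2 - ⟪U, Y - Z⟫_ℝ ^ 2 = 2 * s := by
    rw [← real_inner_self_eq_norm_sq, ← real_inner_self_eq_norm_sq]
    simp only [inner_sub_left, inner_sub_right, hU, hY, hZ, hUY, hUZ, hYZ, hZY]
    ring
  have eplus := sec_scaled hsec U (Y + Z) (2 * s) (by linarith) c1
  have eminus := sec_scaled hsec U (Y - Z) (2 * s) (by linarith) c2
  have exp1 : quadQ A U (Y + Z) (Y + Z) U
      = quadQ A U Y Y U + quadQ A U Z Z U + 2 * quadQ A U Y Z U := by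
    simp only [Q_add2, Q_add3, hsym]; ring
  have exp2 : quadQ A U (Y - Z) (Y - Z) U
      = quadQ A U Y Y U + quadQ A U Z Z U - 2 * quadQ A U Y Z U := by
    simp only [sub_eq_add_neg, Q_add2, Q_add3, Q_neg2, Q_neg3, hsym]; ring
  rw [exp1] at eplus
  rw [exp2] at eminus
  rw [abs_le]
  constructor <;> [linarith [eplus.1, eminus.2]; linarith [eplus.2, eminus.1]]

include hA1 hA2 hA3 hsec in
lemma Q_pairmixed (X Y Z W : EuclideanSpace ℝ (Fin n))
    (hXX : ⟪X, X⟫_ℝ = 1) (hYY : ⟪Y, Y⟫_ℝ = 1) (hZZ : ⟪Z, Z⟫_ℝ = 1) (hWW : ⟪W, W⟫_ℝ = 1)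
    (hXY : ⟪X, Y⟫_ℝ = 0) (hXZ : ⟪X, Z⟫_ℝ = 0) (hXW : ⟪X, W⟫_ℝ = 0)
    (hYZ : ⟪Y, Z⟫_ℝ = 0) (hYW : ⟪Y, W⟫_ℝ = 0) (hZW : ⟪Z, W⟫_ℝ = 0) :
    |quadQ A X Y Z W + quadQ A W Y Z X| ≤ Δ - δ := by
  have hWX : ⟪W, X⟫_ℝ = 0 := by rw [real_inner_comm]; exact hXW
  have hWY : ⟪W, Y⟫_ℝ = 0 := by rw [real_inner_comm]; exact hYW
  have hWZ : ⟪W, Z⟫_ℝ = 0 := by rw [real_inner_comm]; exact hZW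
  have hUU1 : ⟪X + W, X + W⟫_ℝ = (2 : ℝ) := by
    simp only [inner_add_left, inner_add_right, hXX, hWW, hXW, hWX]; ring
  have hUU2 : ⟪X - W, X - W⟫_ℝ = (2 : ℝ) := by
    simp only [inner_sub_left, inner_sub_right, hXX, hWW, hXW, hWX]; ring
  have h1 := Q_mixed hA1 hA2 hA3 hsec (X + W) Y Z 2 (by norm_num) hUU1 hYY hZZ
    (by simp only [inner_add_left, hXY, hWY]; ring)
    (by simp only [inner_add_left, hXZ, hWZ]; ring) hYZ
  have h2 := Q_mixed hA1 hA2 hA3 hsec (X - W) Y Z 2 (by norm_num) hUU2 hYY hZZ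
    (by simp only [inner_sub_left, hXY, hWY]; ring)
    (by simp only [inner_sub_left, hXZ, hWZ]; ring) hYZ
  have exp1 : quadQ A (X + W) Y Z (X + W)
      = quadQ A X Y Z X + quadQ A X Y Z W + quadQ A W Y Z X + quadQ A W Y Z W := by
    simp only [Q_add1, Q_add4]; ring
  have exp2 : quadQ A (X - W) Y Z (X - W)
      = quadQ A X Y Z X - quadQ A X Y Z W - quadQ A W Y Z X + quadQ A W Y Z W := by
    simp only [sub_eq_add_neg, Q_add1, Q_add4, Q_neg1, Q_neg4]; ring
  rw [exp1] at h1
  rw [exp2] at h2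
  rw [abs_le] at h1 h2 ⊢
  have hn : (Δ - δ) / 2 * 2 = Δ - δ := by ring
  rw [hn] at h1 h2
  constructor <;> [linarith [h1.1, h2.2]; linarith [h1.2, h2.1]]

include hA1 hA2 hA3 hsec in
lemma Q_berger (hBianchi : ∀ i j p q, A i j p q + A p i j q + A j p i q = 0)
    (X Y Z W : EuclideanSpace ℝ (Fin n))
    (hXX : ⟪X, X⟫_ℝ = 1) (hYY : ⟪Y, Y⟫_ℝ = 1) (hZZ : ⟪Z, Z⟫_ℝ = 1) (hWW : ⟪W, W⟫_ℝ = 1)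
    (hXY : ⟪X, Y⟫_ℝ = 0) (hXZ : ⟪X, Z⟫_ℝ = 0) (hXW : ⟪X, W⟫_ℝ = 0)
    (hYZ : ⟪Y, Z⟫_ℝ = 0) (hYW : ⟪Y, W⟫_ℝ = 0) (hZW : ⟪Z, W⟫_ℝ = 0) :
    |quadQ A X Y Z W| ≤ 2 / 3 * (Δ - δ) := by
  have hZY : ⟪Z, Y⟫_ℝ = 0 := by rw [real_inner_comm]; exact hYZ
  have hWY : ⟪W, Y⟫_ℝ = 0 := by rw [real_inner_comm]; exact hYW
  have hWZ : ⟪W, Z⟫_ℝ = 0 := by rw [real_inner_comm]; exact hZW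
  set a := quadQ A X Y Z W with ha
  set b := quadQ A X Z W Y with hb
  set c := quadQ A X W Y Z with hc
  have habc : a + b + c = 0 := by
    have h0 := Q_bianchi hBianchi Z W X Y
    have e1 : quadQ A Z W X Y = a := by rw [Q_pairsym hA3 Z W X Y]
    have e2 : quadQ A W X Z Y = c := by
      rw [Q_swap12 hA1 W X Z Y, Q_swap34 hA2 X W Z Y, neg_neg]
    rw [e1, e2] at h0
    linarith
  have hab : |a - b| ≤ Δ - δ := by
    have h := Q_pairmixed hA1 hA2 hA3 hsec X Y Z W hXX hYY hZZ hWW hXY hXZ hXW hYZ hYW hZW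
    have e : quadQ A W Y Z X = -b := by
      rw [Q_pairsym hA3 W Y Z X, Q_swap12 hA1 Z X W Y]
    rw [e, ← sub_eq_add_neg] at h
    exact h
  have hbc : |b - c| ≤ Δ - δ := by
    have h := Q_pairmixed hA1 hA2 hA3 hsec X Z W Y hXX hZZ hWW hYY hXZ hXW hXY hZW hZY hWY
    have e : quadQ A Y Z W X = -c := by
      rw [Q_pairsym hA3 Y Z W X, Q_swap12 hA1 W X Y Z]
    rw [e, ← sub_eq_add_neg] at h
    exact h
  have hca : |c - a| ≤ Δ - δ := by
    have h := Q_pairmixed hA1 hA2 hA3 hsec X W Y Z hXX hWW hYY hZZ hXW hXY hXZ hWY hWZ hYZ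
    have e : quadQ A Z W Y X = -a := by
      rw [Q_pairsym hA3 Z W Y X, Q_swap12 hA1 Y X Z W]
    rw [e, ← sub_eq_add_neg] at h
    exact h
  rw [abs_le] at hab hbc hca ⊢
  constructor <;> linarith [hab.1, hab.2, hbc.1, hbc.2, hca.1, hca.2, habc]

end estimates
lemma sum_out2 {α : Type*} [Fintype α] (f : Fin n → Fin n → α → ℝ) :
    ∑ i, ∑ j, ∑ m, f i j m = ∑ m, ∑ i, ∑ j, f i j m :=
  calc ∑ i, ∑ j, ∑ m, f i j m = ∑ i, ∑ m, ∑ j, f i j m :=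
        Finset.sum_congr rfl fun _ _ => Finset.sum_comm
    _ = ∑ m, ∑ i, ∑ j, f i j m := Finset.sum_comm

lemma sum_out4 {α : Type*} [Fintype α] (f : Fin n → Fin n → Fin n → Fin n → α → ℝ) :
    ∑ i, ∑ j, ∑ p, ∑ q, ∑ m, f i j p q m = ∑ m, ∑ i, ∑ j, ∑ p, ∑ q, f i j p q m :=
  calc ∑ i, ∑ j, ∑ p, ∑ q, ∑ m, f i j p q m
      = ∑ i, ∑ j, ∑ m, ∑ p, ∑ q, f i j p q m :=
        Finset.sum_congr rfl fun i _ => Finset.sum_congr rfl fun j _ =>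
          sum_out2 (fun p q m => f i j p q m)
    _ = ∑ m, ∑ i, ∑ j, ∑ p, ∑ q, f i j p q m := sum_out2 _

end

lemma fin3_split (k0 : Fin 3) : ∃ m1 m2 : Fin 3, m1 ≠ k0 ∧ m2 ≠ k0 ∧
    ∀ f : Fin 3 → ℝ, ∑ m, f m = f k0 + f m1 + f m2 := by
  fin_cases k0
  · exact ⟨1, 2, by decide, by decide, fun f => by
      rw [Fin.sum_univ_three]
      rfl⟩
  · exact ⟨0, 2, by decide, by decide, fun f => by
      rw [Fin.sum_univ_three]
      exact (by ring : f 0 + f 1 + f 2 = f 1 + f 0 + f 2)⟩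
  · exact ⟨0, 1, by decide, by decide, fun f => by
      rw [Fin.sum_univ_three]
      exact (by ring : f 0 + f 1 + f 2 = f 2 + f 0 + f 1)⟩

lemma arith_endgame (μ δ Δ bk b1 b2 K Q1 Q2 : ℝ)
    (hsum : bk + b1 + b2 = 0) (h1 : |b1| ≤ |bk|) (h2 : |b2| ≤ |bk|) (hbk : bk ≠ 0)
    (hK1 : δ ≤ K) (hK2 : K ≤ Δ)
    (hQ1 : |Q1| ≤ 2 / 3 * (Δ - δ)) (hQ2 : |Q2| ≤ 2 / 3 * (Δ - δ))
    (heq : μ * bk = 2 * (bk * (-K) + b1 * Q1 + b2 * Q2)) :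
    |μ + (Δ + δ)| ≤ 7 / 3 * (Δ - δ) := by
  have hΔδ : 0 ≤ Δ - δ := by linarith
  have habs : |b1| + |b2| ≤ |bk| := by
    rcases abs_cases bk with ⟨ek, sk⟩ | ⟨ek, sk⟩ <;>
      rcases abs_cases b1 with ⟨e1, s1⟩ | ⟨e1, s1⟩ <;>
        rcases abs_cases b2 with ⟨e2, s2⟩ | ⟨e2, s2⟩ <;> linarith
  have key : (μ + (Δ + δ)) * bk = bk * ((Δ + δ) - 2 * K) + 2 * (b1 * Q1 + b2 * Q2) := by
    linear_combination heq
  have t1 : |bk * ((Δ + δ) - 2 * K)| ≤ |bk| * (Δ - δ) := by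
    rw [abs_mul]
    refine mul_le_mul_of_nonneg_left ?_ (abs_nonneg bk)
    rw [abs_le]; constructor <;> linarith
  have t2 : |b1 * Q1| ≤ |b1| * (2 / 3 * (Δ - δ)) := by
    rw [abs_mul]; exact mul_le_mul_of_nonneg_left hQ1 (abs_nonneg b1)
  have t3 : |b2 * Q2| ≤ |b2| * (2 / 3 * (Δ - δ)) := by
    rw [abs_mul]; exact mul_le_mul_of_nonneg_left hQ2 (abs_nonneg b2)
  have t4 : (|b1| + |b2|) * (2 / 3 * (Δ - δ)) ≤ |bk| * (2 / 3 * (Δ - δ)) :=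
    mul_le_mul_of_nonneg_right habs (by linarith)
  have chain : |(μ + (Δ + δ)) * bk| ≤ 7 / 3 * (Δ - δ) * |bk| := by
    rw [key]
    calc |bk * ((Δ + δ) - 2 * K) + 2 * (b1 * Q1 + b2 * Q2)|
        ≤ |bk * ((Δ + δ) - 2 * K)| + |2 * (b1 * Q1 + b2 * Q2)| := abs_add_le _ _
      _ ≤ |bk| * (Δ - δ) + 2 * (|b1 * Q1| + |b2 * Q2|) := by
          have h2a : |2 * (b1 * Q1 + b2 * Q2)| = 2 * |b1 * Q1 + b2 * Q2| := by
            rw [abs_mul, abs_two]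
          rw [h2a]
          linarith [abs_add_le (b1 * Q1) (b2 * Q2), t1]
      _ ≤ 7 / 3 * (Δ - δ) * |bk| := by nlinarith
  have hpos : 0 < |bk| := abs_pos.mpr hbk
  have := (abs_mul (μ + (Δ + δ)) bk).symm
  calc |μ + (Δ + δ)| = |(μ + (Δ + δ)) * bk| / |bk| := by
        rw [abs_mul, mul_div_cancel_right₀ _ hpos.ne']
    _ ≤ 7 / 3 * (Δ - δ) := by
        rw [div_le_iff₀ hpos]
        exact chain

theorem Rhat_eigenvalue_estimate_traceless_canonical_form
    (n : ℕ) (hn : 6 ≤ n)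
    (A : Fin n → Fin n → Fin n → Fin n → ℝ) (δ Δ : ℝ)
    (hA1 : ∀ i j p q, A i j p q = - A j i p q)
    (hA2 : ∀ i j p q, A i j p q = - A i j q p)
    (hA3 : ∀ i j p q, A i j p q = A p q i j)
    (hBianchi : ∀ i j p q, A i j p q + A p i j q + A j p i q = 0)
    (hsec : ∀ X Y : EuclideanSpace ℝ (Fin n),
      ‖X‖ ^ 2 * ‖Y‖ ^ 2 - ⟪X, Y⟫_ℝ ^ 2 = 1 →
      δ ≤ (∑ i, ∑ j, ∑ p, ∑ q, A i j p q * X i * Y j * Y p * X q) ∧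
      (∑ i, ∑ j, ∑ p, ∑ q, A i j p q * X i * Y j * Y p * X q) ≤ Δ)
    (e : Fin 6 → EuclideanSpace ℝ (Fin n))
    (he : ∀ i j : Fin 6, ⟪e i, e j⟫_ℝ = if i = j then 1 else 0)
    (b : Fin 3 → ℝ)
    (hb_ne : ∃ i, b i ≠ 0)
    (hb_sum : ∑ i, b i = 0)
    (β : Fin n → Fin n → ℝ)
    (hβ : ∀ k l, β k l = ∑ i : Fin 3,
      b i * (e (Fin.castAdd 3 i) k * e (Fin.addNat i 3) l
           - e (Fin.castAdd 3 i) l * e (Fin.addNat i 3) k))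
    (μ : ℝ)
    (heig : ∀ i j, ∑ p, ∑ q, A i j p q * β p q = μ * β i j) :
    |μ + (Δ + δ)| ≤ (7 / 3) * (Δ - δ) := by
  classical
  have hsecQ : ∀ X Y : EuclideanSpace ℝ (Fin n),
      ‖X‖ ^ 2 * ‖Y‖ ^ 2 - ⟪X, Y⟫_ℝ ^ 2 = 1 →
      δ ≤ quadQ A X Y Y X ∧ quadQ A X Y Y X ≤ Δ := hsec
  have he' : ∀ a c : Fin 6, ∑ i, e a i * e c i = (if a = c then (1 : ℝ) else 0) := by
    intro a c
    have h := he a c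
    rw [PiLp.inner_apply] at h
    simpa [mul_comm] using h
  have hself : ∀ a : Fin 6, ⟪e a, e a⟫_ℝ = 1 := fun a => by rw [he]; simp
  have hdiff : ∀ a c : Fin 6, a ≠ c → ⟪e a, e c⟫_ℝ = 0 := fun a c h => by
    rw [he]; simp [h]
  have hval2 : ∀ m : Fin 3, (Fin.addNat m 3).val = m.val + 3 := fun m => rfl
  have hcc : ∀ m k : Fin 3, (Fin.castAdd 3 m = Fin.castAdd 3 k) ↔ m = k := by
    intro m k
    simp only [Fin.ext_iff, Fin.coe_castAdd]
  have haa : ∀ m k : Fin 3, (Fin.addNat m 3 = Fin.addNat k 3) ↔ m = k := by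
    intro m k
    simp only [Fin.ext_iff, hval2]
    omega
  have hca : ∀ m k : Fin 3, Fin.castAdd 3 m ≠ Fin.addNat k 3 := by
    intro m k
    simp only [ne_eq, Fin.ext_iff, Fin.coe_castAdd, hval2]
    omega
  have hcne : ∀ m k : Fin 3, m ≠ k → Fin.castAdd 3 m ≠ Fin.castAdd 3 k :=
    fun m k hmk h => hmk ((hcc m k).mp h)
  have hane : ∀ m k : Fin 3, m ≠ k → Fin.addNat m 3 ≠ Fin.addNat k 3 :=
    fun m k hmk h => hmk ((haa m k).mp h)
  -- contraction of β with the frame 2-plane k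
  have stepA : ∀ k : Fin 3,
      ∑ i, ∑ j, e (Fin.castAdd 3 k) i * e (Fin.addNat k 3) j * β i j = b k := by
    intro k
    calc ∑ i, ∑ j, e (Fin.castAdd 3 k) i * e (Fin.addNat k 3) j * β i j
        = ∑ m : Fin 3, ∑ i, ∑ j, e (Fin.castAdd 3 k) i * e (Fin.addNat k 3) j *
            (b m * (e (Fin.castAdd 3 m) i * e (Fin.addNat m 3) j
                  - e (Fin.castAdd 3 m) j * e (Fin.addNat m 3) i)) := by
          simp only [hβ, Finset.mul_sum]
          exact sum_out2 _
      _ = ∑ m : Fin 3, b m *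
            ((∑ i, e (Fin.castAdd 3 k) i * e (Fin.castAdd 3 m) i) *
               (∑ j, e (Fin.addNat k 3) j * e (Fin.addNat m 3) j)
           - (∑ i, e (Fin.castAdd 3 k) i * e (Fin.addNat m 3) i) *
               (∑ j, e (Fin.addNat k 3) j * e (Fin.castAdd 3 m) j)) := by
          refine Finset.sum_congr rfl fun m _ => ?_
          rw [Finset.sum_mul_sum, Finset.sum_mul_sum]
          simp only [← Finset.sum_sub_distrib, Finset.mul_sum]
          exact Finset.sum_congr rfl fun i _ => Finset.sum_congr rfl fun j _ => by ring
      _ = b k := by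
          rw [Finset.sum_eq_single k]
          · simp [he', hca k k, Ne.symm (hca k k)]
          · intro m _ hmk
            simp [he', hca, hcne k m (Ne.symm hmk), hane k m (Ne.symm hmk),
              Ne.symm (hca k m), Ne.symm (hca m k)]
          · intro h
            exact absurd (Finset.mem_univ k) h
  -- contraction of the curvature action with the frame 2-plane k
  have stepB : ∀ k : Fin 3,
      ∑ i, ∑ j, e (Fin.castAdd 3 k) i * e (Fin.addNat k 3) j * (∑ p, ∑ q, A i j p q * β p q)
        = ∑ m : Fin 3, b m *
            (quadQ A (e (Fin.castAdd 3 k)) (e (Fin.addNat k 3)) (e (Fin.castAdd 3 m)) (e (Fin.addNat m 3))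
           - quadQ A (e (Fin.castAdd 3 k)) (e (Fin.addNat k 3)) (e (Fin.addNat m 3)) (e (Fin.castAdd 3 m))) := by
    intro k
    calc ∑ i, ∑ j, e (Fin.castAdd 3 k) i * e (Fin.addNat k 3) j * (∑ p, ∑ q, A i j p q * β p q)
        = ∑ m : Fin 3, ∑ i, ∑ j, ∑ p, ∑ q,
            (b m * (A i j p q * e (Fin.castAdd 3 k) i * e (Fin.addNat k 3) j *
              (e (Fin.castAdd 3 m) p * e (Fin.addNat m 3) q
             - e (Fin.castAdd 3 m) q * e (Fin.addNat m 3) p))) := by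
          simp only [hβ, Finset.mul_sum]
          rw [sum_out4]
          refine Finset.sum_congr rfl fun m _ => Finset.sum_congr rfl fun i _ =>
            Finset.sum_congr rfl fun j _ => Finset.sum_congr rfl fun p _ =>
              Finset.sum_congr rfl fun q _ => by ring
      _ = _ := by
          refine Finset.sum_congr rfl fun m _ => ?_
          simp only [quadQ, ← Finset.sum_sub_distrib, Finset.mul_sum]
          exact Finset.sum_congr rfl fun i _ => Finset.sum_congr rfl fun j _ =>
            Finset.sum_congr rfl fun p _ => Finset.sum_congr rfl fun q _ => by ring
  -- eigenvalue identity contracted on the frame 2-plane k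
  have main_k : ∀ k : Fin 3, μ * b k = 2 * ∑ m : Fin 3, b m *
      quadQ A (e (Fin.castAdd 3 k)) (e (Fin.addNat k 3)) (e (Fin.castAdd 3 m)) (e (Fin.addNat m 3)) := by
    intro k
    have h1 : ∑ i, ∑ j, e (Fin.castAdd 3 k) i * e (Fin.addNat k 3) j *
        (∑ p, ∑ q, A i j p q * β p q) = μ * b k := by
      simp only [heig]
      calc ∑ i, ∑ j, e (Fin.castAdd 3 k) i * e (Fin.addNat k 3) j * (μ * β i j)
          = μ * ∑ i, ∑ j, e (Fin.castAdd 3 k) i * e (Fin.addNat k 3) j * β i j := by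
            simp only [Finset.mul_sum]
            exact Finset.sum_congr rfl fun i _ => Finset.sum_congr rfl fun j _ => by ring
        _ = μ * b k := by rw [stepA k]
    have h2 := stepB k
    rw [h1] at h2
    have h3 : ∀ m : Fin 3,
        quadQ A (e (Fin.castAdd 3 k)) (e (Fin.addNat k 3)) (e (Fin.addNat m 3)) (e (Fin.castAdd 3 m))
          = - quadQ A (e (Fin.castAdd 3 k)) (e (Fin.addNat k 3)) (e (Fin.castAdd 3 m)) (e (Fin.addNat m 3)) :=
      fun m => Q_swap34 hA2 _ _ _ _
    simp only [h3, sub_neg_eq_add] at h2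
    rw [h2, Finset.mul_sum]
    exact Finset.sum_congr rfl fun m _ => by ring
  -- pick the index with largest |b|
  obtain ⟨k0, hk0⟩ : ∃ k0 : Fin 3, ∀ m, |b m| ≤ |b k0| := by
    obtain ⟨k0, -, h⟩ := Finset.exists_max_image Finset.univ (fun m => |b m|) ⟨0, Finset.mem_univ 0⟩
    exact ⟨k0, fun m => h m (Finset.mem_univ m)⟩
  have hbk0 : b k0 ≠ 0 := by
    obtain ⟨i, hi⟩ := hb_ne
    intro h0
    have := hk0 i
    rw [h0, abs_zero] at this
    exact hi (abs_nonpos_iff.mp this)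
  -- diagonal sectional curvature
  have hKb := sec_scaled hsecQ (e (Fin.castAdd 3 k0)) (e (Fin.addNat k0 3)) 1 one_pos (by
    rw [← real_inner_self_eq_norm_sq, ← real_inner_self_eq_norm_sq,
      hself, hself, hdiff _ _ (hca k0 k0)]
    norm_num)
  have hK1 : δ ≤ quadQ A (e (Fin.castAdd 3 k0)) (e (Fin.addNat k0 3))
      (e (Fin.addNat k0 3)) (e (Fin.castAdd 3 k0)) := by
    have := hKb.1; linarith
  have hK2 : quadQ A (e (Fin.castAdd 3 k0)) (e (Fin.addNat k0 3))
      (e (Fin.addNat k0 3)) (e (Fin.castAdd 3 k0)) ≤ Δ := by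
    have := hKb.2; linarith
  have hQ00 : quadQ A (e (Fin.castAdd 3 k0)) (e (Fin.addNat k0 3))
      (e (Fin.castAdd 3 k0)) (e (Fin.addNat k0 3))
      = - quadQ A (e (Fin.castAdd 3 k0)) (e (Fin.addNat k0 3))
          (e (Fin.addNat k0 3)) (e (Fin.castAdd 3 k0)) := Q_swap34 hA2 _ _ _ _
  -- Berger estimate for the off-diagonal terms
  have hberg : ∀ m : Fin 3, m ≠ k0 →
      |quadQ A (e (Fin.castAdd 3 k0)) (e (Fin.addNat k0 3))
        (e (Fin.castAdd 3 m)) (e (Fin.addNat m 3))| ≤ 2 / 3 * (Δ - δ) := by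
    intro m hm
    exact Q_berger hA1 hA2 hA3 hsecQ hBianchi _ _ _ _
      (hself _) (hself _) (hself _) (hself _)
      (hdiff _ _ (hca k0 k0))
      (hdiff _ _ (hcne k0 m (Ne.symm hm)))
      (hdiff _ _ (hca k0 m))
      (hdiff _ _ (Ne.symm (hca m k0)))
      (hdiff _ _ (hane k0 m (Ne.symm hm)))
      (hdiff _ _ (hca m m))
  obtain ⟨m1, m2, h1k, h2k, hsplit⟩ := fin3_split k0
  have mainid := main_k k0
  rw [hsplit (fun m => b m *
      quadQ A (e (Fin.castAdd 3 k0)) (e (Fin.addNat k0 3))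
        (e (Fin.castAdd 3 m)) (e (Fin.addNat m 3)))] at mainid
  have hsumb : b k0 + b m1 + b m2 = 0 := by
    have := hb_sum
    rwa [hsplit b] at this
  exact arith_endgame μ δ Δ (b k0) (b m1) (b m2)
    (quadQ A (e (Fin.castAdd 3 k0)) (e (Fin.addNat k0 3))
      (e (Fin.addNat k0 3)) (e (Fin.castAdd 3 k0)))
    (quadQ A (e (Fin.castAdd 3 k0)) (e (Fin.addNat k0 3))
      (e (Fin.castAdd 3 m1)) (e (Fin.addNat m1 3)))
    (quadQ A (e (Fin.castAdd 3 k0)) (e (Fin.addNat k0 3))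
      (e (Fin.castAdd 3 m2)) (e (Fin.addNat m2 3)))
    hsumb (hk0 m1) (hk0 m2) hbk0 hK1 hK2
    (hberg m1 h1k) (hberg m2 h2k)
    (by linear_combination mainid + (2 * b k0) * hQ00)
end

section
/- Let A be an algebraic curvature tensor on ℝⁿ with δ ≤ R̄ ≤ Δ. If h = (h_{ij}) is a nonzero symmetric array and r₀ ∈ ℝ satisfies ∑_{k,l} A_{kilj} h_{kl} − ((δ+Δ)/2)(h_{ij} − (∑_m h_{mm}) δ_{ij}) = r₀ h_{ij} for all i, j (i.e. h is an eigenvector of R̊₀ = R̊ − ((δ+Δ)/4)(g⊼g)̊ on symmetric 2-tensors with eigenvalue r₀), then |r₀| ≤ ((n−1)/2)(Δ − δ). -/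
open scoped BigOperators InnerProductSpace

private lemma sum4_tuple {α : Type*} [Fintype α] (f : α → α → α → α → ℝ) :
    (∑ i, ∑ j, ∑ p, ∑ q, f i j p q)
      = ∑ x : α × α × α × α, f x.1 x.2.1 x.2.2.1 x.2.2.2 := by
  simp only [Fintype.sum_prod_type]

private lemma sum4_reindex {α : Type*} [Fintype α] (f : α → α → α → α → ℝ)
    (σ : α × α × α × α → α × α × α × α) (hσ : Function.Bijective σ) :
    (∑ i, ∑ j, ∑ p, ∑ q,
        f (σ (i,j,p,q)).1 (σ (i,j,p,q)).2.1 (σ (i,j,p,q)).2.2.1 (σ (i,j,p,q)).2.2.2)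
      = ∑ i, ∑ j, ∑ p, ∑ q, f i j p q := by
  rw [sum4_tuple, sum4_tuple f]
  exact Fintype.sum_bijective σ hσ _ _ (fun x => rfl)

theorem Rcirc0_eigenvalue_estimate
    (n : ℕ)
    (A : Fin n → Fin n → Fin n → Fin n → ℝ) (δ Δ : ℝ)
    (hA1 : ∀ i j p q, A i j p q = - A j i p q)
    (hA2 : ∀ i j p q, A i j p q = - A i j q p)
    (hA3 : ∀ i j p q, A i j p q = A p q i j)
    (hBianchi : ∀ i j p q, A i j p q + A p i j q + A j p i q = 0)
    (hsec : ∀ X Y : EuclideanSpace ℝ (Fin n),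
      ‖X‖ ^ 2 * ‖Y‖ ^ 2 - ⟪X, Y⟫_ℝ ^ 2 = 1 →
      δ ≤ (∑ i, ∑ j, ∑ p, ∑ q, A i j p q * X i * Y j * Y p * X q) ∧
      (∑ i, ∑ j, ∑ p, ∑ q, A i j p q * X i * Y j * Y p * X q) ≤ Δ)
    (h : Fin n → Fin n → ℝ) (r₀ : ℝ)
    (hsymm : ∀ i j, h i j = h j i)
    (h_ne : h ≠ 0)
    (heig : ∀ i j,
      (∑ p, ∑ q, A p i q j * h p q)
        - ((δ + Δ) / 2) * (h i j - (∑ m, h m m) * (if i = j then (1 : ℝ) else 0))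
        = r₀ * h i j) :
    |r₀| ≤ (((n : ℝ) - 1) / 2) * (Δ - δ) := by
  classical
  have hex : ∃ i j, h i j ≠ 0 := by
    by_contra hc
    push_neg at hc
    exact h_ne (funext fun i => funext fun j => hc i j)
  obtain ⟨i0, j0, hij0⟩ := hex
  rcases Nat.lt_or_ge n 2 with hn | hn
  · interval_cases n
    · exact i0.elim0
    · -- n = 1
      have hA0 : A 0 0 0 0 = 0 := by have := hA1 0 0 0 0; linarith
      have h00 : h 0 0 ≠ 0 := by
        have : i0 = 0 := Subsingleton.elim _ _
        have : j0 = 0 := Subsingleton.elim _ _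
        simpa [Subsingleton.elim i0 0, Subsingleton.elim j0 0] using hij0
      have hkey := heig 0 0
      simp [Fin.sum_univ_one, hA0] at hkey
      rcases hkey with h1 | h1
      · simp [h1]
      · exact absurd h1 h00
  · -- main case n ≥ 2
    set c : ℝ := (δ + Δ) / 2 with hcdef
    set K : ℝ := (Δ - δ) / 2 with hKdef
    let M : Matrix (Fin n) (Fin n) ℝ := Matrix.of h
    have hM : M.IsHermitian := by
      ext i j
      simpa [M, Matrix.conjTranspose_apply] using (hsymm j i)
    set v : Fin n → EuclideanSpace ℝ (Fin n) := fun a => hM.eigenvectorBasis a with hv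
    set lam : Fin n → ℝ := hM.eigenvalues with hlam
    have horth : ∀ a b, (∑ x, v a x * v b x) = if a = b then (1:ℝ) else 0 := by
      intro a b
      have h1 := orthonormal_iff_ite.mp hM.eigenvectorBasis.orthonormal a b
      rw [PiLp.inner_apply] at h1
      simpa [RCLike.inner_apply, hv, mul_comm] using h1
    have heigvec : ∀ a p, (∑ q, h p q * v a q) = lam a * v a p := by
      intro a p
      have h1 := congrFun (hM.mulVec_eigenvectorBasis a) p
      simpa [Matrix.mulVec, dotProduct, M, hv, hlam] using h1
    have hdelta : ∀ q x, (∑ a, v a q * v a x) = if q = x then (1:ℝ) else 0 := by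
      intro q x
      have hrepr := hM.eigenvectorBasis.sum_repr (EuclideanSpace.single q (1:ℝ))
      have h2 : (∑ a, (hM.eigenvectorBasis.repr (EuclideanSpace.single q (1:ℝ)) a)
          • (hM.eigenvectorBasis a)) x = EuclideanSpace.single q (1:ℝ) x := by rw [hrepr]
      rw [WithLp.ofLp_sum, Finset.sum_apply] at h2
      simp only [PiLp.smul_apply, smul_eq_mul, OrthonormalBasis.repr_apply_apply,
        EuclideanSpace.inner_single_right, map_one, one_mul, EuclideanSpace.single_apply,
        starRingEnd_apply, star_trivial] at h2
      simp only [hv]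
      rw [h2]
      simp [eq_comm]
    have hdecomp : ∀ p q, h p q = ∑ a, lam a * (v a p * v a q) := by
      intro p q
      calc h p q = ∑ x, h p x * (if q = x then (1:ℝ) else 0) := by
            simp [mul_ite]
        _ = ∑ x, h p x * ∑ a, v a q * v a x := by
            refine Finset.sum_congr rfl fun x _ => by rw [hdelta]
        _ = ∑ x, ∑ a, v a q * (h p x * v a x) := by
            refine Finset.sum_congr rfl fun x _ => ?_
            rw [Finset.mul_sum]
            exact Finset.sum_congr rfl fun a _ => by ring
        _ = ∑ a, ∑ x, v a q * (h p x * v a x) := Finset.sum_comm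
        _ = ∑ a, v a q * ∑ x, h p x * v a x := by
            refine Finset.sum_congr rfl fun a _ => (Finset.mul_sum _ _ _).symm
        _ = ∑ a, lam a * (v a p * v a q) := by
            refine Finset.sum_congr rfl fun a _ => ?_
            rw [heigvec a p]; ring
    -- generic contraction
    have hpull : ∀ (g : Fin n → Fin n → ℝ),
        (∑ i, ∑ j, g i j * h i j)
          = ∑ a, lam a * (∑ i, ∑ j, g i j * (v a i * v a j)) := by
      intro g
      calc ∑ i, ∑ j, g i j * h i j
          = ∑ i, ∑ j, ∑ a, lam a * (g i j * (v a i * v a j)) := by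
            refine Finset.sum_congr rfl fun i _ => Finset.sum_congr rfl fun j _ => ?_
            rw [hdecomp i j, Finset.mul_sum]
            exact Finset.sum_congr rfl fun a _ => by ring
        _ = ∑ i, ∑ a, ∑ j, lam a * (g i j * (v a i * v a j)) := by
            refine Finset.sum_congr rfl fun i _ => Finset.sum_comm
        _ = ∑ a, ∑ i, ∑ j, lam a * (g i j * (v a i * v a j)) := Finset.sum_comm
        _ = ∑ a, lam a * (∑ i, ∑ j, g i j * (v a i * v a j)) := by
            refine Finset.sum_congr rfl fun a _ => ?_
            rw [Finset.mul_sum]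
            exact Finset.sum_congr rfl fun i _ => (Finset.mul_sum _ _ _).symm
    have hquad : ∀ a, (∑ i, ∑ j, h i j * (v a i * v a j)) = lam a := by
      intro a
      calc ∑ i, ∑ j, h i j * (v a i * v a j)
          = ∑ i, v a i * ∑ j, h i j * v a j := by
            refine Finset.sum_congr rfl fun i _ => ?_
            rw [Finset.mul_sum]
            exact Finset.sum_congr rfl fun j _ => by ring
        _ = ∑ i, v a i * (lam a * v a i) := by
            refine Finset.sum_congr rfl fun i _ => by rw [heigvec a i]
        _ = lam a * ∑ i, v a i * v a i := by
            rw [Finset.mul_sum]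
            exact Finset.sum_congr rfl fun i _ => by ring
        _ = lam a := by rw [horth a a]; simp
    set N : ℝ := ∑ i, ∑ j, h i j * h i j with hNdef
    set T : ℝ := ∑ m, h m m with hTdef
    have E4 : N = ∑ a, lam a * lam a := by
      rw [hNdef, hpull h]
      exact Finset.sum_congr rfl fun a _ => by rw [hquad a]
    have E5 : T = ∑ a, lam a := by
      calc T = ∑ m, ∑ a, lam a * (v a m * v a m) := by
            exact Finset.sum_congr rfl fun m _ => hdecomp m m
        _ = ∑ a, ∑ m, lam a * (v a m * v a m) := Finset.sum_comm
        _ = ∑ a, lam a := by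
            refine Finset.sum_congr rfl fun a _ => ?_
            rw [← Finset.mul_sum, horth a a]
            simp
    set W : Fin n → Fin n → ℝ := fun a b =>
      ∑ i, ∑ j, ∑ p, ∑ q, A p i q j * (v a p * v a q) * (v b i * v b j) with hWdef
    set QA : ℝ := ∑ i, ∑ j, (∑ p, ∑ q, A p i q j * h p q) * h i j with hQAdef
    -- E1 : QA as double sum of W
    have E1 : QA = ∑ b, ∑ a, lam b * (lam a * W a b) := by
      have step1 : ∀ i j, (∑ p, ∑ q, A p i q j * h p q)
          = ∑ a, lam a * (∑ p, ∑ q, A p i q j * (v a p * v a q)) := fun i j =>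
        hpull (fun p q => A p i q j)
      have step2 : QA = ∑ b, lam b *
          (∑ i, ∑ j, (∑ a, lam a * (∑ p, ∑ q, A p i q j * (v a p * v a q)))
            * (v b i * v b j)) := by
        rw [hQAdef]
        rw [show (∑ i, ∑ j, (∑ p, ∑ q, A p i q j * h p q) * h i j)
            = ∑ i, ∑ j, (∑ a, lam a * (∑ p, ∑ q, A p i q j * (v a p * v a q))) * h i j
          from Finset.sum_congr rfl fun i _ => Finset.sum_congr rfl fun j _ => by
            rw [step1 i j]]
        exact hpull _
      rw [step2]
      refine Finset.sum_congr rfl fun b _ => ?_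
      have hinner : (∑ i, ∑ j, (∑ a, lam a * (∑ p, ∑ q, A p i q j * (v a p * v a q)))
            * (v b i * v b j)) = ∑ a, lam a * W a b := by
        calc (∑ i, ∑ j, (∑ a, lam a * (∑ p, ∑ q, A p i q j * (v a p * v a q)))
              * (v b i * v b j))
            = ∑ i, ∑ j, ∑ a, (lam a * (∑ p, ∑ q, A p i q j * (v a p * v a q)))
              * (v b i * v b j) := by
              refine Finset.sum_congr rfl fun i _ => Finset.sum_congr rfl fun j _ =>
                Finset.sum_mul _ _ _
          _ = ∑ i, ∑ a, ∑ j, (lam a * (∑ p, ∑ q, A p i q j * (v a p * v a q)))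
              * (v b i * v b j) := by
              refine Finset.sum_congr rfl fun i _ => Finset.sum_comm
          _ = ∑ a, ∑ i, ∑ j, (lam a * (∑ p, ∑ q, A p i q j * (v a p * v a q)))
              * (v b i * v b j) := Finset.sum_comm
          _ = ∑ a, lam a * W a b := by
              refine Finset.sum_congr rfl fun a _ => ?_
              have hWab : W a b = ∑ i, ∑ j, ∑ p, ∑ q,
                  A p i q j * (v a p * v a q) * (v b i * v b j) := rfl
              rw [hWab, Finset.mul_sum]
              refine Finset.sum_congr rfl fun i _ => ?_
              rw [Finset.mul_sum]
              refine Finset.sum_congr rfl fun j _ => ?_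
              have hfac : (∑ p, ∑ q, A p i q j * (v a p * v a q)) * (v b i * v b j)
                  = ∑ p, ∑ q, A p i q j * (v a p * v a q) * (v b i * v b j) := by
                rw [Finset.sum_mul]
                exact Finset.sum_congr rfl fun p _ => Finset.sum_mul _ _ _
              rw [← hfac]
              ring
      rw [hinner, Finset.mul_sum]
    -- E2 : W a a = 0
    have E2 : ∀ a, W a a = 0 := by
      intro a
      have hbij : Function.Bijective (fun x : Fin n × Fin n × Fin n × Fin n =>
          ((x.2.2.1, x.2.1, x.1, x.2.2.2) : Fin n × Fin n × Fin n × Fin n)) := by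
        refine Finite.injective_iff_bijective.mp ?_
        rintro ⟨a1,b1,c1,d1⟩ ⟨a2,b2,c2,d2⟩ hxy
        simp only [Prod.mk.injEq] at hxy
        obtain ⟨h1, h2, h3, h4⟩ := hxy
        subst h1; subst h2; subst h3; subst h4; rfl
      have hre := sum4_reindex
        (fun i j p q => A p i q j * (v a p * v a q) * (v a i * v a j)) _ hbij
      dsimp only at hre
      have h2 : (∑ i, ∑ j, ∑ p, ∑ q, A i p q j * (v a i * v a q) * (v a p * v a j))
          = ∑ i, ∑ j, ∑ p, ∑ q, -(A p i q j * (v a p * v a q) * (v a i * v a j)) := by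
        refine Finset.sum_congr rfl fun i _ => Finset.sum_congr rfl fun j _ =>
          Finset.sum_congr rfl fun p _ => Finset.sum_congr rfl fun q _ => ?_
        rw [hA1 i p q j]; ring
      rw [h2] at hre
      simp only [Finset.sum_neg_distrib] at hre
      have hWa : W a a = ∑ i, ∑ j, ∑ p, ∑ q,
          A p i q j * (v a p * v a q) * (v a i * v a j) := rfl
      rw [hWa]
      linarith [hre]
    -- E3 : off-diagonal bound
    have E3 : ∀ a b, a ≠ b → |W a b + c| ≤ K := by
      intro a b hab
      have hbij : Function.Bijective (fun x : Fin n × Fin n × Fin n × Fin n =>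
          ((x.2.2.1, x.1, x.2.1, x.2.2.2) : Fin n × Fin n × Fin n × Fin n)) := by
        refine Finite.injective_iff_bijective.mp ?_
        rintro ⟨a1,b1,c1,d1⟩ ⟨a2,b2,c2,d2⟩ hxy
        simp only [Prod.mk.injEq] at hxy
        obtain ⟨h1, h2, h3, h4⟩ := hxy
        subst h1; subst h2; subst h3; subst h4; rfl
      have hre := sum4_reindex
        (fun i j p q => A i j p q * v a i * v b j * v b p * v a q) _ hbij
      dsimp only at hre
      have h2 : (∑ i, ∑ j, ∑ p, ∑ q, A p i j q * v a p * v b i * v b j * v a q)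
          = ∑ i, ∑ j, ∑ p, ∑ q, -(A p i q j * (v a p * v a q) * (v b i * v b j)) := by
        refine Finset.sum_congr rfl fun i _ => Finset.sum_congr rfl fun j _ =>
          Finset.sum_congr rfl fun p _ => Finset.sum_congr rfl fun q _ => ?_
        rw [show A p i j q = - A p i q j by linarith [hA2 p i q j]]
        ring
      rw [h2] at hre
      simp only [Finset.sum_neg_distrib] at hre
      have hWT : W a b = -(∑ i, ∑ j, ∑ p, ∑ q,
          A i j p q * v a i * v b j * v b p * v a q) := by
        have hWb : W a b = ∑ i, ∑ j, ∑ p, ∑ q,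
            A p i q j * (v a p * v a q) * (v b i * v b j) := rfl
        rw [hWb]; linarith [hre]
      have hnorm : ∀ x : Fin n, ‖v x‖ = 1 := fun x =>
        hM.eigenvectorBasis.orthonormal.1 x
      have hinner : ⟪v a, v b⟫_ℝ = 0 := by
        have h1 := orthonormal_iff_ite.mp hM.eigenvectorBasis.orthonormal a b
        simpa [hv, hab] using h1
      have hplane : ‖v a‖ ^ 2 * ‖v b‖ ^ 2 - ⟪v a, v b⟫_ℝ ^ 2 = 1 := by
        rw [hnorm a, hnorm b, hinner]; norm_num
      obtain ⟨hlo, hhi⟩ := hsec (v a) (v b) hplane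
      rw [hWT, abs_le]
      constructor <;> simp only [hKdef, hcdef] <;> linarith
    -- key algebraic identity from heig
    have key1 : QA = c * N - c * T ^ 2 + r₀ * N := by
      have hpoint : ∀ i j, (∑ p, ∑ q, A p i q j * h p q) * h i j
          = c * (h i j * h i j) - c * T * ((if i = j then (1:ℝ) else 0) * h i j)
            + r₀ * (h i j * h i j) := by
        intro i j
        have hh := heig i j
        have hP : (∑ p, ∑ q, A p i q j * h p q)
            = c * (h i j - T * (if i = j then (1:ℝ) else 0)) + r₀ * h i j := by
          linarith [hh]
        rw [hP]; ring
      have hQ2 : QA = ∑ i, ∑ j, (c * (h i j * h i j)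
          - c * T * ((if i = j then (1:ℝ) else 0) * h i j)
          + r₀ * (h i j * h i j)) := by
        rw [hQAdef]
        exact Finset.sum_congr rfl fun i _ => Finset.sum_congr rfl fun j _ => hpoint i j
      rw [hQ2]
      have hsplit : ∀ i : Fin n, (∑ j, (c * (h i j * h i j)
          - c * T * ((if i = j then (1:ℝ) else 0) * h i j)
          + r₀ * (h i j * h i j)))
          = c * (∑ j, h i j * h i j) - c * T * h i i + r₀ * (∑ j, h i j * h i j) := by
        intro i
        rw [Finset.sum_add_distrib, Finset.sum_sub_distrib, ← Finset.mul_sum,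
          ← Finset.mul_sum, ← Finset.mul_sum]
        congr 2
        simp [ite_mul]
      rw [Finset.sum_congr rfl fun i _ => hsplit i]
      rw [Finset.sum_add_distrib, Finset.sum_sub_distrib, ← Finset.mul_sum,
        ← Finset.mul_sum, ← Finset.mul_sum]
      rw [hNdef, hTdef]
      ring
    set G : Fin n → Fin n → ℝ := fun a b => if a = b then 0 else W a b + c with hGdef
    have key2 : r₀ * N = ∑ b, ∑ a, lam b * lam a * G a b := by
      have hTsq : T ^ 2 = ∑ b, ∑ a, lam b * lam a := by
        rw [E5, sq, Finset.sum_mul_sum]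
      have hNd : N = ∑ b, ∑ a, (if a = b then lam b * lam a else 0) := by
        rw [E4]
        refine Finset.sum_congr rfl fun b _ => ?_
        simp
      have hQW : QA = ∑ b, ∑ a, lam b * lam a * W a b := by
        rw [E1]
        exact Finset.sum_congr rfl fun b _ => Finset.sum_congr rfl fun a _ => by ring
      have hGpt : ∀ a b : Fin n, lam b * lam a * G a b
          = lam b * lam a * W a b + c * (lam b * lam a)
            - c * (if a = b then lam b * lam a else 0) := by
        intro a b
        by_cases hab : a = b
        · subst hab
          simp [hGdef, E2 a]
        · simp only [hGdef, if_neg hab]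
          ring
      have hsum : (∑ b, ∑ a, lam b * lam a * G a b)
          = (∑ b, ∑ a, lam b * lam a * W a b) + c * T ^ 2 - c * N := by
        rw [hTsq, hNd, Finset.mul_sum, Finset.mul_sum]
        rw [← Finset.sum_add_distrib, ← Finset.sum_sub_distrib]
        refine Finset.sum_congr rfl fun b _ => ?_
        rw [Finset.mul_sum, Finset.mul_sum]
        rw [← Finset.sum_add_distrib, ← Finset.sum_sub_distrib]
        exact Finset.sum_congr rfl fun a _ => hGpt a b
      rw [hsum, ← hQW, key1]
      ring
    -- nonnegativity of K
    have hKnn : 0 ≤ K := by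
      have h01 : ((⟨0, by omega⟩ : Fin n)) ≠ (⟨1, by omega⟩ : Fin n) := by
        simp [Fin.ext_iff]
      exact le_trans (abs_nonneg _) (E3 _ _ h01)
    have habs : |r₀ * N| ≤ ∑ b, ∑ a, |lam b| * |lam a| * (if a = b then 0 else K) := by
      rw [key2]
      calc |∑ b, ∑ a, lam b * lam a * G a b|
          ≤ ∑ b, |∑ a, lam b * lam a * G a b| := Finset.abs_sum_le_sum_abs _ _
        _ ≤ ∑ b, ∑ a, |lam b * lam a * G a b| :=
            Finset.sum_le_sum fun b _ => Finset.abs_sum_le_sum_abs _ _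
        _ ≤ ∑ b, ∑ a, |lam b| * |lam a| * (if a = b then 0 else K) := by
            refine Finset.sum_le_sum fun b _ => Finset.sum_le_sum fun a _ => ?_
            rw [abs_mul, abs_mul]
            by_cases hab : a = b
            · simp [hGdef, hab]
            · have hG : |G a b| ≤ K := by
                simpa [hGdef, if_neg hab] using E3 a b hab
              simp only [if_neg hab]
              exact mul_le_mul_of_nonneg_left hG
                (mul_nonneg (abs_nonneg _) (abs_nonneg _))
    set L : ℝ := ∑ a, |lam a| with hLdef
    have hsum2 : (∑ b, ∑ a, |lam b| * |lam a| * (if a = b then 0 else K))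
        = K * L ^ 2 - K * N := by
      have e1 : ∀ a b : Fin n, |lam b| * |lam a| * (if a = b then 0 else K)
          = K * (|lam b| * |lam a|) - (if a = b then K * (lam b * lam a) else 0) := by
        intro a b
        by_cases hab : a = b
        · subst hab
          rw [if_pos rfl, if_pos rfl, mul_zero, abs_mul_abs_self]
          ring
        · simp only [if_neg hab]; ring
      rw [Finset.sum_congr rfl fun b _ => Finset.sum_congr rfl fun a _ => e1 a b]
      have e2 : (∑ b, ∑ a, K * (|lam b| * |lam a|)) = K * L ^ 2 := by
        rw [hLdef, sq, Finset.sum_mul_sum, Finset.mul_sum]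
        refine Finset.sum_congr rfl fun b _ => ?_
        rw [Finset.mul_sum]
      have e3 : (∑ b : Fin n, ∑ a : Fin n, (if a = b then K * (lam b * lam a) else 0))
          = K * N := by
        rw [E4, Finset.mul_sum]
        refine Finset.sum_congr rfl fun b _ => ?_
        simp
      rw [← e2, ← e3, ← Finset.sum_sub_distrib]
      exact Finset.sum_congr rfl fun b _ => Finset.sum_sub_distrib _ _
    have hCS : L ^ 2 ≤ (n : ℝ) * N := by
      have hcs := sq_sum_le_card_mul_sum_sq
        (s := (Finset.univ : Finset (Fin n))) (f := fun a => |lam a|)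
      rw [E4]
      calc L ^ 2 ≤ ((Finset.univ : Finset (Fin n)).card : ℝ) * ∑ a, |lam a| ^ 2 := by
            exact_mod_cast hcs
        _ = (n : ℝ) * ∑ a, lam a * lam a := by
            rw [Finset.card_univ, Fintype.card_fin]
            congr 1
            exact Finset.sum_congr rfl fun a _ => by rw [sq_abs]; ring
    have hNpos : 0 < N := by
      rw [hNdef]
      refine Finset.sum_pos'
        (fun i _ => Finset.sum_nonneg fun j _ => mul_self_nonneg _)
        ⟨i0, Finset.mem_univ _, ?_⟩
      refine Finset.sum_pos' (fun j _ => mul_self_nonneg _)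
        ⟨j0, Finset.mem_univ _, ?_⟩
      exact mul_self_pos.mpr hij0
    -- final assembly
    have hfinal : |r₀| * N ≤ K * ((n : ℝ) - 1) * N := by
      have h1 : |r₀ * N| = |r₀| * N := by
        rw [abs_mul, abs_of_pos hNpos]
      calc |r₀| * N = |r₀ * N| := h1.symm
        _ ≤ K * L ^ 2 - K * N := by rw [← hsum2]; exact habs
        _ ≤ K * ((n : ℝ) * N) - K * N := by
            have := mul_le_mul_of_nonneg_left hCS hKnn
            linarith
        _ = K * ((n : ℝ) - 1) * N := by ring
    have hr : |r₀| ≤ K * ((n : ℝ) - 1) :=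
      le_of_mul_le_mul_right hfinal hNpos
    calc |r₀| ≤ K * ((n : ℝ) - 1) := hr
      _ = (((n : ℝ) - 1) / 2) * (Δ - δ) := by rw [hKdef]; ring
end

section
/- Let A be an algebraic curvature tensor on ℝⁿ that is Einstein with Einstein constant k and satisfies δ ≤ R̄ ≤ Δ. If h = (h_{ij}) is a nonzero symmetric array with ∑_i h_{ii} = 0 and r ∈ ℝ satisfies ∑_{k,l} A_{kilj} h_{kl} = r h_{ij} for all i, j, then r lies in the intersection of the intervals [−k + nδ, k − (n−2)δ] and [k − (n−2)Δ, −k + nΔ]. -/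
open scoped BigOperators InnerProductSpace

private lemma sum_antisymm_aux {n : ℕ} (f : Fin n → Fin n → ℝ)
    (hf : ∀ i j, f i j = - f j i) : (∑ i, ∑ j, f i j) = 0 := by
  have h1 : (∑ i, ∑ j, f i j) = ∑ i, ∑ j, -(f j i) :=
    Finset.sum_congr rfl fun i _ => Finset.sum_congr rfl fun j _ => hf i j
  have h2 : (∑ i : Fin n, ∑ j : Fin n, -(f j i)) = -(∑ i : Fin n, ∑ j : Fin n, f j i) := by
    simp
  have h3 : (∑ i : Fin n, ∑ j : Fin n, f j i) = ∑ i, ∑ j, f i j := Finset.sum_comm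
  linarith [h1, h2, h3]

private lemma sum_pull5 {n : ℕ} (g : Fin n → Fin n → Fin n → Fin n → Fin n → ℝ) :
    (∑ x, ∑ y, ∑ p, ∑ q, ∑ m, g x y p q m) = ∑ m, ∑ x, ∑ y, ∑ p, ∑ q, g x y p q m := by
  calc (∑ x, ∑ y, ∑ p, ∑ q, ∑ m, g x y p q m)
      = ∑ x, ∑ y, ∑ p, ∑ m, ∑ q, g x y p q m :=
        Finset.sum_congr rfl fun x _ => Finset.sum_congr rfl fun y _ =>
          Finset.sum_congr rfl fun p _ => Finset.sum_comm
    _ = ∑ x, ∑ y, ∑ m, ∑ p, ∑ q, g x y p q m :=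
        Finset.sum_congr rfl fun x _ => Finset.sum_congr rfl fun y _ => Finset.sum_comm
    _ = ∑ x, ∑ m, ∑ y, ∑ p, ∑ q, g x y p q m :=
        Finset.sum_congr rfl fun x _ => Finset.sum_comm
    _ = ∑ m, ∑ x, ∑ y, ∑ p, ∑ q, g x y p q m := Finset.sum_comm

private lemma sum4_perm_b {n : ℕ} (f : Fin n → Fin n → Fin n → Fin n → ℝ) :
    (∑ x, ∑ y, ∑ p, ∑ q, f x y p q) = ∑ p, ∑ x, ∑ q, ∑ y, f x y p q := by
  calc (∑ x, ∑ y, ∑ p, ∑ q, f x y p q)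
      = ∑ x, ∑ p, ∑ y, ∑ q, f x y p q :=
        Finset.sum_congr rfl fun x _ => Finset.sum_comm
    _ = ∑ p, ∑ x, ∑ y, ∑ q, f x y p q := Finset.sum_comm
    _ = ∑ p, ∑ x, ∑ q, ∑ y, f x y p q :=
        Finset.sum_congr rfl fun p _ => Finset.sum_congr rfl fun x _ => Finset.sum_comm

set_option maxHeartbeats 1000000 in
theorem Rcirc_eigenvalue_estimate_einstein
    (n : ℕ)
    (A : Fin n → Fin n → Fin n → Fin n → ℝ) (k δ Δ : ℝ)
    (hA1 : ∀ i j p q, A i j p q = - A j i p q)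
    (hA2 : ∀ i j p q, A i j p q = - A i j q p)
    (hA3 : ∀ i j p q, A i j p q = A p q i j)
    (hBianchi : ∀ i j p q, A i j p q + A p i j q + A j p i q = 0)
    (hEinstein : ∀ i j, ∑ m, A m i j m = k * (if i = j then (1 : ℝ) else 0))
    (hsec : ∀ X Y : EuclideanSpace ℝ (Fin n),
      ‖X‖ ^ 2 * ‖Y‖ ^ 2 - ⟪X, Y⟫_ℝ ^ 2 = 1 →
      δ ≤ (∑ i, ∑ j, ∑ p, ∑ q, A i j p q * X i * Y j * Y p * X q) ∧
      (∑ i, ∑ j, ∑ p, ∑ q, A i j p q * X i * Y j * Y p * X q) ≤ Δ)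
    (h : Fin n → Fin n → ℝ) (r : ℝ)
    (hsymm : ∀ i j, h i j = h j i)
    (htr : ∑ i, h i i = 0)
    (h_ne : h ≠ 0)
    (heig : ∀ i j, ∑ p, ∑ q, A p i q j * h p q = r * h i j) :
    (-k + (n : ℝ) * δ ≤ r ∧ r ≤ k - ((n : ℝ) - 2) * δ) ∧
    (k - ((n : ℝ) - 2) * Δ ≤ r ∧ r ≤ -k + (n : ℝ) * Δ) := by
  classical
  have hHerm : (Matrix.of h).IsHermitian := by
    ext i j
    simp [Matrix.conjTranspose_apply, hsymm j i]
  set v : Fin n → EuclideanSpace ℝ (Fin n) := fun m => hHerm.eigenvectorBasis m with hv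
  set lam : Fin n → ℝ := hHerm.eigenvalues with hlam
  have hon := hHerm.eigenvectorBasis.orthonormal
  have hF2 : ∀ a b : Fin n, (∑ p, v a p * v b p) = if a = b then (1:ℝ) else 0 := by
    intro a b
    have := orthonormal_iff_ite.mp hon a b
    simpa [PiLp.inner_apply, RCLike.inner_apply, starRingEnd_apply, hv, mul_comm] using this
  have hF1 : ∀ m p, (∑ t, h p t * v m t) = lam m * v m p := by
    intro m p
    have := congrFun (hHerm.mulVec_eigenvectorBasis m) p
    simpa [Matrix.mulVec, dotProduct, Matrix.of_apply, hv, hlam] using this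
  have hF3 : ∀ p q : Fin n, (∑ m, v m p * v m q) = if p = q then (1:ℝ) else 0 := by
    set P : Matrix (Fin n) (Fin n) ℝ := Matrix.of fun a p => v a p with hP
    have hP1 : P * P.transpose = 1 := by
      ext a b
      simp [Matrix.mul_apply, Matrix.transpose_apply, hP, hF2 a b, Matrix.one_apply]
    have hP2 : P.transpose * P = 1 := mul_eq_one_comm.mp hP1
    intro p q
    have := congrFun (congrFun hP2 p) q
    simpa [Matrix.mul_apply, Matrix.transpose_apply, hP, Matrix.one_apply] using this
  have hF4 : ∀ p q, h p q = ∑ m, lam m * (v m p * v m q) := by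
    intro p q
    calc h p q = ∑ t, h p t * (∑ m, v m t * v m q) := by
          simp only [hF3, mul_ite, mul_one, mul_zero]
          simp
      _ = ∑ t, ∑ m, h p t * (v m t * v m q) := by
          exact Finset.sum_congr rfl fun t _ => by rw [Finset.mul_sum]
      _ = ∑ m, ∑ t, h p t * (v m t * v m q) := Finset.sum_comm
      _ = ∑ m, lam m * (v m p * v m q) := by
          refine Finset.sum_congr rfl fun m _ => ?_
          have : ∑ t, h p t * (v m t * v m q) = (∑ t, h p t * v m t) * v m q := by
            rw [Finset.sum_mul]; exact Finset.sum_congr rfl fun t _ => by ring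
          rw [this, hF1 m p]; ring
  have hF5 : ∑ m, lam m = 0 := by
    calc ∑ m, lam m = ∑ m, lam m * (∑ p, v m p * v m p) := by
          refine Finset.sum_congr rfl fun m _ => ?_
          rw [hF2 m m]; simp
      _ = ∑ m, ∑ p, lam m * (v m p * v m p) := by
          exact Finset.sum_congr rfl fun m _ => Finset.mul_sum _ _ _
      _ = ∑ p, ∑ m, lam m * (v m p * v m p) := Finset.sum_comm
      _ = ∑ p, h p p := Finset.sum_congr rfl fun p _ => (hF4 p p).symm
      _ = 0 := htr
  have hF6 : ∃ m, lam m ≠ 0 := by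
    by_contra hc
    push_neg at hc
    apply h_ne
    funext p q
    rw [hF4 p q]
    simp [hc]
  -- the sectional curvature matrix in the eigenbasis
  set K : Fin n → Fin n → ℝ :=
    fun a b => ∑ x, ∑ y, ∑ p, ∑ q, A x y p q * v a x * v b y * v b p * v a q with hK
  have hG1 : ∀ a b, a ≠ b → δ ≤ K a b ∧ K a b ≤ Δ := by
    intro a b hab
    have hna : ‖v a‖ = 1 := hon.1 a
    have hnb : ‖v b‖ = 1 := hon.1 b
    have hinner : ⟪v a, v b⟫_ℝ = 0 := hon.2 hab
    have := hsec (v a) (v b) (by rw [hna, hnb, hinner]; norm_num)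
    exact this
  have hG2 : ∀ a, K a a = 0 := by
    intro a
    refine sum_antisymm_aux _ ?_
    intro x y
    rw [← Finset.sum_neg_distrib]
    refine Finset.sum_congr rfl fun p _ => ?_
    rw [← Finset.sum_neg_distrib]
    refine Finset.sum_congr rfl fun q _ => ?_
    rw [hA1 x y p q]; ring
  have hG3 : ∀ b, (∑ a, K a b) = k := by
    intro b
    calc (∑ a, K a b)
        = ∑ x, ∑ y, ∑ p, ∑ q, (A x y p q * v b y * v b p) * (∑ a, v a x * v a q) := by
          rw [Finset.sum_comm]
          refine Finset.sum_congr rfl fun x _ => ?_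
          rw [Finset.sum_comm]
          refine Finset.sum_congr rfl fun y _ => ?_
          rw [Finset.sum_comm]
          refine Finset.sum_congr rfl fun p _ => ?_
          rw [Finset.sum_comm]
          refine Finset.sum_congr rfl fun q _ => ?_
          rw [Finset.mul_sum]
          exact Finset.sum_congr rfl fun a _ => by ring
      _ = ∑ x, ∑ y, ∑ p, A x y p x * v b y * v b p := by
          refine Finset.sum_congr rfl fun x _ => Finset.sum_congr rfl fun y _ =>
            Finset.sum_congr rfl fun p _ => ?_
          simp only [hF3, mul_ite, mul_one, mul_zero]
          simp
      _ = ∑ y, ∑ p, (∑ x, A x y p x) * (v b y * v b p) := by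
          rw [Finset.sum_comm]
          refine Finset.sum_congr rfl fun y _ => ?_
          rw [Finset.sum_comm]
          refine Finset.sum_congr rfl fun p _ => ?_
          rw [Finset.sum_mul]
          exact Finset.sum_congr rfl fun x _ => by ring
      _ = ∑ y, ∑ p, (k * if y = p then (1:ℝ) else 0) * (v b y * v b p) :=
          Finset.sum_congr rfl fun y _ => Finset.sum_congr rfl fun p _ => by
            rw [hEinstein y p]
      _ = ∑ y, k * (v b y * v b y) := by
          refine Finset.sum_congr rfl fun y _ => ?_
          simp [mul_ite, ite_mul, Finset.sum_ite_eq]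
      _ = k := by
          rw [← Finset.mul_sum, hF2 b b]; simp
  have hG4 : ∀ a, r * lam a = -∑ m, K m a * lam m := by
    intro a
    have hKV : ∀ m, (∑ x, ∑ y, ∑ p, ∑ q, A p x q y * v a x * v a y * (v m p * v m q))
        = -(K m a) := by
      intro m
      have e1 : K m a = ∑ x, ∑ y, ∑ p, ∑ q,
          -(A x y p q * v a y * v a q * (v m x * v m p)) := by
        calc K m a
            = ∑ x, ∑ y, ∑ p, ∑ q, -(A x y q p * v a y * v a p * (v m x * v m q)) :=
              Finset.sum_congr rfl fun x _ => Finset.sum_congr rfl fun y _ =>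
                Finset.sum_congr rfl fun p _ => Finset.sum_congr rfl fun q _ => by
                  rw [hA2 x y p q]; ring
          _ = ∑ x, ∑ y, ∑ p, ∑ q, -(A x y p q * v a y * v a q * (v m x * v m p)) :=
              Finset.sum_congr rfl fun x _ => Finset.sum_congr rfl fun y _ =>
                Finset.sum_comm
      have e2 : (∑ x, ∑ y, ∑ p, ∑ q, A p x q y * v a x * v a y * (v m p * v m q))
          = ∑ x, ∑ y, ∑ p, ∑ q, A x y p q * v a y * v a q * (v m x * v m p) :=
        sum4_perm_b (fun x y p q => A p x q y * v a x * v a y * (v m p * v m q))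
      rw [e2, e1]
      simp
    have hB : (∑ x, ∑ y, (∑ p, ∑ q, A p x q y * h p q) * (v a x * v a y))
        = -∑ m, K m a * lam m := by
      calc (∑ x, ∑ y, (∑ p, ∑ q, A p x q y * h p q) * (v a x * v a y))
          = ∑ x, ∑ y, ∑ p, ∑ q, (A p x q y * (v a x * v a y)) * h p q := by
            refine Finset.sum_congr rfl fun x _ => Finset.sum_congr rfl fun y _ => ?_
            rw [Finset.sum_mul]
            refine Finset.sum_congr rfl fun p _ => ?_
            rw [Finset.sum_mul]
            exact Finset.sum_congr rfl fun q _ => by ring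
        _ = ∑ x, ∑ y, ∑ p, ∑ q, ∑ m,
              (A p x q y * (v a x * v a y)) * (lam m * (v m p * v m q)) := by
            refine Finset.sum_congr rfl fun x _ => Finset.sum_congr rfl fun y _ =>
              Finset.sum_congr rfl fun p _ => Finset.sum_congr rfl fun q _ => ?_
            rw [hF4 p q, Finset.mul_sum]
        _ = ∑ m, ∑ x, ∑ y, ∑ p, ∑ q,
              (A p x q y * (v a x * v a y)) * (lam m * (v m p * v m q)) :=
            sum_pull5 _
        _ = ∑ m, lam m * (∑ x, ∑ y, ∑ p, ∑ q,
              A p x q y * v a x * v a y * (v m p * v m q)) := by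
            refine Finset.sum_congr rfl fun m _ => ?_
            rw [Finset.mul_sum]
            refine Finset.sum_congr rfl fun x _ => ?_
            rw [Finset.mul_sum]
            refine Finset.sum_congr rfl fun y _ => ?_
            rw [Finset.mul_sum]
            refine Finset.sum_congr rfl fun p _ => ?_
            rw [Finset.mul_sum]
            exact Finset.sum_congr rfl fun q _ => by ring
        _ = ∑ m, -(K m a * lam m) := by
            refine Finset.sum_congr rfl fun m _ => ?_
            rw [hKV m]; ring
        _ = -∑ m, K m a * lam m := by simp
    have hA' : (∑ x, ∑ y, (∑ p, ∑ q, A p x q y * h p q) * (v a x * v a y)) = r * lam a := by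
      calc (∑ x, ∑ y, (∑ p, ∑ q, A p x q y * h p q) * (v a x * v a y))
          = ∑ x, ∑ y, (r * h x y) * (v a x * v a y) :=
            Finset.sum_congr rfl fun x _ => Finset.sum_congr rfl fun y _ => by
              rw [heig x y]
        _ = ∑ x, r * ((∑ y, h x y * v a y) * v a x) := by
            refine Finset.sum_congr rfl fun x _ => ?_
            rw [Finset.sum_mul, Finset.mul_sum]
            exact Finset.sum_congr rfl fun y _ => by ring
        _ = ∑ x, r * (lam a * v a x * v a x) := by
            refine Finset.sum_congr rfl fun x _ => ?_
            rw [hF1 a x]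
        _ = r * lam a * (∑ x, v a x * v a x) := by
            rw [Finset.mul_sum]
            exact Finset.sum_congr rfl fun x _ => by ring
        _ = r * lam a := by rw [hF2 a a]; simp
    rw [← hA']
    exact hB
  -- extremal eigenvalues
  obtain ⟨m0, hm0⟩ := hF6
  haveI : Nonempty (Fin n) := ⟨m0⟩
  obtain ⟨i0, hi0⟩ := Finite.exists_max lam
  obtain ⟨j0, hj0⟩ := Finite.exists_min lam
  have hipos : 0 < lam i0 := by
    rcases lt_or_ge 0 (lam i0) with hp | hp
    · exact hp
    · exfalso
      have hall := (Finset.sum_eq_zero_iff_of_nonpos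
        (fun m _ => le_trans (hi0 m) hp)).mp hF5
      exact hm0 (hall m0 (Finset.mem_univ m0))
  have hjneg : lam j0 < 0 := by
    rcases lt_or_ge (lam j0) 0 with hp | hp
    · exact hp
    · exfalso
      have hall := (Finset.sum_eq_zero_iff_of_nonneg
        (fun m _ => le_trans hp (hj0 m))).mp hF5
      exact hm0 (hall m0 (Finset.mem_univ m0))
  have hij : i0 ≠ j0 := fun e => by rw [e] at hipos; linarith
  have hn2 : 2 ≤ n := by
    have : 1 < Fintype.card (Fin n) := Fintype.one_lt_card_iff.mpr ⟨i0, j0, hij⟩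
    simp at this; omega
  have hKlam : ∀ a : Fin n, (∑ m, K m a * lam m) = -(r * lam a) := fun a => by
    have := hG4 a; linarith
  -- first pair of bounds, from the largest eigenvalue
  have hId1 : (∑ m, K m i0 * (lam i0 - lam m)) = k * lam i0 + r * lam i0 := by
    have e : (∑ m, K m i0 * (lam i0 - lam m))
        = (∑ m, K m i0) * lam i0 - ∑ m, K m i0 * lam m := by
      rw [Finset.sum_mul, ← Finset.sum_sub_distrib]
      exact Finset.sum_congr rfl fun m _ => by ring
    rw [e, hG3 i0, hKlam i0]; ring
  have hcoef : (∑ m : Fin n, (lam i0 - lam m)) = (n : ℝ) * lam i0 := by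
    rw [Finset.sum_sub_distrib, hF5]
    simp [Finset.card_univ, mul_comm]
  have hlow1 : δ * ((n:ℝ) * lam i0) ≤ k * lam i0 + r * lam i0 := by
    rw [← hId1, ← hcoef, Finset.mul_sum]
    refine Finset.sum_le_sum fun m _ => ?_
    by_cases hm : m = i0
    · subst hm; simp
    · exact mul_le_mul_of_nonneg_right (hG1 m i0 hm).1 (by linarith [hi0 m])
  have hup1 : k * lam i0 + r * lam i0 ≤ Δ * ((n:ℝ) * lam i0) := by
    rw [← hId1, ← hcoef, Finset.mul_sum]
    refine Finset.sum_le_sum fun m _ => ?_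
    by_cases hm : m = i0
    · subst hm; simp
    · exact mul_le_mul_of_nonneg_right (hG1 m i0 hm).2 (by linarith [hi0 m])
  have bound1 : -k + (n : ℝ) * δ ≤ r := by
    have h2 : (δ * (n:ℝ)) * lam i0 ≤ (k + r) * lam i0 := by
      calc (δ * (n:ℝ)) * lam i0 = δ * ((n:ℝ) * lam i0) := by ring
        _ ≤ k * lam i0 + r * lam i0 := hlow1
        _ = (k + r) * lam i0 := by ring
    have := (mul_le_mul_iff_of_pos_right hipos).mp h2
    linarith
  have bound4 : r ≤ -k + (n : ℝ) * Δ := by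
    have h2 : (k + r) * lam i0 ≤ (Δ * (n:ℝ)) * lam i0 := by
      calc (k + r) * lam i0 = k * lam i0 + r * lam i0 := by ring
        _ ≤ Δ * ((n:ℝ) * lam i0) := hup1
        _ = (Δ * (n:ℝ)) * lam i0 := by ring
    have := (mul_le_mul_iff_of_pos_right hipos).mp h2
    linarith
  -- second pair of bounds, from the largest and smallest eigenvalues together
  set s : Finset (Fin n) := (Finset.univ.erase i0).erase j0 with hs
  have hjmem : j0 ∈ Finset.univ.erase i0 :=
    Finset.mem_erase.mpr ⟨Ne.symm hij, Finset.mem_univ _⟩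
  have hcard : (s.card : ℝ) = (n : ℝ) - 2 := by
    have e : s.card = n - 2 := by
      rw [hs, Finset.card_erase_of_mem hjmem,
        Finset.card_erase_of_mem (Finset.mem_univ i0)]
      simp [Finset.card_univ]
      omega
    rw [e]
    push_cast [Nat.cast_sub hn2]
    ring
  have hsums : (∑ m ∈ s, lam m) = -(lam i0) - lam j0 := by
    rw [hs, Finset.sum_erase_eq_sub hjmem,
      Finset.sum_erase_eq_sub (Finset.mem_univ i0), hF5]
    ring
  have hmem_s : ∀ m ∈ s, m ≠ i0 ∧ m ≠ j0 := by
    intro m hm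
    rw [hs] at hm
    have h1 := Finset.mem_erase.mp hm
    have h2 := Finset.mem_erase.mp h1.2
    exact ⟨h2.1, h1.1⟩
  have hnotmem : ∀ m : Fin n, m ∉ s → m = j0 ∨ m = i0 := by
    intro m hm
    by_contra hc
    push_neg at hc
    exact hm (by
      rw [hs]
      exact Finset.mem_erase.mpr ⟨hc.1, Finset.mem_erase.mpr ⟨hc.2, Finset.mem_univ m⟩⟩)
  have hres1 : (∑ m, K m i0 * (lam j0 - lam m)) = ∑ m ∈ s, K m i0 * (lam j0 - lam m) := by
    refine (Finset.sum_subset (Finset.subset_univ s) ?_).symm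
    intro m _ hm
    rcases hnotmem m hm with e | e
    · subst e; simp
    · subst e; rw [hG2 m]; ring
  have hres2 : (∑ m, K m j0 * (lam m - lam i0)) = ∑ m ∈ s, K m j0 * (lam m - lam i0) := by
    refine (Finset.sum_subset (Finset.subset_univ s) ?_).symm
    intro m _ hm
    rcases hnotmem m hm with e | e
    · subst e; rw [hG2 m]; ring
    · subst e; simp
  have hIdS1 : (∑ m, K m i0 * (lam j0 - lam m)) = k * lam j0 + r * lam i0 := by
    have e : (∑ m, K m i0 * (lam j0 - lam m))
        = (∑ m, K m i0) * lam j0 - ∑ m, K m i0 * lam m := by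
      rw [Finset.sum_mul, ← Finset.sum_sub_distrib]
      exact Finset.sum_congr rfl fun m _ => by ring
    rw [e, hG3 i0, hKlam i0]; ring
  have hIdS2 : (∑ m, K m j0 * (lam m - lam i0)) = -(r * lam j0) - k * lam i0 := by
    have e : (∑ m, K m j0 * (lam m - lam i0))
        = (∑ m, K m j0 * lam m) - (∑ m, K m j0) * lam i0 := by
      simp only [mul_sub, Finset.sum_sub_distrib, Finset.sum_mul]
    rw [e, hG3 j0, hKlam j0]
  have hc1 : (∑ m ∈ s, (lam j0 - lam m)) = ((n:ℝ) - 2) * lam j0 + lam i0 + lam j0 := by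
    rw [Finset.sum_sub_distrib, hsums, Finset.sum_const, nsmul_eq_mul, hcard]
    ring
  have hc2 : (∑ m ∈ s, (lam m - lam i0)) = -(lam i0) - lam j0 - ((n:ℝ) - 2) * lam i0 := by
    rw [Finset.sum_sub_distrib, hsums, Finset.sum_const, nsmul_eq_mul, hcard]
    try ring
  have hS1ge : Δ * (((n:ℝ) - 2) * lam j0 + lam i0 + lam j0)
      ≤ ∑ m, K m i0 * (lam j0 - lam m) := by
    rw [hres1, ← hc1, Finset.mul_sum]
    refine Finset.sum_le_sum fun m hm => ?_
    have h1 := (hG1 m i0 (hmem_s m hm).1).2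
    have h2 : lam j0 - lam m ≤ 0 := by linarith [hj0 m]
    nlinarith
  have hS1le : (∑ m, K m i0 * (lam j0 - lam m))
      ≤ δ * (((n:ℝ) - 2) * lam j0 + lam i0 + lam j0) := by
    rw [hres1, ← hc1, Finset.mul_sum]
    refine Finset.sum_le_sum fun m hm => ?_
    have h1 := (hG1 m i0 (hmem_s m hm).1).1
    have h2 : lam j0 - lam m ≤ 0 := by linarith [hj0 m]
    nlinarith
  have hS2ge : Δ * (-(lam i0) - lam j0 - ((n:ℝ) - 2) * lam i0)
      ≤ ∑ m, K m j0 * (lam m - lam i0) := by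
    rw [hres2, ← hc2, Finset.mul_sum]
    refine Finset.sum_le_sum fun m hm => ?_
    have h1 := (hG1 m j0 (hmem_s m hm).2).2
    have h2 : lam m - lam i0 ≤ 0 := by linarith [hi0 m]
    nlinarith
  have hS2le : (∑ m, K m j0 * (lam m - lam i0))
      ≤ δ * (-(lam i0) - lam j0 - ((n:ℝ) - 2) * lam i0) := by
    rw [hres2, ← hc2, Finset.mul_sum]
    refine Finset.sum_le_sum fun m hm => ?_
    have h1 := (hG1 m j0 (hmem_s m hm).2).1
    have h2 : lam m - lam i0 ≤ 0 := by linarith [hi0 m]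
    nlinarith
  have hd : 0 < lam i0 - lam j0 := by linarith
  have bound2 : r ≤ k - ((n : ℝ) - 2) * δ := by
    have hfin : (r - (k - ((n:ℝ) - 2) * δ)) * (lam i0 - lam j0) ≤ 0 := by
      nlinarith [hS1le, hS2le, hIdS1, hIdS2]
    by_contra hc
    push_neg at hc
    nlinarith [mul_pos (sub_pos.mpr hc) hd]
  have bound3 : k - ((n : ℝ) - 2) * Δ ≤ r := by
    have hfin : 0 ≤ (r - (k - ((n:ℝ) - 2) * Δ)) * (lam i0 - lam j0) := by
      nlinarith [hS1ge, hS2ge, hIdS1, hIdS2]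
    by_contra hc
    push_neg at hc
    nlinarith [mul_pos (sub_pos.mpr (by linarith : (0:ℝ) < (k - ((n:ℝ) - 2) * Δ) - r)) hd]
  exact ⟨⟨bound1, bound2⟩, ⟨bound3, bound4⟩⟩
end

section
/- Let A be an algebraic curvature tensor on ℝ⁶ with δ ≤ R̄ ≤ Δ. Let e₁, …, e₆ be an orthonormal basis of ℝ⁶ and a, b, c ∈ ℝ, not all zero, with a + b + c = 0, and let h be the symmetric array h_{ij} = a((e₁)_i(e₁)_j + (e₂)_i(e₂)_j) + b((e₃)_i(e₃)_j + (e₄)_i(e₄)_j) + c((e₅)_i(e₅)_j + (e₆)_i(e₆)_j). If r ∈ ℝ satisfies ∑_{k,l} A_{kilj} h_{kl} = r h_{ij} for all i, j, then 2δ − Δ ≤ r ≤ 2Δ − δ. -/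
open scoped BigOperators InnerProductSpace

theorem aux_Rcirc_arith (δ Δ r v x y k1 k2 k3 k4 k5 : ℝ)
    (hv : v < 0) (hx : 0 ≤ x) (hy : 0 ≤ y) (hsum : v + x + y = 0)
    (h1 : δ ≤ k1) (h1' : k1 ≤ Δ) (h2 : δ ≤ k2) (h2' : k2 ≤ Δ)
    (h3 : δ ≤ k3) (h3' : k3 ≤ Δ) (h4 : δ ≤ k4) (h4' : k4 ≤ Δ)
    (h5 : δ ≤ k5) (h5' : k5 ≤ Δ)
    (heq : v * k1 + x * (k2 + k3) + y * (k4 + k5) = -(r * v)) :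
    2 * δ - Δ ≤ r ∧ r ≤ 2 * Δ - δ := by
  have e1 : δ * v + δ * x + δ * y = 0 := by linear_combination δ * hsum
  have e2 : Δ * v + Δ * x + Δ * y = 0 := by linear_combination Δ * hsum
  constructor
  · nlinarith [mul_le_mul_of_nonneg_left h2 hx, mul_le_mul_of_nonneg_left h3 hx,
      mul_le_mul_of_nonneg_left h4 hy, mul_le_mul_of_nonneg_left h5 hy,
      mul_le_mul_of_nonpos_left h1' hv.le, e1, e2, heq, hv]
  · nlinarith [mul_le_mul_of_nonneg_left h2' hx, mul_le_mul_of_nonneg_left h3' hx,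
      mul_le_mul_of_nonneg_left h4' hy, mul_le_mul_of_nonneg_left h5' hy,
      mul_le_mul_of_nonpos_left h1 hv.le, e1, e2, heq, hv]

set_option maxHeartbeats 4000000 in
theorem Rcirc_eigenvalue_estimate_S2plus0_canonical_form
    (A : Fin 6 → Fin 6 → Fin 6 → Fin 6 → ℝ) (δ Δ : ℝ)
    (hA1 : ∀ i j p q, A i j p q = - A j i p q)
    (hA2 : ∀ i j p q, A i j p q = - A i j q p)
    (hA3 : ∀ i j p q, A i j p q = A p q i j)
    (hBianchi : ∀ i j p q, A i j p q + A p i j q + A j p i q = 0)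
    (hsec : ∀ X Y : EuclideanSpace ℝ (Fin 6),
      ‖X‖ ^ 2 * ‖Y‖ ^ 2 - ⟪X, Y⟫_ℝ ^ 2 = 1 →
      δ ≤ (∑ i, ∑ j, ∑ p, ∑ q, A i j p q * X i * Y j * Y p * X q) ∧
      (∑ i, ∑ j, ∑ p, ∑ q, A i j p q * X i * Y j * Y p * X q) ≤ Δ)
    (e : Fin 6 → EuclideanSpace ℝ (Fin 6))
    (he : ∀ i j : Fin 6, ⟪e i, e j⟫_ℝ = if i = j then 1 else 0)
    (a b c : ℝ)
    (habc_ne : ¬(a = 0 ∧ b = 0 ∧ c = 0))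
    (habc_sum : a + b + c = 0)
    (h : Fin 6 → Fin 6 → ℝ)
    (hh : ∀ i j, h i j =
        a * (e 0 i * e 0 j + e 1 i * e 1 j)
      + b * (e 2 i * e 2 j + e 3 i * e 3 j)
      + c * (e 4 i * e 4 j + e 5 i * e 5 j))
    (r : ℝ)
    (heig : ∀ i j, ∑ p, ∑ q, A p i q j * h p q = r * h i j) :
    2 * δ - Δ ≤ r ∧ r ≤ 2 * Δ - δ := by
  -- inner products as sums
  have hip : ∀ m n : Fin 6, (∑ i, e m i * e n i) = if m = n then 1 else 0 := by
    intro m n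
    have h1 : ⟪e m, e n⟫_ℝ = ∑ i, e m i * e n i := by
      simp [PiLp.inner_apply, RCLike.inner_apply, conj_trivial]
      exact Finset.sum_congr rfl fun i _ => mul_comm _ _
    rw [← h1, he]
  have hnorm : ∀ m : Fin 6, ‖e m‖ ^ 2 = 1 := by
    intro m
    rw [← real_inner_self_eq_norm_sq, he]
    simp
  -- sectional curvature bounds
  have hKb : ∀ m n : Fin 6, m ≠ n →
      δ ≤ (∑ i, ∑ j, ∑ p, ∑ q, A i j p q * e m i * e n j * e n p * e m q) ∧
      (∑ i, ∑ j, ∑ p, ∑ q, A i j p q * e m i * e n j * e n p * e m q) ≤ Δ := by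
    intro m n hmn
    refine hsec (e m) (e n) ?_
    rw [hnorm m, hnorm n, he m n, if_neg hmn]
    norm_num
  -- vanishing on the diagonal
  have hKdiag : ∀ n : Fin 6,
      (∑ i, ∑ j, ∑ p, ∑ q, A i j p q * e n i * e n j * e n p * e n q) = 0 := by
    intro n
    set S := ∑ i, ∑ j, ∑ p, ∑ q, A i j p q * e n i * e n j * e n p * e n q with hS
    have h1 : S = -S := by
      calc S = ∑ j, ∑ i, ∑ p, ∑ q, A i j p q * e n i * e n j * e n p * e n q := by
                rw [hS]; exact Finset.sum_comm
        _ = ∑ i, ∑ j, ∑ p, ∑ q, -(A i j p q * e n i * e n j * e n p * e n q) := by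
            refine Finset.sum_congr rfl fun i _ => Finset.sum_congr rfl fun j _ =>
              Finset.sum_congr rfl fun p _ => Finset.sum_congr rfl fun q _ => ?_
            rw [hA1 j i p q]; ring
        _ = -S := by rw [hS]; simp only [Finset.sum_neg_distrib]
    linarith
  -- index flip
  have hflip : ∀ m n : Fin 6,
      (∑ i, ∑ j, ∑ p, ∑ q, A p i q j * (e m p * e m q) * (e n i * e n j))
        = -(∑ i, ∑ j, ∑ p, ∑ q, A i j p q * e m i * e n j * e n p * e m q) := by
    intro m n
    have step1 : (∑ i, ∑ j, ∑ p, ∑ q, A p i q j * (e m p * e m q) * (e n i * e n j))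
        = ∑ i, ∑ j, ∑ p, ∑ q, -(A p i j q * e m p * e n i * e n j * e m q) := by
      refine Finset.sum_congr rfl fun i _ => Finset.sum_congr rfl fun j _ =>
        Finset.sum_congr rfl fun p _ => Finset.sum_congr rfl fun q _ => ?_
      rw [hA2 p i q j]; ring
    rw [step1]
    simp only [Finset.sum_neg_distrib]
    congr 1
    have c1 : ∀ (i : Fin 6), (∑ j, ∑ p, ∑ q, A p i j q * e m p * e n i * e n j * e m q)
        = ∑ p, ∑ j, ∑ q, A p i j q * e m p * e n i * e n j * e m q := fun i => Finset.sum_comm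
    rw [Finset.sum_congr rfl fun i _ => c1 i, Finset.sum_comm]
  -- contraction of the eigenvalue equation
  have hcontr : ∀ n : Fin 6,
      (∑ i, ∑ j, ∑ p, ∑ q, A p i q j * h p q * (e n i * e n j))
        = r * (∑ i, ∑ j, h i j * (e n i * e n j)) := by
    intro n
    calc (∑ i, ∑ j, ∑ p, ∑ q, A p i q j * h p q * (e n i * e n j))
        = ∑ i, ∑ j, (∑ p, ∑ q, A p i q j * h p q) * (e n i * e n j) := by
          simp only [Finset.sum_mul]
      _ = ∑ i, ∑ j, (r * h i j) * (e n i * e n j) := by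
          exact Finset.sum_congr rfl fun i _ => Finset.sum_congr rfl fun j _ => by rw [heig i j]
      _ = r * ∑ i, ∑ j, h i j * (e n i * e n j) := by
          simp only [Finset.mul_sum, mul_assoc]
  have hsplitL : ∀ n : Fin 6,
      (∑ i, ∑ j, ∑ p, ∑ q, A p i q j * h p q * (e n i * e n j))
        = a * ((∑ i, ∑ j, ∑ p, ∑ q, A p i q j * (e 0 p * e 0 q) * (e n i * e n j))
             + (∑ i, ∑ j, ∑ p, ∑ q, A p i q j * (e 1 p * e 1 q) * (e n i * e n j)))
        + b * ((∑ i, ∑ j, ∑ p, ∑ q, A p i q j * (e 2 p * e 2 q) * (e n i * e n j))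
             + (∑ i, ∑ j, ∑ p, ∑ q, A p i q j * (e 3 p * e 3 q) * (e n i * e n j)))
        + c * ((∑ i, ∑ j, ∑ p, ∑ q, A p i q j * (e 4 p * e 4 q) * (e n i * e n j))
             + (∑ i, ∑ j, ∑ p, ∑ q, A p i q j * (e 5 p * e 5 q) * (e n i * e n j))) := by
    intro n
    simp only [hh, Finset.mul_sum, mul_add, add_mul, Finset.sum_add_distrib]
    refine congrArg₂ (·+·) (congrArg₂ (·+·) ?_ ?_) ?_ <;>
    · refine congrArg₂ (·+·) ?_ ?_ <;>
      · refine Finset.sum_congr rfl fun i _ => Finset.sum_congr rfl fun j _ =>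
          Finset.sum_congr rfl fun p _ => Finset.sum_congr rfl fun q _ => by ring
  have hsplitR : ∀ n : Fin 6,
      (∑ i, ∑ j, h i j * (e n i * e n j))
        = a * ((∑ i, e 0 i * e n i) * (∑ i, e 0 i * e n i)
             + (∑ i, e 1 i * e n i) * (∑ i, e 1 i * e n i))
        + b * ((∑ i, e 2 i * e n i) * (∑ i, e 2 i * e n i)
             + (∑ i, e 3 i * e n i) * (∑ i, e 3 i * e n i))
        + c * ((∑ i, e 4 i * e n i) * (∑ i, e 4 i * e n i)
             + (∑ i, e 5 i * e n i) * (∑ i, e 5 i * e n i)) := by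
    intro n
    simp only [hh, Finset.sum_mul_sum, Finset.mul_sum, mul_add, add_mul, Finset.sum_add_distrib]
    refine congrArg₂ (·+·) (congrArg₂ (·+·) ?_ ?_) ?_ <;>
    · refine congrArg₂ (·+·) ?_ ?_ <;>
      · refine Finset.sum_congr rfl fun i _ => ?_
        simp only [Finset.mul_sum, Finset.sum_mul]
        exact Finset.sum_congr rfl fun j _ => by ring
  -- the contracted eigenvalue equations
  have E : ∀ n : Fin 6,
      a * (-(∑ i, ∑ j, ∑ p, ∑ q, A i j p q * e 0 i * e n j * e n p * e 0 q)
         + -(∑ i, ∑ j, ∑ p, ∑ q, A i j p q * e 1 i * e n j * e n p * e 1 q))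
      + b * (-(∑ i, ∑ j, ∑ p, ∑ q, A i j p q * e 2 i * e n j * e n p * e 2 q)
         + -(∑ i, ∑ j, ∑ p, ∑ q, A i j p q * e 3 i * e n j * e n p * e 3 q))
      + c * (-(∑ i, ∑ j, ∑ p, ∑ q, A i j p q * e 4 i * e n j * e n p * e 4 q)
         + -(∑ i, ∑ j, ∑ p, ∑ q, A i j p q * e 5 i * e n j * e n p * e 5 q))
      = r * (a * ((∑ i, e 0 i * e n i) * (∑ i, e 0 i * e n i)
               + (∑ i, e 1 i * e n i) * (∑ i, e 1 i * e n i))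
           + b * ((∑ i, e 2 i * e n i) * (∑ i, e 2 i * e n i)
               + (∑ i, e 3 i * e n i) * (∑ i, e 3 i * e n i))
           + c * ((∑ i, e 4 i * e n i) * (∑ i, e 4 i * e n i)
               + (∑ i, e 5 i * e n i) * (∑ i, e 5 i * e n i))) := by
    intro n
    have h1 := hcontr n
    rw [hsplitL n, hsplitR n] at h1
    rw [hflip 0 n, hflip 1 n, hflip 2 n, hflip 3 n, hflip 4 n, hflip 5 n] at h1
    exact h1
  have E0 := E 0
  rw [hKdiag 0] at E0
  simp only [hip, Fin.reduceEq, reduceIte] at E0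
  norm_num at E0
  have E2 := E 2
  rw [hKdiag 2] at E2
  simp only [hip, Fin.reduceEq, reduceIte] at E2
  norm_num at E2
  have E4 := E 4
  rw [hKdiag 4] at E4
  simp only [hip, Fin.reduceEq, reduceIte] at E4
  norm_num at E4
  have B10 := hKb 1 0 (by decide)
  have B20 := hKb 2 0 (by decide)
  have B30 := hKb 3 0 (by decide)
  have B40 := hKb 4 0 (by decide)
  have B50 := hKb 5 0 (by decide)
  have B02 := hKb 0 2 (by decide)
  have B12 := hKb 1 2 (by decide)
  have B32 := hKb 3 2 (by decide)
  have B42 := hKb 4 2 (by decide)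
  have B52 := hKb 5 2 (by decide)
  have B04 := hKb 0 4 (by decide)
  have B14 := hKb 1 4 (by decide)
  have B24 := hKb 2 4 (by decide)
  have B34 := hKb 3 4 (by decide)
  have B54 := hKb 5 4 (by decide)
  rcases le_or_gt a 0 with ha | ha <;> rcases le_or_gt b 0 with hb | hb <;>
    rcases le_or_gt c 0 with hc | hc
  · exact absurd ⟨by linarith, by linarith, by linarith⟩ habc_ne
  · exact aux_Rcirc_arith δ Δ r (-c) (-a) (-b) _ _ _ _ _ (by linarith) (by linarith)
      (by linarith) (by linarith) B54.1 B54.2 B04.1 B04.2 B14.1 B14.2 B24.1 B24.2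
      B34.1 B34.2 (by linarith [E4])
  · exact aux_Rcirc_arith δ Δ r (-b) (-a) (-c) _ _ _ _ _ (by linarith) (by linarith)
      (by linarith) (by linarith) B32.1 B32.2 B02.1 B02.2 B12.1 B12.2 B42.1 B42.2
      B52.1 B52.2 (by linarith [E2])
  · exact aux_Rcirc_arith δ Δ r a b c _ _ _ _ _ (by linarith) (by linarith)
      (by linarith) (by linarith) B10.1 B10.2 B20.1 B20.2 B30.1 B30.2 B40.1 B40.2
      B50.1 B50.2 (by linarith [E0])
  · exact aux_Rcirc_arith δ Δ r (-a) (-b) (-c) _ _ _ _ _ (by linarith) (by linarith)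
      (by linarith) (by linarith) B10.1 B10.2 B20.1 B20.2 B30.1 B30.2 B40.1 B40.2
      B50.1 B50.2 (by linarith [E0])
  · exact aux_Rcirc_arith δ Δ r b a c _ _ _ _ _ (by linarith) (by linarith)
      (by linarith) (by linarith) B32.1 B32.2 B02.1 B02.2 B12.1 B12.2 B42.1 B42.2
      B52.1 B52.2 (by linarith [E2])
  · exact aux_Rcirc_arith δ Δ r c a b _ _ _ _ _ (by linarith) (by linarith)
      (by linarith) (by linarith) B54.1 B54.2 B04.1 B04.2 B14.1 B14.2 B24.1 B24.2
      B34.1 B34.2 (by linarith [E4])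
  · exact absurd habc_sum (by nlinarith)
end

section
/- Let ω = (ω_{ij}) be a skew-symmetric array on ℝ⁶ with ∑_k ω_{ik}ω_{jk} = δ_{ij}, and set (⋆ω)_{ijkl} = ω_{ij}ω_{kl} + ω_{jk}ω_{il} + ω_{lj}ω_{ik}. Let W = (W_{ijkl}) be an algebraic curvature tensor that is Ricci-traceless (∑_k W_{kijk} = 0 for all i, j) and lies in Ω²₈ in its last two (equivalently, by pair symmetry, its first two) indices: ∑_{k,l} W_{ijkl}ω_{kl} = 0 and (1/2)∑_{u,v} W_{ijuv}(⋆ω)_{uvkl} = −W_{ijkl} for all i, j, k, l. Let h = (h_{ij}) be symmetric with ∑_i h_{ii} = 0 and commuting with ω (∑_p h_{ip}ω_{pj} = ∑_p ω_{ip}h_{pj} for all i, j). Then ∑_{u,v} W_{abuv}(h ⋄ ω)_{uv} = ((2 W̊h) ⋄ ω)_{ab} for all a, b, where (W̊h)_{ij} = ∑_{k,l} W_{kilj}h_{kl}; that is, the curvature operator Ŵ maps h ⋄ ω to (2 W̊h) ⋄ ω. -/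
open scoped BigOperators

private lemma sum_swap23 (f : Fin 6 → Fin 6 → Fin 6 → ℝ) :
    ∑ u, ∑ v, ∑ p, f u v p = ∑ u, ∑ p, ∑ v, f u v p :=
  Finset.sum_congr rfl fun _ _ => Finset.sum_comm

private lemma sum_rot3 (f : Fin 6 → Fin 6 → Fin 6 → ℝ) :
    ∑ u, ∑ v, ∑ p, f u v p = ∑ p, ∑ v, ∑ u, f u v p := by
  calc ∑ u, ∑ v, ∑ p, f u v p
      = ∑ u, ∑ p, ∑ v, f u v p := sum_swap23 f
    _ = ∑ p, ∑ u, ∑ v, f u v p := Finset.sum_comm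
    _ = ∑ p, ∑ v, ∑ u, f u v p := Finset.sum_congr rfl fun _ _ => Finset.sum_comm

theorem What_on_diamond_eq_two_Wcirc_diamond
    (ω : Fin 6 → Fin 6 → ℝ)
    (W : Fin 6 → Fin 6 → Fin 6 → Fin 6 → ℝ)
    (h : Fin 6 → Fin 6 → ℝ)
    (hω_skew : ∀ i j, ω i j = - ω j i)
    (hω_unit : ∀ i j, ∑ k, ω i k * ω j k = if i = j then (1 : ℝ) else 0)
    (hW1 : ∀ i j p q, W i j p q = - W j i p q)
    (hW2 : ∀ i j p q, W i j p q = - W i j q p)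
    (hW3 : ∀ i j p q, W i j p q = W p q i j)
    (hBianchi : ∀ i j p q, W i j p q + W p i j q + W j p i q = 0)
    (hRic : ∀ i j, ∑ k, W k i j k = 0)
    (hWω : ∀ i j, ∑ k, ∑ l, W i j k l * ω k l = 0)
    (hW8 : ∀ i j k l, (1 / 2 : ℝ) * (∑ u, ∑ v, W i j u v *
        (ω u v * ω k l + ω v k * ω u l + ω l v * ω u k)) = - W i j k l)
    (hsymm : ∀ i j, h i j = h j i)
    (htr : ∑ i, h i i = 0)
    (hcomm : ∀ i j, ∑ p, h i p * ω p j = ∑ p, ω i p * h p j) :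
    ∀ a b, ∑ u, ∑ v, W a b u v * (∑ p, (h u p * ω p v + h v p * ω u p)) =
      ∑ p, ((2 * ∑ k, ∑ l, W k a l p * h k l) * ω p b
          + (2 * ∑ k, ∑ l, W k b l p * h k l) * ω a p) := by
  -- Step B : J-invariance of W in the last pair of indices
  have stepB : ∀ i j k l, ∑ u, ∑ v, W i j u v * (ω u k * ω v l) = W i j k l := by
    intro i j k l
    have hA := hW8 i j k l
    have hsplit : ∑ u, ∑ v, W i j u v *
        (ω u v * ω k l + ω v k * ω u l + ω l v * ω u k)
        = (∑ u, ∑ v, W i j u v * (ω u v * ω k l))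
          + (∑ u, ∑ v, W i j u v * (ω v k * ω u l))
          + (∑ u, ∑ v, W i j u v * (ω l v * ω u k)) := by
      simp only [mul_add, Finset.sum_add_distrib]
    have h0 : ∑ u, ∑ v, W i j u v * (ω u v * ω k l) = 0 := by
      have e : ∑ u, ∑ v, W i j u v * (ω u v * ω k l)
          = (∑ u, ∑ v, W i j u v * ω u v) * ω k l := by
        rw [Finset.sum_mul]
        refine Finset.sum_congr rfl fun u _ => ?_
        rw [Finset.sum_mul]
        exact Finset.sum_congr rfl fun v _ => by ring
      rw [e, hWω, zero_mul]
    have h1 : ∑ u, ∑ v, W i j u v * (ω v k * ω u l)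
        = - ∑ u, ∑ v, W i j u v * (ω u k * ω v l) := by
      rw [Finset.sum_comm, ← Finset.sum_neg_distrib]
      refine Finset.sum_congr rfl fun x _ => ?_
      rw [← Finset.sum_neg_distrib]
      refine Finset.sum_congr rfl fun y _ => ?_
      rw [hW2 i j y x]; ring
    have h2 : ∑ u, ∑ v, W i j u v * (ω l v * ω u k)
        = - ∑ u, ∑ v, W i j u v * (ω u k * ω v l) := by
      rw [← Finset.sum_neg_distrib]
      refine Finset.sum_congr rfl fun x _ => ?_
      rw [← Finset.sum_neg_distrib]
      refine Finset.sum_congr rfl fun y _ => ?_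
      rw [hω_skew l y]; ring
    rw [hsplit, h0, h1, h2] at hA
    linarith
  -- Step C : J-invariance in the first pair of indices
  have stepC : ∀ i j k l, ∑ u, ∑ v, W u v k l * (ω u i * ω v j) = W i j k l := by
    intro i j k l
    calc ∑ u, ∑ v, W u v k l * (ω u i * ω v j)
        = ∑ u, ∑ v, W k l u v * (ω u i * ω v j) := by
          refine Finset.sum_congr rfl fun u _ => Finset.sum_congr rfl fun v _ => ?_
          rw [hW3 u v k l]
      _ = W k l i j := stepB k l i j
      _ = W i j k l := (hW3 i j k l).symm
  -- Step D : moving one ω from the first pair to the second slot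
  have stepD : ∀ i m k l, ∑ u, ω u i * W u m k l = ∑ j, ω m j * W i j k l := by
    intro i m k l
    have key : ∀ u, (∑ v, (∑ j, ω v j * ω m j) * (ω u i * W u v k l))
        = ω u i * W u m k l := by
      intro u
      calc ∑ v, (∑ j, ω v j * ω m j) * (ω u i * W u v k l)
          = ∑ v, (if v = m then (1:ℝ) else 0) * (ω u i * W u v k l) := by
            refine Finset.sum_congr rfl fun v _ => ?_
            rw [hω_unit v m]
        _ = ω u i * W u m k l := by simp
    calc ∑ u, ω u i * W u m k l
        = ∑ u, ∑ v, (∑ j, ω v j * ω m j) * (ω u i * W u v k l) :=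
          Finset.sum_congr rfl fun u _ => (key u).symm
      _ = ∑ u, ∑ v, ∑ j, ω m j * (W u v k l * (ω u i * ω v j)) := by
          refine Finset.sum_congr rfl fun u _ => Finset.sum_congr rfl fun v _ => ?_
          rw [Finset.sum_mul]
          exact Finset.sum_congr rfl fun j _ => by ring
      _ = ∑ j, ∑ v, ∑ u, ω m j * (W u v k l * (ω u i * ω v j)) :=
          sum_rot3 _
      _ = ∑ j, ∑ u, ∑ v, ω m j * (W u v k l * (ω u i * ω v j)) :=
          Finset.sum_congr rfl fun _ _ => Finset.sum_comm
      _ = ∑ j, ω m j * W i j k l := by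
          refine Finset.sum_congr rfl fun j _ => ?_
          rw [← stepC i j k l, Finset.mul_sum]
          refine Finset.sum_congr rfl fun u _ => ?_
          rw [Finset.mul_sum]
  -- K and its symmetry
  set K : Fin 6 → Fin 6 → ℝ := fun x p => ∑ k, ∑ l, W k x l p * h k l with hK
  have hKsymm : ∀ x y, K x y = K y x := by
    intro x y
    calc K x y = ∑ k, ∑ l, W k x l y * h k l := rfl
      _ = ∑ k, ∑ l, W l y k x * h l k := by
          refine Finset.sum_congr rfl fun k _ => Finset.sum_congr rfl fun l _ => ?_
          rw [hW3 k x l y, hsymm k l]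
      _ = ∑ l, ∑ k, W l y k x * h l k := Finset.sum_comm
      _ = K y x := rfl
  have hPV : ∀ j x, ∑ p, ∑ v, W p j x v * h p v = - K j x := by
    intro j x
    calc ∑ p, ∑ v, W p j x v * h p v
        = ∑ p, ∑ v, -(W p j v x * h p v) := by
          refine Finset.sum_congr rfl fun p _ => Finset.sum_congr rfl fun v _ => ?_
          rw [hW2 p j x v]; ring
      _ = - K j x := by
          rw [hK]
          simp [Finset.sum_neg_distrib]
  intro a b
  -- S : the basic contraction
  set S : ℝ := ∑ u, ∑ v, ∑ p, W a b u v * (ω u p * h p v) with hS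
  -- LHS = 2 * S
  have hLHS : ∑ u, ∑ v, W a b u v * (∑ p, (h u p * ω p v + h v p * ω u p)) = 2 * S := by
    have e1 : ∀ u v : Fin 6, W a b u v * (∑ p, (h u p * ω p v + h v p * ω u p))
        = W a b u v * (∑ p, h u p * ω p v) + W a b u v * (∑ p, h v p * ω u p) := by
      intro u v; rw [Finset.sum_add_distrib, mul_add]
    have e2 : ∑ u, ∑ v, W a b u v * (∑ p, h v p * ω u p)
        = ∑ u, ∑ v, W a b u v * (∑ p, h u p * ω p v) := by
      rw [Finset.sum_comm]
      refine Finset.sum_congr rfl fun x _ => Finset.sum_congr rfl fun y _ => ?_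
      have hs : ∑ p, h x p * ω y p = - ∑ p, h x p * ω p y := by
        rw [← Finset.sum_neg_distrib]
        refine Finset.sum_congr rfl fun p _ => ?_
        rw [hω_skew y p]; ring
      rw [hs, hW2 a b y x]; ring
    have e3 : ∑ u, ∑ v, W a b u v * (∑ p, h u p * ω p v) = S := by
      rw [hS]
      refine Finset.sum_congr rfl fun u _ => Finset.sum_congr rfl fun v _ => ?_
      rw [hcomm u v, Finset.mul_sum]
    calc ∑ u, ∑ v, W a b u v * (∑ p, (h u p * ω p v + h v p * ω u p))
        = ∑ u, ∑ v, (W a b u v * (∑ p, h u p * ω p v)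
            + W a b u v * (∑ p, h v p * ω u p)) := by
          exact Finset.sum_congr rfl fun u _ => Finset.sum_congr rfl fun v _ => e1 u v
      _ = (∑ u, ∑ v, W a b u v * (∑ p, h u p * ω p v))
            + (∑ u, ∑ v, W a b u v * (∑ p, h v p * ω u p)) := by
          simp only [Finset.sum_add_distrib]
      _ = 2 * S := by rw [e2, e3]; ring
  -- Bianchi split : S = -S1 - S2
  set S1 : ℝ := ∑ u, ∑ v, ∑ p, W u a b v * (ω u p * h p v) with hS1
  set S2 : ℝ := ∑ u, ∑ v, ∑ p, W b u a v * (ω u p * h p v) with hS2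
  have hBsplit : S + S1 + S2 = 0 := by
    rw [hS, hS1, hS2]
    simp only [← Finset.sum_add_distrib]
    refine Finset.sum_eq_zero fun u _ => Finset.sum_eq_zero fun v _ =>
      Finset.sum_eq_zero fun p _ => ?_
    have hb := hBianchi a b u v
    linear_combination (ω u p * h p v) * hb
  -- Evaluate S1
  have hS1v : S1 = ∑ j, ω a j * (- K b j) := by
    calc S1 = ∑ p, ∑ v, ∑ u, W u a b v * (ω u p * h p v) := by
          rw [hS1]; exact sum_rot3 _
      _ = ∑ p, ∑ v, h p v * (∑ u, ω u p * W u a b v) := by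
          refine Finset.sum_congr rfl fun p _ => Finset.sum_congr rfl fun v _ => ?_
          rw [Finset.mul_sum]
          exact Finset.sum_congr rfl fun u _ => by ring
      _ = ∑ p, ∑ v, h p v * (∑ j, ω a j * W p j b v) := by
          refine Finset.sum_congr rfl fun p _ => Finset.sum_congr rfl fun v _ => ?_
          rw [stepD p a b v]
      _ = ∑ p, ∑ v, ∑ j, ω a j * (W p j b v * h p v) := by
          refine Finset.sum_congr rfl fun p _ => Finset.sum_congr rfl fun v _ => ?_
          rw [Finset.mul_sum]
          exact Finset.sum_congr rfl fun j _ => by ring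
      _ = ∑ j, ∑ v, ∑ p, ω a j * (W p j b v * h p v) := sum_rot3 _
      _ = ∑ j, ∑ p, ∑ v, ω a j * (W p j b v * h p v) :=
          Finset.sum_congr rfl fun _ _ => Finset.sum_comm
      _ = ∑ j, ω a j * (∑ p, ∑ v, W p j b v * h p v) := by
          refine Finset.sum_congr rfl fun j _ => ?_
          rw [Finset.mul_sum]
          exact Finset.sum_congr rfl fun p _ => by rw [Finset.mul_sum]
      _ = ∑ j, ω a j * (- K j b) := by
          refine Finset.sum_congr rfl fun j _ => ?_
          rw [hPV j b]
      _ = ∑ j, ω a j * (- K b j) := by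
          refine Finset.sum_congr rfl fun j _ => ?_
          rw [hKsymm j b]
  -- Evaluate S2
  have hS2v : S2 = ∑ j, ω b j * K a j := by
    calc S2 = ∑ p, ∑ v, ∑ u, W b u a v * (ω u p * h p v) := by
          rw [hS2]; exact sum_rot3 _
      _ = ∑ p, ∑ v, h p v * (- ∑ u, ω u p * W u b a v) := by
          refine Finset.sum_congr rfl fun p _ => Finset.sum_congr rfl fun v _ => ?_
          rw [← Finset.sum_neg_distrib, Finset.mul_sum]
          refine Finset.sum_congr rfl fun u _ => ?_
          rw [hW1 b u a v]; ring
      _ = ∑ p, ∑ v, h p v * (- ∑ j, ω b j * W p j a v) := by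
          refine Finset.sum_congr rfl fun p _ => Finset.sum_congr rfl fun v _ => ?_
          rw [stepD p b a v]
      _ = ∑ p, ∑ v, ∑ j, -(ω b j * (W p j a v * h p v)) := by
          refine Finset.sum_congr rfl fun p _ => Finset.sum_congr rfl fun v _ => ?_
          rw [mul_neg, Finset.mul_sum, ← Finset.sum_neg_distrib]
          exact Finset.sum_congr rfl fun j _ => by ring
      _ = ∑ j, ∑ v, ∑ p, -(ω b j * (W p j a v * h p v)) := sum_rot3 _
      _ = ∑ j, ∑ p, ∑ v, -(ω b j * (W p j a v * h p v)) :=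
          Finset.sum_congr rfl fun _ _ => Finset.sum_comm
      _ = ∑ j, -(ω b j * (∑ p, ∑ v, W p j a v * h p v)) := by
          refine Finset.sum_congr rfl fun j _ => ?_
          rw [Finset.mul_sum, ← Finset.sum_neg_distrib]
          refine Finset.sum_congr rfl fun p _ => ?_
          rw [Finset.mul_sum, ← Finset.sum_neg_distrib]
      _ = ∑ j, -(ω b j * (- K j a)) := by
          refine Finset.sum_congr rfl fun j _ => ?_
          rw [hPV j a]
      _ = ∑ j, ω b j * K a j := by
          refine Finset.sum_congr rfl fun j _ => ?_
          rw [hKsymm j a]; ring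
  -- Put everything together
  rw [hLHS]
  have hfin : ∑ p, ((2 * ∑ k, ∑ l, W k a l p * h k l) * ω p b
      + (2 * ∑ k, ∑ l, W k b l p * h k l) * ω a p)
      = 2 * (-S1 - S2) := by
    show ∑ p, ((2 * K a p) * ω p b + (2 * K b p) * ω a p) = 2 * (-S1 - S2)
    rw [hS1v, hS2v]
    have e : (- ∑ j, ω a j * (- K b j)) - (∑ j, ω b j * K a j)
        = ∑ j, (ω a j * K b j - ω b j * K a j) := by
      rw [← Finset.sum_neg_distrib, ← Finset.sum_sub_distrib]
      exact Finset.sum_congr rfl fun j _ => by ring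
    rw [e, Finset.mul_sum]
    refine Finset.sum_congr rfl fun p _ => ?_
    rw [hω_skew p b]; ring
  rw [hfin]
  have : S = -S1 - S2 := by linarith
  rw [this]
end
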